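/- arXiv:0812.1032 — 5 statements merged into one kernel-verified Lean document; each statement's English description precedes it below -/
import Mathlib

section
/- Let C ⊂ ℝ^n be a bounded open convex set. If the Hilbert geometry (C, d_C) admits a quasi-isometric embedding into some finite-dimensional normed vector space, then C is the interior of a convex polytope (the convex hull of finitely many points). -/
open Classical
open scoped RealInnerProductSpace

/-- The Hilbert distance of a convex domain `C`: for `p ≠ q`, the line through `p` and `q`
meets `∂C` at `a = p + t⁻ • (q - p)` and `b = p + t⁺ • (q - p)` where `t⁻ = sInf` and
`t⁺ = sSup` of the chord parameter set, so that the cross-ratio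
`[a,p,q,b] = (‖q-a‖/‖p-a‖)·(‖p-b‖/‖q-b‖)` equals `((1-t⁻)/(-t⁻))·(t⁺/(t⁺-1))`,
and `d_C(p,q) = (1/2)·log [a,p,q,b]`. -/
noncomputable def hilbertDist {E : Type*} [NormedAddCommGroup E] [NormedSpace ℝ E]
    (C : Set E) (p q : E) : ℝ :=
  if p = q then 0
  else ((1 : ℝ) / 2) * Real.log
    (((1 - sInf {t : ℝ | p + t • (q - p) ∈ C}) / (-sInf {t : ℝ | p + t • (q - p) ∈ C})) *
      (sSup {t : ℝ | p + t • (q - p) ∈ C} / (sSup {t : ℝ | p + t • (q - p) ∈ C} - 1)))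

/-- `ν` is a norm on the real vector space `V`. -/
def IsNormOn (V : Type*) [AddCommGroup V] [Module ℝ V] (ν : V → ℝ) : Prop :=
  (∀ x : V, 0 ≤ ν x) ∧ (∀ x : V, ν x = 0 → x = 0) ∧
    (∀ (c : ℝ) (x : V), ν (c • x) = |c| * ν x) ∧ ∀ x y : V, ν (x + y) ≤ ν x + ν y

section nu
variable {m : ℕ} {ν : (Fin m → ℝ) → ℝ} (hν : IsNormOn (Fin m → ℝ) ν)
include hν

lemma nu_zero : ν 0 = 0 := by
  have := hν.2.2.1 0 0
  simpa using this

lemma nu_neg (v : Fin m → ℝ) : ν (-v) = ν v := by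
  have := hν.2.2.1 (-1) v
  simpa using this

lemma nu_le_mul_norm : ∃ M : ℝ, 0 < M ∧ ∀ v : Fin m → ℝ, ν v ≤ M * ‖v‖ := by
  have hnn : (0:ℝ) ≤ ∑ i : Fin m, ν ((Pi.single i 1 : Fin m → ℝ)) :=
    Finset.sum_nonneg fun i _ => hν.1 _
  refine ⟨(∑ i : Fin m, ν ((Pi.single i 1 : Fin m → ℝ))) + 1, by linarith, fun v => ?_⟩
  have hv : v = ∑ i : Fin m, v i • ((Pi.single i 1 : Fin m → ℝ)) := by
    have := pi_eq_sum_univ v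
    convert this using 2 with i
    ext j
    simp [Pi.single_apply, eq_comm]
  calc ν v = ν (∑ i : Fin m, v i • (Pi.single i 1 : Fin m → ℝ)) := by rw [← hv]
    _ ≤ ∑ i : Fin m, ν (v i • (Pi.single i 1 : Fin m → ℝ)) := by
        classical
        refine Finset.le_sum_of_subadditive ν (nu_zero hν).le hν.2.2.2 _ _
    _ = ∑ i : Fin m, |v i| * ν ((Pi.single i 1 : Fin m → ℝ)) := by
        simp [hν.2.2.1]
    _ ≤ ∑ i : Fin m, ‖v‖ * ν ((Pi.single i 1 : Fin m → ℝ)) := by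
        refine Finset.sum_le_sum fun i _ => ?_
        have h1 : |v i| ≤ ‖v‖ := by
          simpa [Real.norm_eq_abs] using norm_le_pi_norm v i
        exact mul_le_mul_of_nonneg_right h1 (hν.1 _)
    _ = (∑ i : Fin m, ν ((Pi.single i 1 : Fin m → ℝ))) * ‖v‖ := by
        rw [Finset.sum_mul]
        exact Finset.sum_congr rfl fun i _ => mul_comm _ _
    _ ≤ ((∑ i : Fin m, ν ((Pi.single i 1 : Fin m → ℝ))) + 1) * ‖v‖ := by
        have : (0:ℝ) ≤ ‖v‖ := norm_nonneg _
        nlinarith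

lemma nu_lipschitz : Continuous ν := by
  obtain ⟨M, hM, hle⟩ := nu_le_mul_norm hν
  rw [Metric.continuous_iff]
  intro x ε hε
  refine ⟨ε / M, by positivity, fun y hy => ?_⟩
  have h1 : ν y - ν x ≤ ν (y - x) := by
    have := hν.2.2.2 (y - x) x
    simpa using this
  have h2 : ν x - ν y ≤ ν (y - x) := by
    have := hν.2.2.2 (x - y) y
    have h3 : ν (x - y) = ν (y - x) := by
      rw [show x - y = -(y - x) by abel, nu_neg hν]
    simpa [h3] using this
  have h4 : ν (y - x) ≤ M * ‖y - x‖ := hle _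
  have h5 : ‖y - x‖ < ε / M := by rwa [← dist_eq_norm]
  have : ν (y - x) < ε := by
    calc ν (y - x) ≤ M * ‖y - x‖ := h4
      _ < M * (ε / M) := by exact mul_lt_mul_of_pos_left h5 hM
      _ = ε := by field_simp
  rw [Real.dist_eq, abs_sub_lt_iff]
  constructor
  · linarith
  · linarith

lemma nu_ge_mul_norm : ∃ c : ℝ, 0 < c ∧ ∀ v : Fin m → ℝ, c * ‖v‖ ≤ ν v := by
  rcases Nat.eq_zero_or_pos m with hm | hm
  · refine ⟨1, one_pos, fun v => ?_⟩
    subst hm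
    have hv : v = 0 := Subsingleton.elim v 0
    rw [hv, nu_zero hν]
    simp
  · have hne : (Metric.sphere (0 : Fin m → ℝ) 1).Nonempty := by
      have : Nontrivial (Fin m → ℝ) := by
        have : Nonempty (Fin m) := ⟨⟨0, hm⟩⟩
        infer_instance
      exact NormedSpace.sphere_nonempty.2 zero_le_one
    obtain ⟨x0, hx0mem, hmin⟩ := (isCompact_sphere (0 : Fin m → ℝ) 1).exists_isMinOn hne
      (nu_lipschitz hν).continuousOn
    have hx0 : ‖x0‖ = 1 := by simpa using hx0mem
    have hc : 0 < ν x0 := by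
      rcases lt_or_eq_of_le (hν.1 x0) with h | h
      · exact h
      · exfalso
        have := hν.2.1 x0 h.symm
        rw [this] at hx0; simp at hx0
    refine ⟨ν x0, hc, fun v => ?_⟩
    rcases eq_or_ne v 0 with rfl | hv
    · simp [nu_zero hν]
    · have hvn : (0:ℝ) < ‖v‖ := norm_pos_iff.2 hv
      have hmem : ‖v‖⁻¹ • v ∈ Metric.sphere (0 : Fin m → ℝ) 1 := by
        simp [norm_smul, abs_of_pos (inv_pos.2 hvn), inv_mul_cancel₀ hvn.ne']
      have := hmin hmem
      have h2 : ν x0 ≤ ν (‖v‖⁻¹ • v) := this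
      rw [hν.2.2.1] at h2
      rw [abs_of_pos (inv_pos.2 hvn)] at h2
      calc ν x0 * ‖v‖ ≤ (‖v‖⁻¹ * ν v) * ‖v‖ := by nlinarith
        _ = ν v := by field_simp

lemma nu_cover (ε : ℝ) (hε : 0 < ε) :
    ∃ t : Finset (Fin m → ℝ), ∀ w : Fin m → ℝ, ν w ≤ 1 → ∃ y ∈ t, ν (w - y) < ε := by
  obtain ⟨c, hc, hcle⟩ := nu_ge_mul_norm hν
  obtain ⟨M, hM, hMle⟩ := nu_le_mul_norm hν
  set Bν : Set (Fin m → ℝ) := {w | ν w ≤ 1} with hBν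
  have hclosed : IsClosed Bν := isClosed_le (nu_lipschitz hν) continuous_const
  have hbdd : Bν ⊆ Metric.closedBall 0 (1/c) := by
    intro w hw
    simp only [Metric.mem_closedBall, dist_zero_right]
    have h1 : c * ‖w‖ ≤ ν w := hcle w
    have h2 : ν w ≤ 1 := hw
    rw [div_eq_inv_mul, mul_one]
    rw [← mul_le_mul_iff_right₀ hc, mul_inv_cancel₀ hc.ne']
    linarith
  have hcpt : IsCompact Bν := (isCompact_closedBall (0 : Fin m → ℝ) (1/c)).of_isClosed_subset
    hclosed hbdd
  have htb := hcpt.totallyBounded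
  rw [Metric.totallyBounded_iff] at htb
  obtain ⟨t, htfin, hcov⟩ := htb (ε / (M + 1)) (by positivity)
  refine ⟨htfin.toFinset, fun w hw => ?_⟩
  have hwmem : w ∈ Bν := hw
  obtain ⟨y, hy, hwy⟩ := Set.mem_iUnion₂.1 (hcov hwmem)
  refine ⟨y, htfin.mem_toFinset.2 hy, ?_⟩
  have h1 : ν (w - y) ≤ M * ‖w - y‖ := hMle _
  have h2 : ‖w - y‖ < ε / (M + 1) := by
    have := Metric.mem_ball.1 hwy
    rwa [dist_eq_norm] at this
  calc ν (w - y) ≤ M * ‖w - y‖ := h1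
    _ < M * (ε / (M + 1)) := by exact mul_lt_mul_of_pos_left h2 hM
    _ < ε := by
        rw [mul_div_assoc']
        rw [div_lt_iff₀ (by linarith)]
        nlinarith

end nu


section hd
variable {n : ℕ} {C : Set (EuclideanSpace ℝ (Fin n))}

lemma chord_bddAbove (hbdd : Bornology.IsBounded C) {p q : EuclideanSpace ℝ (Fin n)}
    (hp : p ∈ C) (hpq : p ≠ q) : BddAbove {t : ℝ | p + t • (q - p) ∈ C} := by
  obtain ⟨R, hR⟩ := (Metric.isBounded_iff_subset_closedBall p).1 hbdd
  have hqp : (0:ℝ) < ‖q - p‖ := by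
    rw [norm_pos_iff, sub_ne_zero]; exact fun h => hpq h.symm
  refine ⟨R / ‖q - p‖, fun t ht => ?_⟩
  have h1 : p + t • (q - p) ∈ Metric.closedBall p R := hR ht
  rw [Metric.mem_closedBall, dist_eq_norm] at h1
  have h2 : ‖p + t • (q - p) - p‖ = |t| * ‖q - p‖ := by
    rw [add_sub_cancel_left, norm_smul, Real.norm_eq_abs]
  rw [h2] at h1
  have h3 : t ≤ |t| := le_abs_self t
  rw [le_div_iff₀ hqp]
  nlinarith [abs_nonneg t]

lemma chord_neg_mem (hopen : IsOpen C) {p q : EuclideanSpace ℝ (Fin n)}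
    (hp : p ∈ C) (hpq : p ≠ q) :
    ∃ ε : ℝ, 0 < ε ∧ (-ε) ∈ {t : ℝ | p + t • (q - p) ∈ C} ∧
      (∀ s : ℝ, 0 ≤ s → s ≤ ε → (s ∈ {t : ℝ | p + t • (q - p) ∈ C})) := by
  obtain ⟨δ, hδ, hball⟩ := Metric.isOpen_iff.1 hopen p hp
  have hqp : (0:ℝ) < ‖q - p‖ := by
    rw [norm_pos_iff, sub_ne_zero]; exact fun h => hpq h.symm
  refine ⟨δ / (2 * ‖q - p‖), by positivity, ?_, ?_⟩
  · show p + (-(δ / (2 * ‖q - p‖))) • (q - p) ∈ C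
    apply hball
    rw [Metric.mem_ball, dist_eq_norm, add_sub_cancel_left, norm_smul, Real.norm_eq_abs,
      abs_neg, abs_of_pos (by positivity)]
    have heq : δ / (2 * ‖q - p‖) * ‖q - p‖ = δ / 2 := by field_simp
    rw [heq]; linarith
  · intro s hs0 hsε
    show p + s • (q - p) ∈ C
    apply hball
    rw [Metric.mem_ball, dist_eq_norm, add_sub_cancel_left, norm_smul, Real.norm_eq_abs,
      abs_of_nonneg hs0]
    have : s * ‖q - p‖ ≤ (δ / (2 * ‖q - p‖)) * ‖q - p‖ := by nlinarith
    calc s * ‖q - p‖ ≤ (δ / (2 * ‖q - p‖)) * ‖q - p‖ := this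
      _ = δ / 2 := by field_simp
      _ < δ := by linarith

lemma hd_ge (hopen : IsOpen C) (hbdd : Bornology.IsBounded C)
    {p q : EuclideanSpace ℝ (Fin n)} (hp : p ∈ C) (hq : q ∈ C) (hpq : p ≠ q)
    (u : EuclideanSpace ℝ (Fin n)) (cc : ℝ)
    (hpos : ∀ x ∈ C, 0 < cc - ⟪u, x⟫) (hlt : cc - ⟪u, p⟫ < cc - ⟪u, q⟫) :
    (1:ℝ)/2 * Real.log ((cc - ⟪u, q⟫) / (cc - ⟪u, p⟫)) ≤ hilbertDist C p q := by
  set S := {t : ℝ | p + t • (q - p) ∈ C} with hS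
  set lp := cc - ⟪u, p⟫ with hlp
  set lq := cc - ⟪u, q⟫ with hlq
  have hlp0 : 0 < lp := hpos p hp
  have hlq0 : 0 < lq := hpos q hq
  have haff : ∀ t : ℝ, cc - ⟪u, p + t • (q - p)⟫ = lp + t * (lq - lp) := by
    intro t
    have h1 : ⟪u, p + t • (q - p)⟫ = ⟪u, p⟫ + t * (⟪u, q⟫ - ⟪u, p⟫) := by
      rw [inner_add_right, inner_smul_right, inner_sub_right]
    rw [h1, hlp, hlq]; ring
  have hd0 : 0 < lq - lp := by linarith
  set t₀ : ℝ := -lp / (lq - lp) with ht₀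
  have hSgt : ∀ t ∈ S, t₀ < t := by
    intro t ht
    have h1 : 0 < cc - ⟪u, p + t • (q - p)⟫ := hpos _ ht
    rw [haff t] at h1
    rw [ht₀, div_lt_iff₀ hd0]
    nlinarith
  have hbddb : BddBelow S := ⟨t₀, fun t ht => (hSgt t ht).le⟩
  have hS0 : (0:ℝ) ∈ S := by show p + (0:ℝ) • (q - p) ∈ C; simp [hp]
  have hSne : S.Nonempty := ⟨0, hS0⟩
  obtain ⟨ε, hε, hεneg, _⟩ := chord_neg_mem hopen hp hpq
  have hqp' : q ≠ p := fun h => hpq h.symm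
  obtain ⟨ε', hε', hεneg', _⟩ := chord_neg_mem hopen hq hqp'
  -- 1 + ε' ∈ S : point q + (-ε') • (p - q) = p + (1+ε') • (q - p)
  have h1ε : (1 + ε') ∈ S := by
    have := hεneg'
    show p + (1 + ε') • (q - p) ∈ C
    have heq : p + (1 + ε') • (q - p) = q + (-ε') • (p - q) := by
      module
    rw [heq]; exact this
  have hbddA : BddAbove S := chord_bddAbove hbdd hp hpq
  set I := sInf S with hI
  set T := sSup S with hT
  have hIle : I ≤ -ε := csInf_le hbddb hεneg
  have hI0 : I < 0 := lt_of_le_of_lt hIle (by linarith)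
  have hIt0 : t₀ ≤ I := le_csInf hSne fun t ht => (hSgt t ht).le
  have hTge : 1 + ε' ≤ T := le_csSup hbddA h1ε
  have hT1 : 1 < T := by linarith
  -- factor bounds
  have hf1 : lq / lp ≤ (1 - I) / (-I) := by
    rw [div_le_div_iff₀ hlp0 (by linarith : (0:ℝ) < -I)]
    have h2 : -lp ≤ I * (lq - lp) := by
      rw [ht₀] at hIt0
      exact (div_le_iff₀ hd0).1 hIt0
    nlinarith
  have hf2 : (1:ℝ) ≤ T / (T - 1) := by
    rw [le_div_iff₀ (by linarith : (0:ℝ) < T - 1)]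
    linarith
  have hprod : lq / lp ≤ ((1 - I) / (-I)) * (T / (T - 1)) := by
    have h1 : (0:ℝ) ≤ (1 - I) / (-I) := div_nonneg (by linarith) (by linarith)
    nlinarith [div_nonneg hlq0.le hlp0.le]
  have hlog : Real.log (lq / lp) ≤ Real.log (((1 - I) / (-I)) * (T / (T - 1))) :=
    Real.log_le_log (by positivity) hprod
  rw [hilbertDist, if_neg hpq]
  rw [← hI, ← hT]
  linarith

end hd

section hd2
variable {n : ℕ} {C : Set (EuclideanSpace ℝ (Fin n))}

lemma hd_le (hconv : Convex ℝ C) (hopen : IsOpen C) {x0 : EuclideanSpace ℝ (Fin n)}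
    {δ0 D₁ : ℝ} (hδ0 : 0 < δ0) (hball : Metric.ball x0 δ0 ⊆ C)
    (hD : C ⊆ Metric.closedBall x0 D₁) {e : EuclideanSpace ℝ (Fin n)}
    (he : e ∈ closure C) (hex : e ≠ x0) {σ : ℝ} (hσ0 : 0 < σ) (hσ1 : σ < 1) :
    hilbertDist C (σ • x0 + (1 - σ) • e) x0 ≤
      1/2 * Real.log (1/σ) + 1/2 * Real.log (3 + 6 * D₁ / δ0) := by
  have hx0 : x0 ∈ C := hball (Metric.mem_ball_self hδ0)
  have hx0i : x0 ∈ interior C := by rwa [hopen.interior_eq]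
  set p := σ • x0 + (1 - σ) • e with hp
  have hpC : p ∈ C := by
    have := hconv.combo_interior_closure_mem_interior (a := σ) (b := 1 - σ) hx0i he hσ0 (by linarith) (by ring)
    rwa [hopen.interior_eq] at this
  have hex0 : e - x0 ≠ 0 := sub_ne_zero.2 hex
  have hpx0 : p ≠ x0 := by
    intro h
    apply hex0
    have : p - x0 = (1 - σ) • (e - x0) := by rw [hp]; module
    rw [h, sub_self] at this
    have h2 := this.symm
    rcases smul_eq_zero.1 h2 with h3 | h3
    · exfalso; linarith
    · exact h3
  have hxp : x0 - p = (1 - σ) • (x0 - e) := by rw [hp]; module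
  have hxpn : (0:ℝ) < ‖x0 - p‖ := by
    rw [norm_pos_iff, sub_ne_zero]
    exact fun h => hpx0 h.symm
  have hD0 : 0 ≤ D₁ := by
    have := hD hx0
    simpa using this
  have hpD : ‖x0 - p‖ ≤ D₁ := by
    have := hD hpC
    rw [Metric.mem_closedBall, dist_eq_norm] at this
    rwa [show x0 - p = -(p - x0) by abel, norm_neg]
  set S := {t : ℝ | p + t • (x0 - p) ∈ C} with hS
  -- bounded two-sided
  have hSb : ∀ t ∈ S, |t - 1| * ‖x0 - p‖ ≤ D₁ := by
    intro t ht
    have h1 := hD ht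
    rw [Metric.mem_closedBall, dist_eq_norm] at h1
    have h2 : p + t • (x0 - p) - x0 = (t - 1) • (x0 - p) := by module
    rw [h2, norm_smul, Real.norm_eq_abs] at h1
    exact h1
  have hbddb : BddBelow S := by
    refine ⟨1 - D₁ / ‖x0 - p‖, fun t ht => ?_⟩
    have h1 := hSb t ht
    have h2 : -(t - 1) ≤ |t - 1| := neg_le_abs _
    have h3 : -(t - 1) ≤ D₁ / ‖x0 - p‖ := by
      rw [le_div_iff₀ hxpn]; nlinarith
    linarith
  have hbddA : BddAbove S := by
    refine ⟨1 + D₁ / ‖x0 - p‖, fun t ht => ?_⟩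
    have h1 := hSb t ht
    have h2 : (t - 1) ≤ |t - 1| := le_abs_self _
    have h3 : t - 1 ≤ D₁ / ‖x0 - p‖ := by
      rw [le_div_iff₀ hxpn]; nlinarith
    linarith
  -- element t₁ = -σ/(2(1-σ))
  have ht₁ : -(σ / (2 * (1 - σ))) ∈ S := by
    show p + (-(σ / (2 * (1 - σ)))) • (x0 - p) ∈ C
    have heq : p + (-(σ / (2 * (1 - σ)))) • (x0 - p) = (σ/2) • x0 + (1 - σ/2) • e := by
      rw [hxp, hp]
      have h1σ : (1 - σ) ≠ 0 := by linarith
      rw [smul_smul]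
      have : -(σ / (2 * (1 - σ))) * (1 - σ) = -(σ/2) := by field_simp
      rw [this]
      module
    rw [heq]
    have := hconv.combo_interior_closure_mem_interior (a := σ/2) (b := 1 - σ/2) hx0i he
      (by linarith : (0:ℝ) < σ/2) (by linarith) (by ring)
    rwa [hopen.interior_eq] at this
  -- element t₂ = 1 + δ0/(2‖x0-p‖)
  have ht₂ : 1 + δ0 / (2 * ‖x0 - p‖) ∈ S := by
    show p + (1 + δ0 / (2 * ‖x0 - p‖)) • (x0 - p) ∈ C
    apply hball
    rw [Metric.mem_ball, dist_eq_norm]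
    have heq : p + (1 + δ0 / (2 * ‖x0 - p‖)) • (x0 - p) - x0 = (δ0 / (2 * ‖x0 - p‖)) • (x0 - p) := by
      module
    rw [heq, norm_smul, Real.norm_eq_abs, abs_of_pos (by positivity)]
    rw [div_mul_eq_mul_div]
    rw [div_lt_iff₀ (by positivity : (0:ℝ) < 2 * ‖x0 - p‖)]
    nlinarith
  set I := sInf S with hI
  set T := sSup S with hT
  have hIle : I ≤ -(σ / (2 * (1 - σ))) := csInf_le hbddb ht₁
  have hIσ : σ / 2 ≤ -I := by
    have h1 : σ / (2 * (1 - σ)) ≤ -I := by linarith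
    have h2 : σ / 2 ≤ σ / (2 * (1 - σ)) := by
      apply div_le_div_of_nonneg_left hσ0.le (by linarith)
      nlinarith
    linarith
  have hI0 : I < 0 := by nlinarith
  have hTge : 1 + δ0 / (2 * ‖x0 - p‖) ≤ T := le_csSup hbddA ht₂
  have hT1 : (0:ℝ) < T - 1 := by
    have : (0:ℝ) < δ0 / (2 * ‖x0 - p‖) := by positivity
    linarith
  -- factor bounds
  have hf1 : (1 - I) / (-I) ≤ 3 / σ := by
    rw [div_le_div_iff₀ (by linarith) hσ0]
    nlinarith
  have hf2 : T / (T - 1) ≤ 1 + 2 * D₁ / δ0 := by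
    have hstep : T / (T - 1) ≤ 1 + 2 * ‖x0 - p‖ / δ0 := by
      rw [div_le_iff₀ hT1]
      have h1 : δ0 / (2 * ‖x0 - p‖) ≤ T - 1 := by linarith
      have h1' : δ0 ≤ (T - 1) * (2 * ‖x0 - p‖) := by
        rw [div_le_iff₀ (by positivity)] at h1; linarith
      rw [show (1 + 2 * ‖x0 - p‖ / δ0) * (T - 1)
            = (T - 1) + (2 * ‖x0 - p‖ * (T - 1)) / δ0 by field_simp]
      have h2 : (1:ℝ) ≤ 2 * ‖x0 - p‖ * (T - 1) / δ0 := by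
        rw [le_div_iff₀ hδ0]; nlinarith
      linarith
    have hmono : 1 + 2 * ‖x0 - p‖ / δ0 ≤ 1 + 2 * D₁ / δ0 := by gcongr
    linarith
  have hf1pos : 0 < (1 - I) / (-I) := div_pos (by linarith) (by linarith)
  have hf2pos : 0 < T / (T - 1) := div_pos (by linarith) hT1
  have hprodpos : 0 < ((1 - I) / (-I)) * (T / (T - 1)) := mul_pos hf1pos hf2pos
  have hRpos : (0:ℝ) < 3 + 6 * D₁ / δ0 := by
    have h1 : (0:ℝ) ≤ 6 * D₁ / δ0 := div_nonneg (by linarith) hδ0.le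
    linarith
  have hprodle : ((1 - I) / (-I)) * (T / (T - 1)) ≤ (1/σ) * (3 + 6 * D₁ / δ0) := by
    have heq : (1/σ) * (3 + 6 * D₁ / δ0) = (3/σ) * (1 + 2 * D₁ / δ0) := by
      field_simp; ring
    rw [heq]
    exact mul_le_mul hf1 hf2 hf2pos.le (by positivity)
  have hlog : Real.log (((1 - I) / (-I)) * (T / (T - 1)))
      ≤ Real.log ((1/σ) * (3 + 6 * D₁ / δ0)) := Real.log_le_log hprodpos hprodle
  have hlogmul : Real.log ((1/σ) * (3 + 6 * D₁ / δ0))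
      = Real.log (1/σ) + Real.log (3 + 6 * D₁ / δ0) :=
    Real.log_mul (by positivity) hRpos.ne'
  rw [hilbertDist, if_neg hpx0]
  rw [← hS, ← hI, ← hT]
  linarith

end hd2

section str
variable {n : ℕ}

/-- exposed-type points -/
def Epts (K : Set (EuclideanSpace ℝ (Fin n))) : Set (EuclideanSpace ℝ (Fin n)) :=
  {e | e ∈ K ∧ ∃ u : EuclideanSpace ℝ (Fin n), ∀ x ∈ K, x ≠ e → ⟪u, x - e⟫ < 0}

lemma farthest_exposed {K : Set (EuclideanSpace ℝ (Fin n))} {y e : EuclideanSpace ℝ (Fin n)}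
    (he : e ∈ K) (hfar : ∀ x ∈ K, ‖x - y‖ ≤ ‖e - y‖) : e ∈ Epts K := by
  refine ⟨he, e - y, fun x hx hxe => ?_⟩
  have h1 : ‖x - y‖ ^ 2 ≤ ‖e - y‖ ^ 2 := by
    have := hfar x hx
    nlinarith [norm_nonneg (x - y), norm_nonneg (e - y)]
  have h2 : ‖x - y‖ ^ 2 = ‖x - e‖ ^ 2 + 2 * ⟪x - e, e - y⟫ + ‖e - y‖ ^ 2 := by
    have := norm_add_sq_real (x - e) (e - y)
    rw [show x - e + (e - y) = x - y by abel] at this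
    linarith
  have h3 : (0:ℝ) < ‖x - e‖ ^ 2 := by
    have hne0 : 0 < ‖x - e‖ := norm_pos_iff.2 (sub_ne_zero.2 hxe)
    positivity
  have h4 : ⟪e - y, x - e⟫ = ⟪x - e, e - y⟫ := real_inner_comm _ _
  nlinarith

lemma exists_farthest {K : Set (EuclideanSpace ℝ (Fin n))} (hK : IsCompact K)
    (hne : K.Nonempty) (y : EuclideanSpace ℝ (Fin n)) :
    ∃ e ∈ K, ∀ x ∈ K, ‖x - y‖ ≤ ‖e - y‖ := by
  have hcont : Continuous fun x : EuclideanSpace ℝ (Fin n) => ‖x - y‖ :=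
    (continuous_id.sub continuous_const).norm
  obtain ⟨e, heK, hmax⟩ := hK.exists_isMaxOn hne hcont.continuousOn
  exact ⟨e, heK, fun x hx => hmax hx⟩

lemma hull_epts {K : Set (EuclideanSpace ℝ (Fin n))} (hK : IsCompact K)
    (hconvK : Convex ℝ K) (hne : K.Nonempty) (hfin : (Epts K).Finite) :
    K = convexHull ℝ (Epts K) := by
  set P := convexHull ℝ (Epts K) with hP
  have hEK : Epts K ⊆ K := fun e he => he.1
  have hPK : P ⊆ K := convexHull_min hEK hconvK
  refine Set.Subset.antisymm (fun z hz => ?_) hPK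
  by_contra hzP
  have hPclosed : IsClosed P := hfin.isClosed_convexHull ℝ
  have hPconv : Convex ℝ P := convex_convexHull _ _
  obtain ⟨f, u₀, hfP, hfz⟩ := geometric_hahn_banach_closed_point hPconv hPclosed hzP
  set u := (InnerProductSpace.toDual ℝ (EuclideanSpace ℝ (Fin n))).symm f with hu
  have huf : ∀ x, ⟪u, x⟫ = f x := fun x => InnerProductSpace.toDual_symm_apply
  obtain ⟨r, hr⟩ := hK.isBounded.subset_closedBall z
  have hr0 : 0 ≤ r := by
    have := hr hz
    simpa using this
  set β := f z - u₀ with hβ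
  have hβ0 : 0 < β := by rw [hβ]; linarith
  set R := r ^ 2 / (2 * β) + 1 with hR
  have hR0 : 0 < R := by positivity
  set y := z - R • u with hy
  obtain ⟨e, heK, hfar⟩ := exists_farthest hK hne y
  have heE : e ∈ Epts K := farthest_exposed heK hfar
  have heP : e ∈ P := subset_convexHull ℝ _ heE
  have hfe : f e < u₀ := hfP e heP
  have hez : ‖e - z‖ ≤ r := by
    have := hr heK
    rw [Metric.mem_closedBall, dist_eq_norm] at this
    exact this
  have hzy : ‖z - y‖ ≤ ‖e - y‖ := hfar z hz
  have hzy2 : ‖z - y‖ ^ 2 = R ^ 2 * ‖u‖ ^ 2 := by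
    rw [hy, show z - (z - R • u) = R • u by abel, norm_smul, Real.norm_eq_abs,
      abs_of_pos hR0, mul_pow]
  have hey2 : ‖e - y‖ ^ 2 = ‖e - z‖ ^ 2 + 2 * R * ⟪e - z, u⟫ + R ^ 2 * ‖u‖ ^ 2 := by
    have h1 := norm_add_sq_real (e - z) (R • u)
    rw [show e - z + R • u = e - y by rw [hy]; abel] at h1
    rw [h1, inner_smul_right, norm_smul, Real.norm_eq_abs, abs_of_pos hR0, mul_pow]
    ring
  have hinner : ⟪e - z, u⟫ ≤ -β := by
    have h1 : ⟪e - z, u⟫ = ⟪u, e - z⟫ := real_inner_comm _ _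
    rw [h1, huf, map_sub]
    rw [hβ]
    linarith
  have hsq : ‖z - y‖ ^ 2 ≤ ‖e - y‖ ^ 2 :=
    pow_le_pow_left₀ (norm_nonneg _) hzy 2
  rw [hzy2, hey2] at hsq
  have hfinal : 0 ≤ ‖e - z‖ ^ 2 + 2 * R * ⟪e - z, u⟫ := by linarith
  have h5 : ‖e - z‖ ^ 2 ≤ r ^ 2 := by nlinarith [norm_nonneg (e - z)]
  have h6 : 2 * R * ⟪e - z, u⟫ ≤ 2 * R * (-β) := by nlinarith
  have h7 : r ^ 2 < 2 * R * β := by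
    have heq : 2 * R * β = r ^ 2 + 2 * β := by
      rw [hR]; field_simp
    rw [heq]; linarith
  nlinarith

lemma interior_closure_eq {C : Set (EuclideanSpace ℝ (Fin n))} (hconv : Convex ℝ C)
    (hopen : IsOpen C) {x0 : EuclideanSpace ℝ (Fin n)} (hx0 : x0 ∈ C) :
    interior (closure C) = C := by
  refine Set.Subset.antisymm (fun z hz => ?_) ?_
  · obtain ⟨ε, hε, hball⟩ := Metric.isOpen_iff.1 isOpen_interior z hz
    have hballK : Metric.ball z ε ⊆ closure C := hball.trans interior_subset
    rcases eq_or_ne z x0 with rfl | hzx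
    · exact hx0
    · have hzn : (0:ℝ) < ‖z - x0‖ := by
        rw [norm_pos_iff, sub_ne_zero]; exact hzx
      set t := ε / (2 * ‖z - x0‖) with ht
      have ht0 : 0 < t := by positivity
      set w := z + t • (z - x0) with hw
      have hwK : w ∈ closure C := by
        apply hballK
        rw [Metric.mem_ball, dist_eq_norm, hw, add_sub_cancel_left, norm_smul,
          Real.norm_eq_abs, abs_of_pos ht0, ht]
        rw [div_mul_eq_mul_div]
        rw [div_lt_iff₀ (by positivity : (0:ℝ) < 2 * ‖z - x0‖)]
        nlinarith
      have hx0i : x0 ∈ interior C := by rwa [hopen.interior_eq]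
      have hcomb := hconv.combo_interior_closure_mem_interior (a := t / (1 + t))
        (b := 1 / (1 + t)) hx0i hwK (by positivity) (by positivity) (by field_simp <;> ring)
      have heq : (t / (1 + t)) • x0 + (1 / (1 + t)) • w = z := by
        rw [hw]
        have h1t : (1 + t) ≠ 0 := by positivity
        match_scalars
        all_goals (field_simp; try ring)
      rw [heq, hopen.interior_eq] at hcomb
      exact hcomb
  · have h1 : C ⊆ closure C := subset_closure
    calc C = interior C := hopen.interior_eq.symm
      _ ⊆ interior (closure C) := interior_mono h1

end str

set_option maxHeartbeats 2000000 in
/-- If the Hilbert geometry of a bounded open convex set `C ⊆ ℝⁿ` admits a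
quasi-isometric embedding into some finite-dimensional normed vector space, then `C` is the
interior of a convex polytope (the convex hull of finitely many points). -/
theorem polytope_of_quasiIsometricEmbedding {n : ℕ} (C : Set (EuclideanSpace ℝ (Fin n)))
    (hconv : Convex ℝ C) (hopen : IsOpen C) (hbdd : Bornology.IsBounded C)
    (m : ℕ) (ν : (Fin m → ℝ) → ℝ) (hν : IsNormOn (Fin m → ℝ) ν)
    (f : EuclideanSpace ℝ (Fin n) → (Fin m → ℝ)) (A B : ℝ) (hA : 1 ≤ A) (hB : 0 ≤ B)
    (hqi : ∀ x ∈ C, ∀ y ∈ C,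
      (1 / A) * hilbertDist C x y - B ≤ ν (f x - f y) ∧
        ν (f x - f y) ≤ A * hilbertDist C x y + B) :
    ∃ V : Finset (EuclideanSpace ℝ (Fin n)),
      C = interior (convexHull ℝ (V : Set (EuclideanSpace ℝ (Fin n)))) := by
  rcases Set.eq_empty_or_nonempty C with rfl | ⟨x0, hx0⟩
  · exact ⟨∅, by simp⟩
  have hA0 : (0:ℝ) < A := by linarith
  obtain ⟨δ0, hδ0, hball⟩ := Metric.isOpen_iff.1 hopen x0 hx0
  obtain ⟨D₁, hD⟩ := (Metric.isBounded_iff_subset_closedBall x0).1 hbdd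
  have hD0 : 0 ≤ D₁ := by simpa using hD hx0
  set K := closure C with hK
  have hKconv : Convex ℝ K := hconv.closure
  have hKcpt : IsCompact K :=
    Metric.isCompact_of_isClosed_isBounded isClosed_closure hbdd.closure
  have hKne : K.Nonempty := ⟨x0, subset_closure hx0⟩
  have hCK : C ⊆ K := subset_closure
  have hKD : K ⊆ Metric.closedBall x0 D₁ := closure_minimal hD Metric.isClosed_closedBall
  set C0 : ℝ := (1:ℝ)/2 * Real.log (3 + 6 * D₁ / δ0) with hC0
  have hC0pos : 0 ≤ C0 := by
    rw [hC0]
    have h1 : (0:ℝ) ≤ 6 * D₁ / δ0 := div_nonneg (by linarith) hδ0.le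
    have h2 : (1:ℝ) ≤ 3 + 6 * D₁ / δ0 := by linarith
    have := Real.log_nonneg h2
    linarith
  -- Step 1 : the set of exposed-type points is finite
  have hfin : (Epts K).Finite := by
    by_contra hinf
    rw [← Set.not_infinite, not_not] at hinf
    set ε0 : ℝ := 1 / (8 * A ^ 2) with hε0
    have hε0pos : 0 < ε0 := by rw [hε0]; positivity
    obtain ⟨tt, htt⟩ := nu_cover hν (ε0 / 2) (by positivity)
    have httne : 1 ≤ tt.card := by
      obtain ⟨y, hy, -⟩ := htt 0 (by rw [nu_zero hν]; norm_num)
      exact Finset.card_pos.2 ⟨y, hy⟩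
    obtain ⟨E', hE'sub, hE'card⟩ := hinf.exists_subset_card_eq (tt.card + 1)
    have hcard2 : 2 ≤ E'.card := by omega
    have hE'ne : E'.Nonempty := Finset.card_pos.1 (by omega)
    have hEK : ∀ e ∈ E', e ∈ K := fun e he => (hE'sub he).1
    have hu : ∀ e ∈ E', ∃ u : EuclideanSpace ℝ (Fin n),
        ∀ x ∈ K, x ≠ e → ⟪u, x - e⟫ < 0 := fun e he => (hE'sub he).2
    choose! U hU using hu
    set L : EuclideanSpace ℝ (Fin n) → EuclideanSpace ℝ (Fin n) → ℝ :=
      fun e x => ⟪U e, e⟫ - ⟪U e, x⟫ with hL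
    have hLpos : ∀ e ∈ E', ∀ x ∈ K, x ≠ e → 0 < L e x := by
      intro e he x hx hxe
      have h1 := hU e he x hx hxe
      rw [inner_sub_right] at h1
      rw [hL]
      dsimp only
      linarith
    -- each e in E' is not in C
    have heC : ∀ e ∈ E', e ∉ C := by
      intro e he heC
      obtain ⟨e₂, he₂, hne₂⟩ := ((Finset.one_lt_card_iff_nontrivial (s := E')).1 (by omega)).exists_ne e
      have hUne : U e ≠ 0 := by
        intro h0
        have := hU e he e₂ (hEK e₂ he₂) hne₂
        rw [h0, inner_zero_left] at this
        linarith
      obtain ⟨δe, hδe, hbe⟩ := Metric.isOpen_iff.1 hopen e heC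
      have hUn : (0:ℝ) < ‖U e‖ := norm_pos_iff.2 hUne
      set x := e + (δe / (2 * ‖U e‖)) • U e with hx
      have hxC : x ∈ C := by
        apply hbe
        rw [Metric.mem_ball, dist_eq_norm, hx, add_sub_cancel_left, norm_smul,
          Real.norm_eq_abs, abs_of_pos (by positivity)]
        rw [div_mul_eq_mul_div, div_lt_iff₀ (by positivity : (0:ℝ) < 2 * ‖U e‖)]
        nlinarith
      have hxe : x ≠ e := by
        rw [hx]
        intro h
        have h2 : (δe / (2 * ‖U e‖)) • U e = 0 := by
          have := congrArg (fun z => z - e) h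
          simpa using this
        rcases smul_eq_zero.1 h2 with h3 | h3
        · have : (0:ℝ) < δe / (2 * ‖U e‖) := by positivity
          linarith [this.ne' h3]
        · exact hUne h3
      have := hU e he x (hCK hxC) hxe
      rw [hx, show e + (δe / (2 * ‖U e‖)) • U e - e = (δe / (2 * ‖U e‖)) • U e by abel,
        inner_smul_right, real_inner_self_eq_norm_sq] at this
      have hpp : (0:ℝ) < δe / (2 * ‖U e‖) * ‖U e‖ ^ 2 :=
        mul_pos (by positivity) (by positivity)
      linarith
    have hex0 : ∀ e ∈ E', e ≠ x0 := fun e he h => heC e he (h ▸ hx0)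
    have hLx0 : ∀ e ∈ E', 0 < L e x0 :=
      fun e he => hLpos e he x0 (hCK hx0) (fun h => hex0 e he h.symm)
    -- the constants
    set Cf : EuclideanSpace ℝ (Fin n) × EuclideanSpace ℝ (Fin n) → ℝ :=
      fun pr => (1:ℝ)/2 * Real.log (2 * L pr.1 x0 / L pr.1 pr.2) with hCf
    have hprodne : (E' ×ˢ E').Nonempty := hE'ne.product hE'ne
    set Csup : ℝ := ((E' ×ˢ E').sup' hprodne Cf) ⊔ 0 with hCsup
    have hCsup0 : 0 ≤ Csup := le_sup_right
    have hCfle : ∀ e ∈ E', ∀ e' ∈ E', Cf (e, e') ≤ Csup := by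
      intro e he e' he'
      have h1 : (e, e') ∈ E' ×ˢ E' := Finset.mem_product.2 ⟨he, he'⟩
      have := Finset.le_sup' Cf h1
      calc Cf (e, e') ≤ (E' ×ˢ E').sup' hprodne Cf := Finset.le_sup' Cf h1
        _ ≤ Csup := le_sup_left
    set T : ℝ := 2 * A * (Csup + C0 + 2 * B + 1) with hT
    have hT1 : 1 ≤ T := by nlinarith
    set σ : ℝ := Real.exp (-(2 * T)) with hσ
    have hσ0 : 0 < σ := Real.exp_pos _
    have hσ1 : σ < 1 := by
      rw [hσ, Real.exp_lt_one_iff]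
      linarith
    have hσhalf : σ ≤ 1/2 := by
      have h1 : σ ≤ Real.exp (-2) := by
        rw [hσ, Real.exp_le_exp]
        linarith
      have h2 : Real.exp (-2) ≤ 1/2 := by
        rw [Real.exp_neg]
        rw [inv_le_comm₀ (Real.exp_pos 2) (by norm_num)]
        have := Real.add_one_le_exp (2:ℝ)
        linarith
      linarith
    have hlogσ : Real.log (1/σ) = 2 * T := by
      rw [one_div, hσ, ← Real.exp_neg, Real.log_exp]
      ring
    -- the deep points
    set P : EuclideanSpace ℝ (Fin n) → EuclideanSpace ℝ (Fin n) :=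
      fun e => σ • x0 + (1 - σ) • e with hP
    have hx0i : x0 ∈ interior C := by rwa [hopen.interior_eq]
    have hPC : ∀ e ∈ E', P e ∈ C := by
      intro e he
      have := hconv.combo_interior_closure_mem_interior (a := σ) (b := 1 - σ) hx0i
        (hEK e he) hσ0 (by linarith) (by ring)
      rwa [hopen.interior_eq] at this
    have hPne : ∀ e ∈ E', ∀ e' ∈ E', e ≠ e' → P e ≠ P e' := by
      intro e he e' he' hne hPP
      apply hne
      have h1 : (1 - σ) • (e - e') = (0 : EuclideanSpace ℝ (Fin n)) := by
        have := congrArg (fun z => z - (σ • x0 + (1 - σ) • e')) hPP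
        simpa [hP, smul_sub] using this
      rcases smul_eq_zero.1 h1 with h2 | h2
      · exfalso; have : σ ≠ 1 := by linarith
        apply this; linarith [sub_eq_zero.1 h2]
      · exact sub_eq_zero.1 h2
    -- L values at the deep points
    have hLPe : ∀ e ∈ E', L e (P e) = σ * L e x0 := by
      intro e he
      rw [hL, hP]
      dsimp only
      rw [inner_add_right, inner_smul_right, inner_smul_right]
      ring
    have hLPe' : ∀ e ∈ E', ∀ e' : EuclideanSpace ℝ (Fin n),
        L e (P e') = σ * L e x0 + (1 - σ) * L e e' := by
      intro e he e'
      rw [hL, hP]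
      dsimp only
      rw [inner_add_right, inner_smul_right, inner_smul_right]
      ring
    -- pairwise lower bound
    have hlower : ∀ e ∈ E', ∀ e' ∈ E', e ≠ e' →
        T - Csup ≤ hilbertDist C (P e) (P e') := by
      intro e he e' he' hne
      have hLee' : 0 < L e e' := hLpos e he e' (hEK e' he') (fun h => hne h.symm)
      have hLex0 : 0 < L e x0 := hLx0 e he
      have hnum : (1 - σ) * L e e' ≤ L e (P e') := by
        rw [hLPe' e he e']
        nlinarith
      have hPeL : L e (P e) = σ * L e x0 := hLPe e he
      have hltL : L e (P e) < L e (P e') := by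
        rw [hPeL, hLPe' e he e']
        nlinarith
      -- apply hd_ge
      have hge := hd_ge hopen hbdd (hPC e he) (hPC e' he') (hPne e he e' he' hne)
        (U e) (⟪U e, e⟫)
        (fun x hxC => hLpos e he x (hCK hxC) (fun h => heC e he (h ▸ hxC)))
        (by exact hltL)
      -- now bound the log term from below
      have hratio : L e e' / (2 * σ * L e x0) ≤ L e (P e') / L e (P e) := by
        rw [hPeL]
        rw [div_le_div_iff₀ (by positivity) (by positivity)]
        nlinarith [mul_nonneg (sub_nonneg.2 hnum) (by positivity : (0:ℝ) ≤ 2 * σ * L e x0),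
          mul_nonneg (mul_nonneg (mul_pos hσ0 hLee').le hLex0.le)
            (by linarith : (0:ℝ) ≤ 1 - 2 * σ)]
      have hratio0 : (0:ℝ) < L e e' / (2 * σ * L e x0) := by positivity
      have hlog1 : Real.log (L e e' / (2 * σ * L e x0))
          ≤ Real.log (L e (P e') / L e (P e)) := Real.log_le_log hratio0 hratio
      have hkey : Real.log (L e e' / (2 * σ * L e x0))
          = Real.log (1/σ) - Real.log (2 * L e x0 / L e e') := by
        rw [Real.log_div hLee'.ne' (by positivity), Real.log_div (by positivity) hLee'.ne',
          one_div, Real.log_inv]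
        rw [show 2 * σ * L e x0 = σ * (2 * L e x0) by ring,
          Real.log_mul hσ0.ne' (by positivity)]
        ring
      have hCfval : Cf (e, e') = 1/2 * Real.log (2 * L e x0 / L e e') := rfl
      have hCfle' := hCfle e he e' he'
      rw [hCfval] at hCfle'
      have : T - Csup ≤ 1/2 * Real.log (L e (P e') / L e (P e)) := by
        have h3 : 1/2 * Real.log (L e e' / (2 * σ * L e x0))
            = T - 1/2 * Real.log (2 * L e x0 / L e e') := by
          rw [hkey, hlogσ]; ring
        nlinarith
      linarith
    -- upper bound to the basepoint
    have hupper : ∀ e ∈ E', hilbertDist C (P e) x0 ≤ T + C0 := by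
      intro e he
      have h1 := hd_le hconv hopen hδ0 hball hD (hEK e he) (hex0 e he) hσ0 hσ1
      rw [hlogσ] at h1
      calc hilbertDist C (P e) x0 ≤ 1/2 * (2 * T) + C0 := by rw [hC0]; exact h1
        _ = T + C0 := by ring
    -- rescaled images
    set ρ : ℝ := A * (T + C0) + B with hρ
    have hρ0 : 0 < ρ := by nlinarith
    set W : EuclideanSpace ℝ (Fin n) → (Fin m → ℝ) :=
      fun e => ρ⁻¹ • (f (P e) - f x0) with hW
    have hW1 : ∀ e ∈ E', ν (W e) ≤ 1 := by
      intro e he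
      have h1 := (hqi (P e) (hPC e he) x0 hx0).2
      have h2 : ν (f (P e) - f x0) ≤ ρ := by
        have h3 : A * hilbertDist C (P e) x0 + B ≤ ρ := by
          rw [hρ]
          have := hupper e he
          nlinarith
        linarith
      rw [hW]
      dsimp only
      rw [hν.2.2.1, abs_of_pos (by positivity)]
      rw [← inv_mul_cancel₀ hρ0.ne']
      exact mul_le_mul_of_nonneg_left h2 (by positivity)
    have hWsep : ∀ e ∈ E', ∀ e' ∈ E', e ≠ e' → ε0 ≤ ν (W e - W e') := by
      intro e he e' he' hne
      have h1 := (hqi (P e) (hPC e he) (P e') (hPC e' he')).1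
      have h2 : T / (4 * A) ≤ (1 / A) * hilbertDist C (P e) (P e') - B := by
        have h3 := hlower e he e' he' hne
        have h4 : T / (4 * A) ≤ (1 / A) * (T - Csup) - B := by
          rw [div_le_iff₀ (by positivity : (0:ℝ) < 4 * A), one_div]
          have hAinv : A⁻¹ * A = 1 := inv_mul_cancel₀ hA0.ne'
          have expand : (A⁻¹ * (T - Csup) - B) * (4 * A)
              = 4 * (T - Csup) - 4 * A * B := by
            field_simp
          rw [expand]
          nlinarith
        have h5 : (1 / A) * (T - Csup) ≤ (1 / A) * hilbertDist C (P e) (P e') := by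
          apply mul_le_mul_of_nonneg_left h3 (by positivity)
        linarith
      have h6 : T / (4 * A) ≤ ν (f (P e) - f (P e')) := le_trans h2 h1
      have hWdiff : W e - W e' = ρ⁻¹ • (f (P e) - f (P e')) := by
        rw [hW]
        dsimp only
        rw [← smul_sub]
        congr 1
        abel
      rw [hWdiff, hν.2.2.1, abs_of_pos (by positivity)]
      have h7 : ρ ≤ 2 * A * T := by
        rw [hρ, hT]
        nlinarith
      have h8 : ε0 * ρ ≤ T / (4 * A) := by
        have h7' : ε0 * ρ ≤ ε0 * (2 * A * T) :=
          mul_le_mul_of_nonneg_left h7 hε0pos.le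
        have h9 : ε0 * (2 * A * T) = T / (4 * A) := by
          rw [hε0]; field_simp; ring
        exact h7'.trans_eq h9
      have h10 : ε0 ≤ ρ⁻¹ * (T / (4 * A)) := by
        rw [← mul_le_mul_iff_right₀ hρ0, ← mul_assoc, mul_inv_cancel₀ hρ0.ne', one_mul]
        calc ρ * ε0 = ε0 * ρ := mul_comm _ _
          _ ≤ T / (4 * A) := h8
      calc ε0 ≤ ρ⁻¹ * (T / (4 * A)) := h10
        _ ≤ ρ⁻¹ * ν (f (P e) - f (P e')) := by
            apply mul_le_mul_of_nonneg_left h6 (by positivity)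
    -- pigeonhole
    have hmaps : ∀ e ∈ E', ∃ y, y ∈ tt ∧ ν (W e - y) < ε0 / 2 := by
      intro e he
      obtain ⟨y, hy1, hy2⟩ := htt (W e) (hW1 e he)
      exact ⟨y, hy1, hy2⟩
    choose! g hg1 hg2 using hmaps
    have hcardlt : tt.card < E'.card := by omega
    obtain ⟨e, he, e', he', hne, hgeq⟩ :=
      Finset.exists_ne_map_eq_of_card_lt_of_maps_to hcardlt hg1
    have hsep := hWsep e he e' he' hne
    have htri : ν (W e - W e') ≤ ν (W e - g e) + ν (W e' - g e) := by
      have h1 : W e - W e' = (W e - g e) + (-(W e' - g e)) := by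
        rw [hgeq]; abel
      calc ν (W e - W e') = ν ((W e - g e) + (-(W e' - g e))) := by rw [h1]
        _ ≤ ν (W e - g e) + ν (-(W e' - g e)) := hν.2.2.2 _ _
        _ = ν (W e - g e) + ν (W e' - g e) := by rw [nu_neg hν]
    have hlt1 := hg2 e he
    have hlt2 := hg2 e' he'
    rw [← hgeq] at hlt2
    linarith
  -- Step 2 : K is the hull of its exposed points
  have hKP : K = convexHull ℝ (Epts K) := hull_epts hKcpt hKconv hKne hfin
  refine ⟨hfin.toFinset, ?_⟩
  rw [Set.Finite.coe_toFinset, ← hKP]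
  exact (interior_closure_eq hconv hopen hx0).symm
end

section
/- Let C ⊂ ℝ^n be a bounded open convex set whose Hilbert geometry (C, d_C) admits a quasi-isometric embedding into a finite-dimensional normed vector space. Then there is an integer N such that every subset X ⊂ ∂C with the property that for all distinct x, y ∈ X the segment [x, y] is not contained in ∂C satisfies Card(X) ≤ N. -/
open Classical

set_option linter.unusedSectionVars false
set_option linter.unusedVariables false

section NormPack

variable {m : ℕ} {ν : (Fin m → ℝ) → ℝ}

lemma IsNormOn.zero' (hν : IsNormOn (Fin m → ℝ) ν) : ν 0 = 0 := by
  have := hν.2.2.1 0 0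
  simpa using this

lemma IsNormOn.neg' (hν : IsNormOn (Fin m → ℝ) ν) (x : Fin m → ℝ) : ν (-x) = ν x := by
  have := hν.2.2.1 (-1) x
  simpa using this

lemma nu_sum_le (hν : IsNormOn (Fin m → ℝ) ν) {ι : Type*} (s : Finset ι) (g : ι → (Fin m → ℝ)) :
    ν (∑ i ∈ s, g i) ≤ ∑ i ∈ s, ν (g i) := by
  classical
  induction s using Finset.cons_induction with
  | empty => simp [hν.zero']
  | cons a s ha ih =>
    rw [Finset.sum_cons, Finset.sum_cons]
    calc ν (g a + ∑ i ∈ s, g i) ≤ ν (g a) + ν (∑ i ∈ s, g i) := hν.2.2.2 _ _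
    _ ≤ ν (g a) + ∑ i ∈ s, ν (g i) := by linarith

lemma exists_nu_le (hν : IsNormOn (Fin m → ℝ) ν) :
    ∃ C₀ : ℝ, 0 < C₀ ∧ ∀ u, ν u ≤ C₀ * ‖u‖ := by
  refine ⟨(∑ i : Fin m, ν (Pi.single i 1)) + 1, ?_, ?_⟩
  · have := Finset.sum_nonneg (fun i (_ : i ∈ Finset.univ) => hν.1 (Pi.single i (1:ℝ)))
    linarith
  · intro u
    have hu : u = ∑ i : Fin m, (u i) • (Pi.single i 1 : Fin m → ℝ) := by
      conv_lhs => rw [← Finset.univ_sum_single u]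
      refine Finset.sum_congr rfl fun i _ => ?_
      funext j
      by_cases h : j = i <;> simp [Pi.single_apply, h]
    calc ν u = ν (∑ i : Fin m, (u i) • (Pi.single i 1 : Fin m → ℝ)) := by rw [← hu]
    _ ≤ ∑ i : Fin m, ν ((u i) • (Pi.single i 1 : Fin m → ℝ)) := nu_sum_le hν _ _
    _ = ∑ i : Fin m, |u i| * ν (Pi.single i (1:ℝ)) := by
        refine Finset.sum_congr rfl fun i _ => hν.2.2.1 _ _
    _ ≤ ∑ i : Fin m, ‖u‖ * ν (Pi.single i (1:ℝ)) := by
        refine Finset.sum_le_sum fun i _ => ?_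
        have h1 : |u i| ≤ ‖u‖ := by
          have := norm_le_pi_norm u i
          simpa [Real.norm_eq_abs] using this
        exact mul_le_mul_of_nonneg_right h1 (hν.1 _)
    _ = (∑ i : Fin m, ν (Pi.single i (1:ℝ))) * ‖u‖ := by rw [Finset.sum_mul]; simp [mul_comm]
    _ ≤ ((∑ i : Fin m, ν (Pi.single i (1:ℝ))) + 1) * ‖u‖ := by
        apply mul_le_mul_of_nonneg_right _ (norm_nonneg u)
        linarith

lemma exists_le_nu (hν : IsNormOn (Fin m → ℝ) ν) (hm : 0 < m) :
    ∃ c : ℝ, 0 < c ∧ ∀ u, c * ‖u‖ ≤ ν u := by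
  obtain ⟨C₀, hC₀, hle⟩ := exists_nu_le hν
  have hlip : ∀ x y : Fin m → ℝ, ν x - ν y ≤ C₀ * ‖x - y‖ := by
    intro x y
    have h1 : ν x ≤ ν (x - y) + ν y := by
      have := hν.2.2.2 (x - y) y
      simpa using this
    have := hle (x - y)
    linarith
  have hcont : Continuous ν := by
    rw [Metric.continuous_iff]
    intro x ε hε
    refine ⟨ε / (C₀ + 1), by positivity, fun y hy => ?_⟩
    rw [Real.dist_eq, abs_lt]
    have h1 := hlip y x
    have h2 := hlip x y
    have h3 : ‖y - x‖ = dist y x := by rw [dist_eq_norm]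
    have h4 : ‖x - y‖ = dist y x := by rw [norm_sub_rev, dist_eq_norm]
    have h5 : C₀ * dist y x < ε := by
      have : dist y x < ε / (C₀ + 1) := hy
      calc C₀ * dist y x ≤ (C₀+1) * dist y x := by nlinarith [dist_nonneg (x := y) (y := x)]
      _ < (C₀+1) * (ε / (C₀+1)) := by apply mul_lt_mul_of_pos_left hy; positivity
      _ = ε := by field_simp
    constructor <;> nlinarith [h1, h2]
  haveI : Nonempty (Fin m) := ⟨⟨0, hm⟩⟩
  have hsne : (Metric.sphere (0 : Fin m → ℝ) 1).Nonempty :=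
    NormedSpace.sphere_nonempty.2 zero_le_one
  obtain ⟨z₀, hz₀S, hz₀min⟩ := (isCompact_sphere (0 : Fin m → ℝ) 1).exists_isMinOn hsne
    hcont.continuousOn
  have hz₀norm : ‖z₀‖ = 1 := by simpa using hz₀S
  have hz₀pos : 0 < ν z₀ := by
    rcases lt_or_eq_of_le (hν.1 z₀) with h | h
    · exact h
    · exfalso
      have : z₀ = 0 := hν.2.1 z₀ h.symm
      rw [this] at hz₀norm; simp at hz₀norm
  refine ⟨ν z₀, hz₀pos, fun u => ?_⟩
  rcases eq_or_ne u 0 with rfl | hu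
  · simp [hν.zero']
  · have hun : ‖u‖ ≠ 0 := norm_ne_zero_iff.2 hu
    have hmem : ‖u‖⁻¹ • u ∈ Metric.sphere (0 : Fin m → ℝ) 1 := by
      simp [norm_smul, abs_of_nonneg (inv_nonneg.2 (norm_nonneg u)), inv_mul_cancel₀ hun]
    have hmin := hz₀min hmem
    have hcalc : ν u = ‖u‖ * ν (‖u‖⁻¹ • u) := by
      have h := hν.2.2.1 ‖u‖ (‖u‖⁻¹ • u)
      rw [smul_smul, mul_inv_cancel₀ hun, one_smul, abs_of_nonneg (norm_nonneg u)] at h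
      exact h
    rw [hcalc]
    calc ν z₀ * ‖u‖ = ‖u‖ * ν z₀ := mul_comm _ _
    _ ≤ ‖u‖ * ν (‖u‖⁻¹ • u) := mul_le_mul_of_nonneg_left hmin (norm_nonneg u)

lemma packing_bound (hν : IsNormOn (Fin m → ℝ) ν) (ε : ℝ) (hε : 0 < ε) :
    ∃ N : ℕ, ∀ W : Finset (Fin m → ℝ), (∀ w ∈ W, ν w ≤ 1) →
      (∀ w ∈ W, ∀ w' ∈ W, w ≠ w' → ε ≤ ν (w - w')) → W.card ≤ N := by
  rcases Nat.eq_zero_or_pos m with hm | hm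
  · refine ⟨1, fun W _ _ => ?_⟩
    refine Finset.card_le_one.2 fun a ha b hb => ?_
    subst hm
    exact funext fun i => i.elim0
  · obtain ⟨C₀, hC₀, hle⟩ := exists_nu_le hν
    obtain ⟨c, hc, hge⟩ := exists_le_nu hν hm
    set δ := ε / (2 * C₀) with hδdef
    have hδpos : 0 < δ := by positivity
    obtain ⟨t, htfin, htcov⟩ :=
      (Metric.totallyBounded_iff.1 (isCompact_closedBall (0 : Fin m → ℝ) (1/c)).totallyBounded)
        δ hδpos
    refine ⟨htfin.toFinset.card, fun W hW1 hWsep => ?_⟩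
    set g : (Fin m → ℝ) → (Fin m → ℝ) := fun w =>
      if h : ∃ y ∈ t, w ∈ Metric.ball y δ then h.choose else 0 with hgdef
    have hg : ∀ w ∈ W, g w ∈ t ∧ w ∈ Metric.ball (g w) δ := by
      intro w hw
      have hball : w ∈ Metric.closedBall (0 : Fin m → ℝ) (1/c) := by
        have h1 := hge w
        have h2 := hW1 w hw
        have h3 : ‖w‖ ≤ 1 / c := by
          rw [le_div_iff₀ hc]; nlinarith
        simpa [Metric.mem_closedBall, dist_zero_right] using h3
      have hex : ∃ y ∈ t, w ∈ Metric.ball y δ := by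
        have := htcov hball
        simpa using this
      rw [hgdef]
      simp only [dif_pos hex]
      exact ⟨hex.choose_spec.1, hex.choose_spec.2⟩
    apply Finset.card_le_card_of_injOn g
    · intro w hw
      exact htfin.mem_toFinset.2 (hg w hw).1
    · intro a ha b hb hab
      by_contra hne
      have hsep := hWsep a ha b hb hne
      have h1 : dist a (g a) < δ := (hg a ha).2
      have h2 : dist b (g b) < δ := (hg b hb).2
      have h3 : dist a b < 2 * δ := by
        calc dist a b ≤ dist a (g a) + dist (g b) b := by
              rw [hab]; exact dist_triangle a (g b) b
        _ < δ + δ := by rw [dist_comm (g b) b]; linarith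
        _ = 2 * δ := by ring
      have h4 : ν (a - b) ≤ C₀ * ‖a - b‖ := hle _
      have h5 : ‖a - b‖ = dist a b := (dist_eq_norm a b).symm
      have h6 : C₀ * dist a b < C₀ * (2 * δ) := mul_lt_mul_of_pos_left h3 hC₀
      have h7 : C₀ * (2 * δ) = ε := by rw [hδdef]; field_simp
      nlinarith

end NormPack

section Hilbert

variable {E : Type*} [NormedAddCommGroup E] [NormedSpace ℝ E] {C : Set E}

lemma chord_props (hopen : IsOpen C) (hbdd : Bornology.IsBounded C) {p q : E}
    (hp : p ∈ C) (hq : q ∈ C) (hpq : p ≠ q) :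
    ((0:ℝ) ∈ {t : ℝ | p + t • (q - p) ∈ C}) ∧ ((1:ℝ) ∈ {t : ℝ | p + t • (q - p) ∈ C}) ∧
      BddAbove {t : ℝ | p + t • (q - p) ∈ C} ∧ BddBelow {t : ℝ | p + t • (q - p) ∈ C} ∧
      sInf {t : ℝ | p + t • (q - p) ∈ C} < 0 ∧ 1 < sSup {t : ℝ | p + t • (q - p) ∈ C} := by
  set S := {t : ℝ | p + t • (q - p) ∈ C} with hS
  have h0 : (0:ℝ) ∈ S := by simp [hS, Set.mem_setOf_eq, hp]
  have h1 : (1:ℝ) ∈ S := by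
    have : p + (1:ℝ) • (q - p) = q := by rw [one_smul]; abel
    simp [hS, Set.mem_setOf_eq, this, hq]
  obtain ⟨R, hR⟩ := hbdd.subset_closedBall 0
  have hqp : (0:ℝ) < ‖q - p‖ := by
    rw [norm_pos_iff, sub_ne_zero]; exact fun h => hpq h.symm
  have hkey : ∀ t ∈ S, |t| ≤ (R + ‖p‖) / ‖q - p‖ := by
    intro t ht
    have h2 : ‖p + t • (q - p)‖ ≤ R := by
      have := hR ht
      simpa [Metric.mem_closedBall, dist_zero_right] using this
    have h3 : ‖t • (q - p)‖ ≤ R + ‖p‖ := by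
      have h4 : t • (q - p) = (p + t • (q - p)) - p := by abel
      rw [h4]
      calc ‖(p + t • (q - p)) - p‖ ≤ ‖p + t • (q - p)‖ + ‖p‖ := norm_sub_le _ _
      _ ≤ R + ‖p‖ := by linarith
    rw [norm_smul, Real.norm_eq_abs] at h3
    rw [le_div_iff₀ hqp]
    exact h3
  have hbA : BddAbove S := ⟨(R + ‖p‖) / ‖q - p‖, fun t ht => (abs_le.1 (hkey t ht)).2⟩
  have hbB : BddBelow S := ⟨-((R + ‖p‖) / ‖q - p‖), fun t ht => (abs_le.1 (hkey t ht)).1⟩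
  have hSopen : IsOpen S := by
    have hcont : Continuous fun t : ℝ => p + t • (q - p) :=
      continuous_const.add (continuous_id.smul continuous_const)
    exact hopen.preimage hcont
  obtain ⟨ε₀, hε₀, hball0⟩ := Metric.isOpen_iff.1 hSopen 0 h0
  obtain ⟨ε₁, hε₁, hball1⟩ := Metric.isOpen_iff.1 hSopen 1 h1
  have hmem0 : -(ε₀/2) ∈ S := by
    apply hball0
    simp [Real.dist_eq, abs_of_nonneg, abs_of_nonpos]
    rw [abs_of_nonneg (by linarith)]
    linarith
  have hmem1 : 1 + ε₁/2 ∈ S := by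
    apply hball1
    simp [Real.dist_eq]
    rw [abs_of_nonneg (by linarith)]
    linarith
  refine ⟨h0, h1, hbA, hbB, ?_, ?_⟩
  · calc sInf S ≤ -(ε₀/2) := csInf_le hbB hmem0
    _ < 0 := by linarith
  · calc (1:ℝ) < 1 + ε₁/2 := by linarith
    _ ≤ sSup S := le_csSup hbA hmem1

lemma hilbertDist_ge (hopen : IsOpen C) (hbdd : Bornology.IsBounded C) {p q : E}
    (hp : p ∈ C) (hq : q ∈ C) (hpq : p ≠ q) {δ₁ δ₂ : ℝ} (h1 : 0 < δ₁) (h2 : 0 < δ₂)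
    (ha : -sInf {t : ℝ | p + t • (q - p) ∈ C} ≤ δ₁)
    (hb : sSup {t : ℝ | p + t • (q - p) ∈ C} - 1 ≤ δ₂) :
    (1/2) * Real.log (1/(δ₁ * δ₂)) ≤ hilbertDist C p q := by
  obtain ⟨h0, h1', hbA, hbB, hinf, hsup⟩ := chord_props hopen hbdd hp hq hpq
  rw [hilbertDist, if_neg hpq]
  set a := sInf {t : ℝ | p + t • (q - p) ∈ C}
  set b := sSup {t : ℝ | p + t • (q - p) ∈ C}
  have hna : 0 < -a := by linarith
  have hb1 : 0 < b - 1 := by linarith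
  have key1 : 1/δ₁ ≤ (1 - a)/(-a) := by
    calc 1/δ₁ ≤ 1/(-a) := by apply one_div_le_one_div_of_le hna ha
    _ ≤ (1 - a)/(-a) := (div_le_div_iff_of_pos_right hna).2 (by linarith)
  have key2 : 1/δ₂ ≤ b/(b - 1) := by
    calc 1/δ₂ ≤ 1/(b-1) := by apply one_div_le_one_div_of_le hb1 hb
    _ ≤ b/(b - 1) := (div_le_div_iff_of_pos_right hb1).2 (by linarith)
  have hprod : 1/(δ₁ * δ₂) ≤ ((1 - a)/(-a)) * (b/(b-1)) := by
    have e : 1/(δ₁ * δ₂) = (1/δ₁) * (1/δ₂) := by rw [one_div_mul_one_div]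
    rw [e]
    apply mul_le_mul key1 key2 (by positivity) (div_nonneg (by linarith) (by linarith))
  have hpos : (0:ℝ) < 1/(δ₁ * δ₂) := by positivity
  have := Real.log_le_log hpos hprod
  linarith

lemma hilbertDist_le (hopen : IsOpen C) (hbdd : Bornology.IsBounded C) {p q : E}
    (hp : p ∈ C) (hq : q ∈ C) (hpq : p ≠ q) {δ₁ δ₂ : ℝ} (h1 : 0 < δ₁) (h2 : 0 < δ₂)
    (ha : δ₁ ≤ -sInf {t : ℝ | p + t • (q - p) ∈ C})
    (hb : δ₂ ≤ sSup {t : ℝ | p + t • (q - p) ∈ C} - 1) :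
    hilbertDist C p q ≤ (1/2) * Real.log ((1 + 1/δ₁) * (1 + 1/δ₂)) := by
  obtain ⟨h0, h1', hbA, hbB, hinf, hsup⟩ := chord_props hopen hbdd hp hq hpq
  rw [hilbertDist, if_neg hpq]
  set a := sInf {t : ℝ | p + t • (q - p) ∈ C}
  set b := sSup {t : ℝ | p + t • (q - p) ∈ C}
  have hna : 0 < -a := by linarith
  have hb1 : 0 < b - 1 := by linarith
  have key1 : (1 - a)/(-a) ≤ 1 + 1/δ₁ := by
    have e : (1 - a)/(-a) = 1 + 1/(-a) := by
      rw [one_add_div (show (-a) ≠ (0:ℝ) by linarith)]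
      ring_nf
    rw [e]
    have : 1/(-a) ≤ 1/δ₁ := one_div_le_one_div_of_le h1 ha
    linarith
  have key2 : b/(b - 1) ≤ 1 + 1/δ₂ := by
    have e : b/(b-1) = 1 + 1/(b-1) := by
      rw [one_add_div (show (b-1) ≠ (0:ℝ) by linarith)]
      ring_nf
    rw [e]
    have : 1/(b-1) ≤ 1/δ₂ := one_div_le_one_div_of_le h2 hb
    linarith
  have hposa : (0:ℝ) < (1 - a)/(-a) := div_pos (by linarith) hna
  have hposb : (0:ℝ) < b/(b-1) := by
    apply div_pos (by linarith) hb1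
  have hprod : ((1 - a)/(-a)) * (b/(b-1)) ≤ (1 + 1/δ₁) * (1 + 1/δ₂) :=
    mul_le_mul key1 key2 hposb.le (by positivity)
  have := Real.log_le_log (by positivity) hprod
  linarith

end Hilbert

section Geom

variable {E : Type*} [NormedAddCommGroup E] [NormedSpace ℝ E] {C : Set E}

/-- Interior point on a boundary-point combination stays in `C`. -/
lemma combo_mem (hconv : Convex ℝ C) (hopen : IsOpen C) {o x : E} (ho : o ∈ C)
    (hx : x ∈ closure C) {c : ℝ} (hc0 : 0 ≤ c) (hc1 : c < 1) : o + c • (x - o) ∈ C := by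
  have he : o + c • (x - o) = (1 - c) • o + c • x := by
    rw [smul_sub, sub_smul, one_smul]; abel
  have hmem : (1 - c) • o + c • x ∈ interior C :=
    hconv.combo_interior_closure_mem_interior (by rwa [hopen.interior_eq]) hx
      (by linarith) hc0 (by ring)
  rw [he]
  rwa [hopen.interior_eq] at hmem

lemma frontier_not_mem (hopen : IsOpen C) {x : E} (hx : x ∈ frontier C) : x ∉ C := by
  intro hxC
  have : x ∈ interior C := by rwa [hopen.interior_eq]
  exact hx.2 this

/-- Supporting-functional based chord bound for points moving toward two boundary points
whose segment passes through the interior. -/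
lemma pairBound (hconv : Convex ℝ C) (hopen : IsOpen C) {o x y : E} (ho : o ∈ C)
    (hx : x ∈ frontier C) (hy : y ∈ frontier C) (hxy : x ≠ y)
    (hseg : ¬ segment ℝ x y ⊆ frontier C) :
    ∃ K : ℝ, 1 ≤ K ∧ ∀ s : ℝ, 1/2 ≤ s → s < 1 →
      (∀ t ∈ {t : ℝ | (o + s • (x - o)) + t • ((o + s • (y - o)) - (o + s • (x - o))) ∈ C},
        t ≤ 1 + (1 - s) * K ∧ -((1 - s) * K) ≤ t) := by
  -- a point of C on the segment
  obtain ⟨w, hwseg, hwnf⟩ := Set.not_subset.1 hseg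
  have hwc : w ∈ closure C := by
    have hsub : segment ℝ x y ⊆ closure C :=
      (hconv.closure).segment_subset (frontier_subset_closure hx) (frontier_subset_closure hy)
    exact hsub hwseg
  have hwC : w ∈ C := by
    by_contra hwC
    apply hwnf
    refine ⟨hwc, ?_⟩
    rwa [hopen.interior_eq]
  obtain ⟨aw, bw, haw, hbw, habw, hwe⟩ := hwseg
  have haw' : 0 < aw := by
    rcases haw.lt_or_eq with h | h
    · exact h
    · exfalso
      apply frontier_not_mem hopen hy
      have hbw1 : bw = 1 := by linarith
      have hyw : y = w := by rw [← hwe, ← h, hbw1]; simp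
      rwa [hyw]
  have hbw' : 0 < bw := by
    rcases hbw.lt_or_eq with h | h
    · exact h
    · exfalso
      apply frontier_not_mem hopen hx
      have haw1 : aw = 1 := by linarith
      have hxw : x = w := by rw [← hwe, ← h, haw1]; simp
      rwa [hxw]
  -- supporting functionals
  obtain ⟨u, hu⟩ := geometric_hahn_banach_open_point hconv hopen (frontier_not_mem hopen hy)
  obtain ⟨u', hu'⟩ := geometric_hahn_banach_open_point hconv hopen (frontier_not_mem hopen hx)
  have hwval : ∀ g : E →L[ℝ] ℝ, g w = aw * g x + bw * g y := by
    intro g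
    rw [← hwe]
    simp [map_add, map_smul]
  have huw : u w < u y := hu w hwC
  have huw' : u' w < u' x := hu' w hwC
  have hγ : 0 < u y - u x := by
    rw [hwval u] at huw
    have h3 : (aw + bw - 1) * u y = 0 := by rw [habw]; ring
    have h2 : aw * u x < aw * u y := by nlinarith [huw, h3]
    have := (mul_lt_mul_iff_right₀ haw').1 h2
    linarith
  have hγ' : 0 < u' x - u' y := by
    rw [hwval u'] at huw'
    have h3 : (aw + bw - 1) * u' x = 0 := by rw [habw]; ring
    have h2 : bw * u' y < bw * u' x := by nlinarith [huw', h3]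
    have := (mul_lt_mul_iff_right₀ hbw').1 h2
    linarith
  obtain ⟨γ, hγdef⟩ : ∃ γ : ℝ, γ = u y - u x := ⟨_, rfl⟩
  obtain ⟨γ', hγ'def⟩ : ∃ γ' : ℝ, γ' = u' x - u' y := ⟨_, rfl⟩
  obtain ⟨d, hddef⟩ : ∃ d : ℝ, d = u x - u o := ⟨_, rfl⟩
  obtain ⟨d', hd'def⟩ : ∃ d' : ℝ, d' = u' x - u' o := ⟨_, rfl⟩
  rw [← hγdef] at hγ
  rw [← hγ'def] at hγ'
  suffices h : ∀ K : ℝ, 1 ≤ K → (2*γ + 2*|d|)/γ ≤ K → (2*γ' + 2*|d'|)/γ' ≤ K →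
      ∀ s : ℝ, 1/2 ≤ s → s < 1 →
      (∀ t ∈ {t : ℝ | (o + s • (x - o)) + t • ((o + s • (y - o)) - (o + s • (x - o))) ∈ C},
        t ≤ 1 + (1 - s) * K ∧ -((1 - s) * K) ≤ t) by
    exact ⟨max (max ((2*γ + 2*|d|)/γ) ((2*γ' + 2*|d'|)/γ')) 1, le_max_right _ _,
      h _ (le_max_right _ _) (le_trans (le_max_left _ _) (le_max_left _ _))
        (le_trans (le_max_right _ _) (le_max_left _ _))⟩
  intro K hKone hK1 hK2 s hs1 hs2 t ht
  have hs0 : 0 < s := by linarith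
  have h1s : (0:ℝ) ≤ 1 - s := by linarith
  have h2s : (0:ℝ) ≤ 2*s - 1 := by linarith
  have htC : (o + s • (x - o)) + t • ((o + s • (y - o)) - (o + s • (x - o))) ∈ C := ht
  have hsγ : 0 < s * γ := mul_pos hs0 hγ
  have hsγ' : 0 < s * γ' := mul_pos hs0 hγ'
  constructor
  · -- upper bound via u
    have h1 := hu _ htC
    simp only [map_add, map_sub, map_smul, smul_eq_mul] at h1
    have habs : d ≤ |d| := le_abs_self d
    have hKγ : ((2*γ + 2*|d|)/γ) * γ = 2*γ + 2*|d| := div_mul_cancel₀ _ (by linarith)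
    have hKK : 2*γ + 2*|d| ≤ K * γ := by
      calc 2*γ + 2*|d| = ((2*γ + 2*|d|)/γ) * γ := hKγ.symm
      _ ≤ K * γ := mul_le_mul_of_nonneg_right hK1 (by linarith)
    have hexp : u o + s * (u x - u o) + t * (u o + s * (u y - u o) - (u o + s * (u x - u o)))
        = (u o + d) - (1-s)*d + t*(s*γ) := by rw [hγdef, hddef]; ring
    have hyy : u y = (u o + d) + γ := by rw [hγdef, hddef]; ring
    rw [hexp, hyy] at h1
    have hstep : t * (s * γ) < γ + (1 - s) * d := by linarith
    have hstep2 : t * (s * γ) < γ + (1 - s) * |d| := by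
      have := mul_le_mul_of_nonneg_left habs h1s
      linarith
    have h3 : γ + (1 - s) * |d| ≤ (1 + (1 - s) * K) * (s * γ) := by
      have A := mul_le_mul_of_nonneg_left hKK (mul_nonneg hs0.le h1s)
      have B2 : (0:ℝ) ≤ (2*s-1) * ((1-s) * γ) := mul_nonneg h2s (mul_nonneg h1s hγ.le)
      have B3 : (0:ℝ) ≤ (2*s-1) * ((1-s) * |d|) := mul_nonneg h2s (mul_nonneg h1s (abs_nonneg d))
      clear ht htC h1 hstep hstep2 hu hu' hwval hwe
      nlinarith [A, B2, B3]
    have h4 := lt_of_lt_of_le hstep2 h3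
    have h5 := (mul_lt_mul_iff_left₀ hsγ).1 h4
    linarith
  · -- lower bound via u'
    have h1 := hu' _ htC
    simp only [map_add, map_sub, map_smul, smul_eq_mul] at h1
    have habs : d' ≤ |d'| := le_abs_self d'
    have hKγ : ((2*γ' + 2*|d'|)/γ') * γ' = 2*γ' + 2*|d'| := div_mul_cancel₀ _ (by linarith)
    have hKK : 2*γ' + 2*|d'| ≤ K * γ' := by
      calc 2*γ' + 2*|d'| = ((2*γ' + 2*|d'|)/γ') * γ' := hKγ.symm
      _ ≤ K * γ' := mul_le_mul_of_nonneg_right hK2 (by linarith)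
    have hexp : u' o + s * (u' x - u' o) + t * (u' o + s * (u' y - u' o) - (u' o + s * (u' x - u' o)))
        = (u' o + d') - (1-s)*d' + (-t)*(s*γ') := by rw [hγ'def, hd'def]; ring
    have hyy : u' x = (u' o + d') := by rw [hd'def]; ring
    rw [hexp] at h1
    rw [hyy] at h1
    have hstep : (-t) * (s * γ') < (1 - s) * d' := by linarith
    have hstep2 : (-t) * (s * γ') < (1 - s) * |d'| := by
      have := mul_le_mul_of_nonneg_left habs h1s
      linarith
    have h3 : (1 - s) * |d'| ≤ ((1 - s) * K) * (s * γ') := by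
      have A := mul_le_mul_of_nonneg_left hKK (mul_nonneg hs0.le h1s)
      have B2 : (0:ℝ) ≤ (2*s-1) * ((1-s) * |d'|) := mul_nonneg h2s (mul_nonneg h1s (abs_nonneg d'))
      have B3 : (0:ℝ) ≤ s * (1-s) * γ' := mul_nonneg (mul_nonneg hs0.le h1s) hγ'.le
      clear ht htC h1 hstep hstep2 hu hu' hwval hwe
      nlinarith [A, B2, B3]
    have h4 := lt_of_lt_of_le hstep2 h3
    have h5 := (mul_lt_mul_iff_left₀ hsγ').1 h4
    linarith

end Geom

section Base

variable {E : Type*} [NormedAddCommGroup E] [NormedSpace ℝ E] {C : Set E}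

lemma baseBound (hconv : Convex ℝ C) (hopen : IsOpen C) (hbdd : Bornology.IsBounded C)
    {o x : E} (ho : o ∈ C) {r R : ℝ} (hr : 0 < r) (hRpos : 0 < R)
    (hball : Metric.ball o r ⊆ C) (hR : C ⊆ Metric.closedBall 0 R)
    (hx : x ∈ frontier C) {s : ℝ} (hs1 : 1/2 ≤ s) (hs2 : s < 1) :
    hilbertDist C o (o + s • (x - o)) ≤
      (1/2) * Real.log ((1 + 4*R/r) * (1 + 2/(1-s))) := by
  have hs0 : (0:ℝ) < s := by linarith
  have hxo : x ≠ o := by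
    intro h
    exact frontier_not_mem hopen hx (h ▸ ho)
  have hdpos : (0:ℝ) < ‖x - o‖ := by
    rw [norm_pos_iff, sub_ne_zero]; exact hxo
  set dd := ‖x - o‖ with hdd
  have hxcl : x ∈ closure C := frontier_subset_closure hx
  have hp : o + s • (x - o) ∈ C := combo_mem hconv hopen ho hxcl hs0.le hs2
  have hne : o ≠ o + s • (x - o) := by
    intro h
    have h2 : s • (x - o) = 0 := by
      have := h.symm
      rwa [add_eq_left] at this
    rcases smul_eq_zero.1 h2 with h3 | h3
    · linarith
    · rw [sub_eq_zero] at h3; exact hxo h3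
  have hpo : (o + s • (x - o)) - o = s • (x - o) := add_sub_cancel_left o _
  have honorm : ‖o‖ ≤ R := by
    have := hR ho
    simpa [Metric.mem_closedBall, dist_zero_right] using this
  have hxnorm : ‖x‖ ≤ R := by
    have hcl : closure C ⊆ Metric.closedBall 0 R :=
      closure_minimal hR Metric.isClosed_closedBall
    have := hcl hxcl
    simpa [Metric.mem_closedBall, dist_zero_right] using this
  have hd2R : dd ≤ 2 * R := by
    calc dd ≤ ‖x‖ + ‖o‖ := norm_sub_le x o
    _ ≤ 2 * R := by linarith
  -- lower bound for -sInf
  set t₀ : ℝ := -(r/(2*s*dd)) with ht₀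
  have ht₀s : t₀ * s = -(r/(2*dd)) := by
    rw [ht₀]; field_simp
  have ht₀mem : o + t₀ • ((o + s • (x - o)) - o) ∈ C := by
    rw [hpo, smul_smul, ← mul_comm s t₀, mul_comm s t₀, ht₀s]
    apply hball
    have hnorm : ‖(-(r/(2*dd))) • (x - o)‖ = r/2 := by
      rw [norm_smul, Real.norm_eq_abs, abs_neg, abs_of_nonneg (by positivity), ← hdd]
      field_simp
    rw [Metric.mem_ball, dist_eq_norm, add_sub_cancel_left, hnorm]
    linarith
  -- upper bound point for sSup
  set t₁ : ℝ := (1 + 1/s)/2 with ht₁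
  have ht₁s : t₁ * s = (s + 1)/2 := by
    rw [ht₁]; field_simp
  have ht₁mem : o + t₁ • ((o + s • (x - o)) - o) ∈ C := by
    rw [hpo, smul_smul, ht₁s]
    exact combo_mem hconv hopen ho hxcl (by linarith) (by linarith)
  obtain ⟨h0, h1, hbA, hbB, hinf, hsup⟩ := chord_props hopen hbdd ho hp hne
  have hδ₁ : (0:ℝ) < r/(4*R) := by positivity
  have hδ₂ : (0:ℝ) < (1-s)/2 := by linarith
  have ha : r/(4*R) ≤ -sInf {t : ℝ | o + t • ((o + s • (x - o)) - o) ∈ C} := by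
    have hle := csInf_le hbB ht₀mem
    have h2 : r/(4*R) ≤ r/(2*s*dd) := by
      apply div_le_div_of_nonneg_left hr.le (by positivity)
      nlinarith
    rw [ht₀] at hle
    linarith
  have hb : (1-s)/2 ≤ sSup {t : ℝ | o + t • ((o + s • (x - o)) - o) ∈ C} - 1 := by
    have hle := le_csSup hbA ht₁mem
    have h2 : 1 + (1-s)/2 ≤ t₁ := by
      rw [ht₁]
      have h3 : 2 - s ≤ 1/s := by
        rw [le_div_iff₀ hs0]
        nlinarith [sq_nonneg (1-s)]
      linarith
    linarith
  have := hilbertDist_le hopen hbdd ho hp hne hδ₁ hδ₂ ha hb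
  have he1 : 1 + 1/(r/(4*R)) = 1 + 4*R/r := by
    rw [one_div_div]
  have he2 : 1 + 1/((1-s)/2) = 1 + 2/(1-s) := by
    rw [one_div_div]
  rwa [he1, he2] at this

end Base

set_option maxHeartbeats 1000000 in
/-- If the Hilbert geometry of a bounded open convex set `C ⊆ ℝⁿ` admits a
quasi-isometric embedding into a finite-dimensional normed vector space, then there is an
integer `N` bounding the cardinality of every subset `X ⊆ ∂C` such that for all distinct
`x, y ∈ X` the segment `[x, y]` is not contained in `∂C`. -/
theorem card_bound_of_quasiIsometricEmbedding {n : ℕ} (C : Set (EuclideanSpace ℝ (Fin n)))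
    (hconv : Convex ℝ C) (hopen : IsOpen C) (hbdd : Bornology.IsBounded C)
    (m : ℕ) (ν : (Fin m → ℝ) → ℝ) (hν : IsNormOn (Fin m → ℝ) ν)
    (f : EuclideanSpace ℝ (Fin n) → (Fin m → ℝ)) (A B : ℝ) (hA : 1 ≤ A) (hB : 0 ≤ B)
    (hqi : ∀ x ∈ C, ∀ y ∈ C,
      (1 / A) * hilbertDist C x y - B ≤ ν (f x - f y) ∧
        ν (f x - f y) ≤ A * hilbertDist C x y + B) :
    ∃ N : ℕ, ∀ X : Set (EuclideanSpace ℝ (Fin n)), X ⊆ frontier C →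
      (∀ x ∈ X, ∀ y ∈ X, x ≠ y → ¬ segment ℝ x y ⊆ frontier C) →
      X.Finite ∧ X.ncard ≤ N := by
  classical
  rcases Set.eq_empty_or_nonempty C with hCe | ⟨o, ho⟩
  · refine ⟨0, fun X hX _ => ?_⟩
    rw [hCe, frontier_empty, Set.subset_empty_iff] at hX
    subst hX
    simp
  have hA0 : (0:ℝ) < A := lt_of_lt_of_le one_pos hA
  obtain ⟨r, hr, hball⟩ := Metric.isOpen_iff.1 hopen o ho
  obtain ⟨R₀, hR₀⟩ := hbdd.subset_closedBall 0
  obtain ⟨R, hRpos, hRC⟩ : ∃ R : ℝ, 0 < R ∧ C ⊆ Metric.closedBall 0 R :=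
    ⟨max R₀ r, lt_of_lt_of_le hr (le_max_right _ _),
      hR₀.trans (Metric.closedBall_subset_closedBall (le_max_left _ _))⟩
  have h4Rr : (0:ℝ) ≤ 4*R/r := by positivity
  obtain ⟨G, hGpos, hGdef⟩ : ∃ G : ℝ, 0 ≤ G ∧ G = (1/2) * Real.log (3 * (1 + 4*R/r)) := by
    refine ⟨_, ?_, rfl⟩
    apply mul_nonneg (by norm_num)
    apply Real.log_nonneg
    nlinarith
  obtain ⟨ε, hε, hεdef⟩ : ∃ ε : ℝ, 0 < ε ∧ ε = 1/(A*A) := ⟨_, by positivity, rfl⟩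
  obtain ⟨N₀, hN₀⟩ := packing_bound hν ε hε
  refine ⟨max N₀ 1, fun X hXfr hXseg => ?_⟩
  have key : ∀ Y : Finset (EuclideanSpace ℝ (Fin n)), ↑Y ⊆ X → Y.card ≤ max N₀ 1 := by
    intro Y hYX
    rcases Finset.eq_empty_or_nonempty Y with rfl | ⟨y₀, hy₀⟩
    · simp
    have hYfr : ∀ z ∈ Y, z ∈ frontier C := fun z hz => hXfr (hYX hz)
    have hYcl : ∀ z ∈ Y, z ∈ closure C := fun z hz => frontier_subset_closure (hYfr z hz)
    -- pair constants
    set g : (EuclideanSpace ℝ (Fin n)) × (EuclideanSpace ℝ (Fin n)) → ℝ := fun pr =>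
      if h : pr.1 ∈ frontier C ∧ pr.2 ∈ frontier C ∧ pr.1 ≠ pr.2 ∧
          ¬ segment ℝ pr.1 pr.2 ⊆ frontier C then
        (pairBound hconv hopen ho h.1 h.2.1 h.2.2.1 h.2.2.2).choose
      else 1 with hgdef
    obtain ⟨Km, hKm1, hKmB⟩ : ∃ Km : ℝ, 1 ≤ Km ∧ ∀ pr ∈ Y ×ˢ Y, g pr ≤ Km := by
      have hne : ((Y ×ˢ Y).image g).Nonempty :=
        Finset.Nonempty.image ⟨(y₀, y₀), Finset.mem_product.2 ⟨hy₀, hy₀⟩⟩ g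
      exact ⟨max (((Y ×ˢ Y).image g).max' hne) 1, le_max_right _ _,
        fun pr hpr => le_trans (Finset.le_max' _ _ (Finset.mem_image_of_mem g hpr))
          (le_max_left _ _)⟩
    have hKm0 : (0:ℝ) < Km := by linarith
    have hlogKm : 0 ≤ Real.log Km := Real.log_nonneg hKm1
    obtain ⟨L, hL1, hLge⟩ : ∃ L : ℝ, 1 ≤ L ∧ 2*Real.log Km + 2*A*B + 2*G + 2*B ≤ L :=
      ⟨max (2*Real.log Km + 2*A*B + 2*G + 2*B) 1, le_max_right _ _, le_max_left _ _⟩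
    have hL0 : (0:ℝ) < L := by linarith
    obtain ⟨s, hsdef⟩ : ∃ s : ℝ, s = 1 - Real.exp (-L) := ⟨_, rfl⟩
    have hexpL : Real.exp (-L) = 1 - s := by rw [hsdef]; ring
    have hexppos : 0 < Real.exp (-L) := Real.exp_pos _
    have hs2 : s < 1 := by rw [hsdef]; linarith
    have hs1 : 1/2 ≤ s := by
      have h1 : Real.exp (-L) ≤ Real.exp (-1) := Real.exp_le_exp.2 (by linarith)
      have h3 : (2:ℝ) ≤ Real.exp 1 := by
        have := Real.add_one_le_exp 1
        linarith
      have h2 : Real.exp (-1) ≤ 1/2 := by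
        rw [Real.exp_neg]
        have := inv_anti₀ (by norm_num : (0:ℝ) < 2) h3
        simpa using this
      rw [hsdef]; linarith
    have hs0 : (0:ℝ) < s := by linarith
    have h1s : (0:ℝ) < 1 - s := by linarith
    -- points inside C
    have hPC : ∀ z ∈ Y, o + s • (z - o) ∈ C := fun z hz =>
      combo_mem hconv hopen ho (hYcl z hz) hs0.le hs2
    have hPne : ∀ z ∈ Y, ∀ z' ∈ Y, z ≠ z' → o + s • (z - o) ≠ o + s • (z' - o) := by
      intro z _ z' _ hzz' h
      apply hzz'
      have h2 : s • (z - o) = s • (z' - o) := by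
        have := h
        rwa [add_right_inj] at this
      have h3 := smul_right_injective (EuclideanSpace ℝ (Fin n)) hs0.ne' h2
      rwa [sub_left_inj] at h3
    obtain ⟨ρ, hρdef⟩ : ∃ ρ : ℝ, ρ = A*((1/2)*L + G) + B := ⟨_, rfl⟩
    have hρ : 0 < ρ := by
      rw [hρdef]
      have h1 : (1/2:ℝ) ≤ (1/2)*L + G := by linarith
      have h2 : (1:ℝ)*(1/2) ≤ A*((1/2)*L + G) := mul_le_mul hA h1 (by norm_num) (by linarith)
      linarith
    -- upper bound on ν (f (P z) - f o)
    have hup : ∀ z ∈ Y, ν (f (o + s • (z - o)) - f o) ≤ ρ := by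
      intro z hz
      have hd := baseBound hconv hopen hbdd ho hr hRpos hball hRC (hYfr z hz) hs1 hs2
      have hc1 : (0:ℝ) < 1 + 4*R/r := by linarith
      have harg : (1 + 4*R/r) * (1 + 2/(1-s)) ≤ (3*(1 + 4*R/r)) * Real.exp L := by
        have h2 : 1 + 2/(1-s) ≤ 3/(1-s) := by
          have h4 : 1 ≤ 1/(1-s) := by rw [le_div_iff₀ h1s]; linarith
          have e : 3/(1-s) = 1/(1-s) + 2/(1-s) := by ring
          linarith
        have h3 : 3/(1-s) = 3 * Real.exp L := by
          rw [← hexpL, Real.exp_neg]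
          field_simp
        calc (1 + 4*R/r) * (1 + 2/(1-s)) ≤ (1 + 4*R/r) * (3/(1-s)) :=
              mul_le_mul_of_nonneg_left h2 hc1.le
        _ = (3*(1 + 4*R/r)) * Real.exp L := by rw [h3]; ring
      have hlog2 := Real.log_le_log (by positivity) harg
      rw [Real.log_mul (by positivity) (Real.exp_ne_zero L), Real.log_exp] at hlog2
      have hdist : hilbertDist C o (o + s • (z - o)) ≤ (1/2)*L + G := by
        have hstep : (1/2) * Real.log ((1 + 4*R/r) * (1 + 2/(1-s))) ≤ (1/2)*L + G := by
          linarith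
        linarith [hd, hstep]
      have hqiu := (hqi o ho (o + s • (z - o)) (hPC z hz)).2
      have h5 : ν (f o - f (o + s • (z - o))) ≤ ρ := by
        rw [hρdef]
        calc ν (f o - f (o + s • (z - o))) ≤ A * hilbertDist C o (o + s • (z - o)) + B := hqiu
        _ ≤ A*((1/2)*L + G) + B := by
            have := mul_le_mul_of_nonneg_left hdist hA0.le
            linarith
      have h6 : ν (f (o + s • (z - o)) - f o) = ν (f o - f (o + s • (z - o))) := by
        rw [← neg_sub (f o) (f (o + s • (z - o)))]
        exact hν.neg' _
      rw [h6]
      exact h5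
    -- lower bound on pair distances
    have hlow : ∀ z ∈ Y, ∀ z' ∈ Y, z ≠ z' →
        L - Real.log Km ≤ hilbertDist C (o + s • (z - o)) (o + s • (z' - o)) := by
      intro z hz z' hz' hzz'
      have hcond : z ∈ frontier C ∧ z' ∈ frontier C ∧ z ≠ z' ∧
          ¬ segment ℝ z z' ⊆ frontier C :=
        ⟨hYfr z hz, hYfr z' hz', hzz', hXseg z (hYX hz) z' (hYX hz') hzz'⟩
      have hgval : g (z, z') = (pairBound hconv hopen ho hcond.1 hcond.2.1 hcond.2.2.1
          hcond.2.2.2).choose := by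
        rw [hgdef]
        exact dif_pos hcond
      obtain ⟨hKp1, hKpB⟩ := (pairBound hconv hopen ho hcond.1 hcond.2.1 hcond.2.2.1
          hcond.2.2.2).choose_spec
      have hKpB2 := hKpB s hs1 hs2
      have hKpKm : (pairBound hconv hopen ho hcond.1 hcond.2.1 hcond.2.2.1
          hcond.2.2.2).choose ≤ Km := by
        rw [← hgval]
        exact hKmB (z, z') (Finset.mem_product.2 ⟨hz, hz'⟩)
      have hδ : (0:ℝ) < (1-s)*Km := mul_pos h1s hKm0
      obtain ⟨hS0, hS1, hbA, hbB, hinf, hsup⟩ := chord_props hopen hbdd (hPC z hz)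
        (hPC z' hz') (hPne z hz z' hz' hzz')
      have hSne : {t : ℝ | (o + s • (z - o)) + t • ((o + s • (z' - o)) - (o + s • (z - o)))
          ∈ C}.Nonempty := ⟨0, hS0⟩
      have hainf : -sInf {t : ℝ | (o + s • (z - o)) +
          t • ((o + s • (z' - o)) - (o + s • (z - o))) ∈ C} ≤ (1-s)*Km := by
        have hge : ∀ t ∈ {t : ℝ | (o + s • (z - o)) +
            t • ((o + s • (z' - o)) - (o + s • (z - o))) ∈ C},
            -((1-s)*Km) ≤ t := by
          intro t ht
          have := (hKpB2 t ht).2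
          have hmono : (1-s) * (pairBound hconv hopen ho hcond.1 hcond.2.1 hcond.2.2.1
              hcond.2.2.2).choose ≤ (1-s)*Km := mul_le_mul_of_nonneg_left hKpKm h1s.le
          linarith
        have := le_csInf hSne hge
        linarith
      have hbsup : sSup {t : ℝ | (o + s • (z - o)) +
          t • ((o + s • (z' - o)) - (o + s • (z - o))) ∈ C} - 1 ≤ (1-s)*Km := by
        have hle : ∀ t ∈ {t : ℝ | (o + s • (z - o)) +
            t • ((o + s • (z' - o)) - (o + s • (z - o))) ∈ C},
            t ≤ 1 + (1-s)*Km := by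
          intro t ht
          have := (hKpB2 t ht).1
          have hmono : (1-s) * (pairBound hconv hopen ho hcond.1 hcond.2.1 hcond.2.2.1
              hcond.2.2.2).choose ≤ (1-s)*Km := mul_le_mul_of_nonneg_left hKpKm h1s.le
          linarith
        have := csSup_le hSne hle
        linarith
      have hmain := hilbertDist_ge hopen hbdd (hPC z hz) (hPC z' hz')
        (hPne z hz z' hz' hzz') hδ hδ hainf hbsup
      have hδlog : Real.log ((1-s)*Km) = -L + Real.log Km := by
        rw [← hexpL, Real.log_mul (Real.exp_ne_zero _) (by linarith), Real.log_exp]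
      have heq : (1/2) * Real.log (1/(((1-s)*Km) * ((1-s)*Km))) = L - Real.log Km := by
        rw [show (1:ℝ)/(((1-s)*Km) * ((1-s)*Km)) = (((1-s)*Km) * ((1-s)*Km))⁻¹ from one_div _,
          Real.log_inv, Real.log_mul hδ.ne' hδ.ne', hδlog]
        ring
      linarith [heq ▸ hmain]
    -- normalized images
    have hρinv : (0:ℝ) ≤ ρ⁻¹ := inv_nonneg.2 hρ.le
    set w : (EuclideanSpace ℝ (Fin n)) → (Fin m → ℝ) := fun z =>
      ρ⁻¹ • (f (o + s • (z - o)) - f o) with hwdef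
    have hw1 : ∀ z ∈ Y, ν (w z) ≤ 1 := by
      intro z hz
      rw [hwdef]
      simp only
      rw [hν.2.2.1, abs_of_nonneg hρinv]
      calc ρ⁻¹ * ν (f (o + s • (z - o)) - f o) ≤ ρ⁻¹ * ρ :=
            mul_le_mul_of_nonneg_left (hup z hz) hρinv
      _ = 1 := inv_mul_cancel₀ hρ.ne'
    have hwsub : ∀ z z', w z - w z' = ρ⁻¹ • (f (o + s • (z - o)) - f (o + s • (z' - o))) := by
      intro z z'
      rw [hwdef]
      simp only
      rw [← smul_sub]
      congr 1
      abel
    have hwsep : ∀ z ∈ Y, ∀ z' ∈ Y, z ≠ z' → ε ≤ ν (w z - w z') := by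
      intro z hz z' hz' hzz'
      have hd := hlow z hz z' hz' hzz'
      have hqil := (hqi (o + s • (z - o)) (hPC z hz) (o + s • (z' - o)) (hPC z' hz')).1
      have hcore : ρ * ε ≤ (1/A)*(L - Real.log Km) - B := by
        have hh : A*B + B ≤ L/2 - Real.log Km - G := by linarith
        have hh2 : A*(A*B + B) ≤ A*(L/2 - Real.log Km - G) :=
          mul_le_mul_of_nonneg_left hh hA0.le
        have haB : (0:ℝ) ≤ B*(A-1) := mul_nonneg hB (by linarith)
        have h3 : ρ ≤ A*(L - Real.log Km) - A*A*B := by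
          rw [hρdef]; nlinarith [hh2, haB]
        have h4 : ρ * ε = ρ/(A*A) := by rw [hεdef]; ring
        have h5 : ρ/(A*A) ≤ (A*(L - Real.log Km) - A*A*B)/(A*A) := by
          apply div_le_div_of_nonneg_right h3 (by positivity)
        have h6 : (A*(L - Real.log Km) - A*A*B)/(A*A) = (1/A)*(L - Real.log Km) - B := by
          field_simp
        rw [h4]
        rw [h6] at h5
        exact h5
      have hd2 : (1/A)*(L - Real.log Km) - B ≤
          (1/A) * hilbertDist C (o + s • (z - o)) (o + s • (z' - o)) - B := by
        have := mul_le_mul_of_nonneg_left hd (by positivity : (0:ℝ) ≤ 1/A)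
        linarith
      have hν2 : ρ * ε ≤ ν (f (o + s • (z - o)) - f (o + s • (z' - o))) :=
        le_trans hcore (le_trans hd2 hqil)
      rw [hwsub z z', hν.2.2.1, abs_of_nonneg hρinv]
      calc ε = ρ⁻¹ * (ρ * ε) := by field_simp
      _ ≤ ρ⁻¹ * ν (f (o + s • (z - o)) - f (o + s • (z' - o))) :=
          mul_le_mul_of_nonneg_left hν2 hρinv
    -- injectivity and packing
    have hinj : Set.InjOn w ↑Y := by
      intro z hz z' hz' hww
      by_contra hne
      have := hwsep z hz z' hz' hne
      rw [hww] at this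
      simp only [sub_self] at this
      rw [hν.zero'] at this
      linarith
    have hcard : Y.card = (Y.image w).card := (Finset.card_image_of_injOn hinj).symm
    have hpack := hN₀ (Y.image w) ?_ ?_
    · rw [hcard]
      exact le_trans hpack (le_max_left _ _)
    · intro wv hwv
      obtain ⟨z, hz, rfl⟩ := Finset.mem_image.1 hwv
      exact hw1 z hz
    · intro wv hwv wv' hwv' hne
      obtain ⟨z, hz, rfl⟩ := Finset.mem_image.1 hwv
      obtain ⟨z', hz', rfl⟩ := Finset.mem_image.1 hwv'
      have hzz' : z ≠ z' := fun h => hne (by rw [h])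
      exact hwsep z hz z' hz' hzz'
  have hXfin : X.Finite := by
    by_contra hinf
    obtain ⟨Y, hYX, hYcard⟩ := Set.Infinite.exists_subset_card_eq hinf (max N₀ 1 + 1)
    have := key Y hYX
    omega
  refine ⟨hXfin, ?_⟩
  rw [Set.ncard_eq_toFinset_card X hXfin]
  exact key hXfin.toFinset (by simp)
end

section
/- Let C ⊂ ℝ^n be a bounded open convex set. Suppose there is an integer N such that every subset X ⊂ ∂C with the property that for all distinct x, y ∈ X the segment [x, y] is not contained in ∂C satisfies Card(X) ≤ N. Then C is the interior of a convex polytope (the convex hull of finitely many points). -/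
open Set Filter Topology

section Helpers

variable {E : Type*} [NormedAddCommGroup E] [NormedSpace ℝ E]

/-- If `1 < t`, then `x` lies in the open segment from `y` to `lineMap y x t`. -/
private lemma mem_openSegment_lineMap (y x : E) {t : ℝ} (ht : 1 < t) :
    x ∈ openSegment ℝ y (AffineMap.lineMap y x t) := by
  have ht0 : (0:ℝ) < t := lt_trans one_pos ht
  rw [openSegment_eq_image_lineMap]
  refine ⟨1/t, ⟨by positivity, by rw [div_lt_one ht0]; exact ht⟩, ?_⟩
  rw [AffineMap.lineMap_apply_module', AffineMap.lineMap_apply_module',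
    add_sub_cancel_right, smul_smul, one_div_mul_cancel (ne_of_gt ht0), one_smul,
    sub_add_cancel]

/-- From a point of an open set, one can extend the segment from any point `y` a bit further
while staying in the open set. -/
private lemma extend_open {U : Set E} (hU : IsOpen U) {x : E} (hx : x ∈ U) (y : E) :
    ∃ z ∈ U, x ∈ openSegment ℝ y z := by
  have hc : Continuous (fun t : ℝ => AffineMap.lineMap y x t) := AffineMap.lineMap_continuous
  have h1 : (fun t : ℝ => AffineMap.lineMap y x t) ⁻¹' U ∈ 𝓝 (1:ℝ) := by
    apply hc.continuousAt.preimage_mem_nhds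
    apply hU.mem_nhds
    simpa using hx
  have h2 : (fun t : ℝ => AffineMap.lineMap y x t) ⁻¹' U ∈ 𝓝[>] (1:ℝ) :=
    nhdsWithin_le_nhds h1
  obtain ⟨t, htU, ht⟩ := Filter.nonempty_of_mem (Filter.inter_mem h2 self_mem_nhdsWithin)
  exact ⟨_, htU, mem_openSegment_lineMap y x ht⟩

/-- Every nonempty convex set in a finite-dimensional space has a "pivot" point: a relative
interior point, through which every segment from a point of the set can be extended within
the set. -/
private lemma exists_pivot [FiniteDimensional ℝ E] {F : Set E} (hFc : Convex ℝ F)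
    (hFne : F.Nonempty) :
    ∃ x ∈ F, ∀ y ∈ F, ∃ z ∈ F, x ∈ openSegment ℝ y z := by
  obtain ⟨x, hx⟩ := hFne.intrinsicInterior hFc
  have hxF : x ∈ F := intrinsicInterior_subset hx
  rw [mem_intrinsicInterior] at hx
  obtain ⟨x', hx', hx'eq⟩ := hx
  refine ⟨x, hxF, ?_⟩
  intro y hy
  have hyA : y ∈ affineSpan ℝ F := subset_affineSpan ℝ F hy
  set γ : ℝ → affineSpan ℝ F :=
    fun t => ⟨AffineMap.lineMap y x t, AffineMap.lineMap_mem t hyA (hx'eq ▸ x'.2)⟩ with hγ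
  have hγc : Continuous γ := Continuous.subtype_mk AffineMap.lineMap_continuous _
  have hγ1 : γ 1 ∈ interior ((↑) ⁻¹' F : Set <| affineSpan ℝ F) := by
    have : γ 1 = x' := by
      apply Subtype.ext
      simp [hγ, AffineMap.lineMap_apply_one, hx'eq]
    rw [this]; exact hx'
  have h1 : γ ⁻¹' (interior ((↑) ⁻¹' F : Set <| affineSpan ℝ F)) ∈ 𝓝 (1:ℝ) :=
    hγc.continuousAt.preimage_mem_nhds (isOpen_interior.mem_nhds hγ1)
  have h2 : γ ⁻¹' (interior ((↑) ⁻¹' F : Set <| affineSpan ℝ F)) ∈ 𝓝[>] (1:ℝ) :=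
    nhdsWithin_le_nhds h1
  obtain ⟨t, htU, ht⟩ := Filter.nonempty_of_mem (Filter.inter_mem h2 self_mem_nhdsWithin)
  refine ⟨AffineMap.lineMap y x t, ?_, mem_openSegment_lineMap y x ht⟩
  have ht2 : γ t ∈ ((↑) ⁻¹' F : Set <| affineSpan ℝ F) := interior_subset htU
  simpa [hγ] using ht2

end Helpers

/-- Let `C ⊆ ℝⁿ` be a bounded open convex set. If there is an integer `N`
bounding the cardinality of every subset `X ⊆ ∂C` such that for all distinct `x, y ∈ X` the
segment `[x, y]` is not contained in `∂C`, then `C` is the interior of a convex polytope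
(the convex hull of finitely many points). -/
theorem polytope_of_card_bound {n : ℕ} (C : Set (EuclideanSpace ℝ (Fin n)))
    (hconv : Convex ℝ C) (hopen : IsOpen C) (hbdd : Bornology.IsBounded C)
    (N : ℕ)
    (hN : ∀ X : Set (EuclideanSpace ℝ (Fin n)), X ⊆ frontier C →
      (∀ x ∈ X, ∀ y ∈ X, x ≠ y → ¬ segment ℝ x y ⊆ frontier C) →
      X.Finite ∧ X.ncard ≤ N) :
    ∃ V : Finset (EuclideanSpace ℝ (Fin n)),
      C = interior (convexHull ℝ (V : Set (EuclideanSpace ℝ (Fin n)))) := by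
  classical
  rcases C.eq_empty_or_nonempty with rfl | hCne
  · exact ⟨∅, by simp⟩
  set K := closure C with hK
  have hKconv : Convex ℝ K := hconv.closure
  have hKcl : IsClosed K := isClosed_closure
  have hKcomp : IsCompact K := Metric.isCompact_of_isClosed_isBounded hKcl hbdd.closure
  have hCK : C ⊆ K := subset_closure
  have hfr : frontier C = K \ C := by rw [frontier, hopen.interior_eq]
  have hfrK : frontier C ⊆ K := by rw [hfr]; exact diff_subset
  -- the notion of a (nonempty proper) face of K
  set FaceP : Set (EuclideanSpace ℝ (Fin n)) → Prop :=
    fun F => F.Nonempty ∧ Convex ℝ F ∧ IsExtreme ℝ K F ∧ F ⊆ frontier C with hFaceP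
  -- exposed faces at boundary points
  have hexp : ∀ w ∈ frontier C, ∃ (f : EuclideanSpace ℝ (Fin n) →L[ℝ] ℝ) (c : ℝ),
      (∀ a ∈ C, f a < c) ∧ (∀ a ∈ K, f a ≤ c) ∧
      FaceP (K ∩ {y | f y = c}) ∧ w ∈ K ∩ {y | f y = c} := by
    intro w hw
    have hwK : w ∈ K := hfrK hw
    have hwC : w ∉ C := by rw [hfr] at hw; exact hw.2
    obtain ⟨f, hf⟩ := geometric_hahn_banach_open_point hconv hopen hwC
    have hKle : ∀ a ∈ K, f a ≤ f w := by
      intro a ha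
      exact closure_minimal (fun b hb => (hf b hb).le)
        (isClosed_le f.continuous continuous_const) ha
    have hext : IsExtreme ℝ K (K ∩ {y | f y = f w}) := by
      refine ⟨inter_subset_left, ?_⟩
      rintro x₁ hx₁ x₂ hx₂ x ⟨hxK, hxf⟩ hseg
      obtain ⟨a, b, ha, hb, hab, hx⟩ := hseg
      have h1 : f x₁ ≤ f w := hKle _ hx₁
      have h2 : f x₂ ≤ f w := hKle _ hx₂
      have h3 : a * f x₁ + b * f x₂ = f w := by
        rw [← hxf, ← hx]; simp [map_add, map_smul, smul_eq_mul]
      have key : ∀ p q u v : ℝ, 0 < p → 0 ≤ q → p + q = 1 → u ≤ f w → v ≤ f w →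
          p * u + q * v = f w → u = f w := by
        intro p q u v hp hq hpq hu hv huv
        by_contra hne
        have hu' : u < f w := lt_of_le_of_ne hu hne
        have e1 : p * u < p * f w := mul_lt_mul_of_pos_left hu' hp
        have e2 : q * v ≤ q * f w := mul_le_mul_of_nonneg_left hv hq
        have e3 : p * f w + q * f w = f w := by rw [← add_mul, hpq, one_mul]
        linarith
      exact ⟨hx₁, key a b _ _ ha hb.le hab h1 h2 h3⟩
    refine ⟨f, f w, hf, hKle, ⟨⟨w, hwK, rfl⟩, ?_, hext, ?_⟩, hwK, rfl⟩
    · exact hKconv.inter (convex_hyperplane (IsLinearMap.mk f.map_add f.map_smul) (f w))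
    · rintro y ⟨hyK, hyf⟩
      rw [hfr]
      exact ⟨hyK, fun hyC => absurd hyf (ne_of_lt (hf y hyC))⟩
  -- Zorn: every face is contained in a maximal face
  have hchainU : ∀ c ⊆ {F | FaceP F}, IsChain (· ⊆ ·) c → c.Nonempty →
      ∃ ub ∈ {F | FaceP F}, ∀ s ∈ c, s ⊆ ub := by
    intro c hcS hchain hcne
    refine ⟨⋃₀ c, ?_, fun s hs => subset_sUnion_of_mem hs⟩
    obtain ⟨F₁, hF₁⟩ := hcne
    refine ⟨(hcS hF₁).1.mono (subset_sUnion_of_mem hF₁), ?_, ?_, ?_⟩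
    · -- convex
      intro x hx y hy a b ha hb hab
      obtain ⟨Fx, hFx, hxF⟩ := hx
      obtain ⟨Fy, hFy, hyF⟩ := hy
      rcases hchain.total hFx hFy with h | h
      · exact subset_sUnion_of_mem hFy ((hcS hFy).2.1 (h hxF) hyF ha hb hab)
      · exact subset_sUnion_of_mem hFx ((hcS hFx).2.1 hxF (h hyF) ha hb hab)
    · -- extreme
      refine ⟨sUnion_subset fun F hF => (hcS hF).2.2.1.1, ?_⟩
      intro x₁ hx₁ x₂ hx₂ x hx hseg
      obtain ⟨F, hF, hxF⟩ := hx
      have h1 := (hcS hF).2.2.1.2 hx₁ hx₂ hxF hseg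
      exact subset_sUnion_of_mem hF h1
    · exact sUnion_subset fun F hF => (hcS hF).2.2.2
  have hzorn : ∀ F₀, FaceP F₀ → ∃ F, F₀ ⊆ F ∧ Maximal FaceP F := by
    intro F₀ h₀
    obtain ⟨m, hsub, hmax⟩ := zorn_subset_nonempty {F | FaceP F} hchainU F₀ h₀
    exact ⟨m, hsub, hmax⟩
  set M : Set (Set (EuclideanSpace ℝ (Fin n))) := {F | Maximal FaceP F} with hM
  -- pivot points
  have hpvt : ∀ F : Set (EuclideanSpace ℝ (Fin n)), ∃ x : EuclideanSpace ℝ (Fin n), FaceP F →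
      x ∈ F ∧ ∀ y ∈ F, ∃ z ∈ F, x ∈ openSegment ℝ y z := by
    intro F
    by_cases h : FaceP F
    · obtain ⟨x, hx1, hx2⟩ := exists_pivot h.2.1 h.1
      exact ⟨x, fun _ => ⟨hx1, hx2⟩⟩
    · exact ⟨0, fun h' => absurd h' h⟩
  choose pv hpv using hpvt
  -- key lemma: an extreme set containing the pivot of a face contains the whole face
  have hKL : ∀ F, FaceP F → ∀ Ex : Set (EuclideanSpace ℝ (Fin n)), IsExtreme ℝ K Ex → pv F ∈ Ex → F ⊆ Ex := by
    intro F hF Ex hEx hpin y hy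
    obtain ⟨z, hz, hseg⟩ := (hpv F hF).2 y hy
    exact (hEx.2 (hF.2.2.1.1 hy) (hF.2.2.1.1 hz) hpin hseg)
  have hpvF : ∀ F, FaceP F → pv F ∈ frontier C := fun F hF => hF.2.2.2 (hpv F hF).1
  -- pivots of distinct maximal faces are "independent"
  have hind : ∀ F ∈ M, ∀ G ∈ M, pv F ≠ pv G → ¬ segment ℝ (pv F) (pv G) ⊆ frontier C := by
    intro F hF G hG hne hsub
    have hFG : F ≠ G := fun h => hne (by rw [h])
    have hmid : (1/2 : ℝ) • pv F + (1/2 : ℝ) • pv G ∈ segment ℝ (pv F) (pv G) :=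
      ⟨1/2, 1/2, by norm_num, by norm_num, by norm_num, rfl⟩
    obtain ⟨f, c, hfC, hfK, hFw, hwFw⟩ := hexp _ (hsub hmid)
    have h1 : f (pv F) ≤ c := hfK _ (hfrK (hpvF F hF.1))
    have h2 : f (pv G) ≤ c := hfK _ (hfrK (hpvF G hG.1))
    have h3 : (1/2 : ℝ) * f (pv F) + (1/2 : ℝ) * f (pv G) = c := by
      have := hwFw.2
      simpa [map_add, map_smul, smul_eq_mul] using this
    have e1 : f (pv F) = c := by linarith
    have e2 : f (pv G) = c := by linarith
    have hFsub : F ⊆ K ∩ {y | f y = c} :=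
      hKL F hF.1 _ hFw.2.2.1 ⟨hfrK (hpvF F hF.1), e1⟩
    have hGsub : G ⊆ K ∩ {y | f y = c} :=
      hKL G hG.1 _ hFw.2.2.1 ⟨hfrK (hpvF G hG.1), e2⟩
    have hF' : K ∩ {y | f y = c} ⊆ F := hF.2 hFw hFsub
    have hG' : K ∩ {y | f y = c} ⊆ G := hG.2 hFw hGsub
    exact hFG (subset_antisymm (hFsub.trans hG') (hGsub.trans hF'))
  -- M is finite
  have hMfin : M.Finite := by
    have hXfin : (pv '' M).Finite := by
      refine (hN (pv '' M) ?_ ?_).1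
      · rintro _ ⟨F, hF, rfl⟩; exact hpvF F hF.1
      · rintro _ ⟨F, hF, rfl⟩ _ ⟨G, hG, rfl⟩ hne
        exact hind F hF G hG hne
    refine hXfin.of_finite_image ?_
    intro F hF G hG hFG
    have h1 : pv G ∈ F := hFG ▸ (hpv F hF.1).1
    have h2 : pv F ∈ G := hFG ▸ (hpv G hG.1).1
    exact subset_antisymm (hKL F hF.1 G hG.1.2.2.1 h2) (hKL G hG.1 F hF.1.2.2.1 h1)
  -- supporting functionals for maximal faces
  have hfun : ∀ F : Set (EuclideanSpace ℝ (Fin n)), ∃ (f : EuclideanSpace ℝ (Fin n) →L[ℝ] ℝ) (c : ℝ), F ∈ M →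
      (∀ a ∈ C, f a < c) ∧ (∀ a ∈ K, f a ≤ c) ∧ (∀ y ∈ F, f y = c) := by
    intro F
    by_cases hF : F ∈ M
    · obtain ⟨f, c, hfC, hfK, hFw, hwFw⟩ := hexp _ (hpvF F hF.1)
      refine ⟨f, c, fun _ => ⟨hfC, hfK, fun y hy => ?_⟩⟩
      exact (hKL F hF.1 _ hFw.2.2.1 hwFw hy).2
    · exact ⟨0, 1, fun h => absurd h hF⟩
  choose fn ct hfn using hfun
  -- covering of the frontier by the supporting hyperplanes
  have hcov : ∀ w ∈ frontier C, ∃ F ∈ M, fn F w = ct F := by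
    intro w hw
    obtain ⟨f, c, hfC, hfK, hFw, hwFw⟩ := hexp w hw
    obtain ⟨F, hsub, hmax⟩ := hzorn _ hFw
    exact ⟨F, hmax, (hfn F hmax).2.2 w (hsub hwFw)⟩
  -- K equals the intersection of the halfspaces
  have hKP : ∀ z : EuclideanSpace ℝ (Fin n), (∀ F ∈ M, fn F z ≤ ct F) → z ∈ K := by
    intro z hz
    by_contra hzK
    obtain ⟨c₀, hc₀⟩ := hCne
    have hCint : C ⊆ interior K := interior_maximal hCK hopen
    have hconn : IsPreconnected (segment ℝ c₀ z) := (convex_segment c₀ z).isPreconnected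
    have hfrne : (segment ℝ c₀ z ∩ frontier K).Nonempty := by
      by_contra h
      rw [not_nonempty_iff_eq_empty] at h
      have hsub2 : segment ℝ c₀ z ⊆ Kᶜ ∪ interior K := by
        intro x hx
        by_cases hxK : x ∈ K
        · right
          have hnf : x ∉ frontier K := fun hf => (by
            have hmem : x ∈ segment ℝ c₀ z ∩ frontier K := ⟨hx, hf⟩
            simp [h] at hmem)
          rw [frontier, hKcl.closure_eq] at hnf
          simpa [hxK] using hnf
        · exact Or.inl hxK
      obtain ⟨t, ht, htc, hti⟩ := hconn _ _ (isOpen_compl_iff.mpr hKcl) isOpen_interior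
        hsub2 ⟨z, right_mem_segment ℝ c₀ z, hzK⟩
        ⟨c₀, left_mem_segment ℝ c₀ z, hCint hc₀⟩
      exact htc (interior_subset hti)
    obtain ⟨w, hwseg, hwfr⟩ := hfrne
    have hwK : w ∈ K := hKcl.frontier_subset hwfr
    have hwfrC : w ∈ frontier C := by
      rw [hfr]
      refine ⟨hwK, fun hwC => ?_⟩
      have : w ∈ interior K := hCint hwC
      rw [frontier, hKcl.closure_eq] at hwfr
      exact hwfr.2 this
    obtain ⟨F, hFM, hfw⟩ := hcov w hwfrC
    obtain ⟨a, b, ha, hb, hab, hw⟩ := hwseg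
    have e1 : fn F c₀ < ct F := (hfn F hFM).1 c₀ hc₀
    have e2 : fn F z ≤ ct F := hz F hFM
    have e3 : a * fn F c₀ + b * fn F z = ct F := by
      rw [← hfw, ← hw]; simp [map_add, map_smul, smul_eq_mul]
    have ha0 : a = 0 := by
      by_contra hne
      have ha' : 0 < a := lt_of_le_of_ne ha (Ne.symm hne)
      have e4 : a * fn F c₀ < a * ct F := mul_lt_mul_of_pos_left e1 ha'
      have e5 : b * fn F z ≤ b * ct F := mul_le_mul_of_nonneg_left e2 hb
      have e6 : a * ct F + b * ct F = ct F := by rw [← add_mul, hab, one_mul]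
      linarith
    have hb1 : b = 1 := by linarith
    rw [ha0, hb1, zero_smul, one_smul, zero_add] at hw
    rw [hw] at hzK
    exact hzK hwK
  -- extreme points of K are finite
  have hEP : (K.extremePoints ℝ).Finite := by
    have himg : Set.InjOn (fun x => {F | F ∈ M ∧ fn F x = ct F}) (K.extremePoints ℝ) := by
      intro x hx y hy hxy
      by_contra hne
      have hev : ∀ F ∈ M, ∀ᶠ ε : ℝ in 𝓝[>] (0:ℝ),
          fn F ((1+ε) • x - ε • y) ≤ ct F := by
        intro F hF
        have hx' : fn F x ≤ ct F := (hfn F hF).2.1 x hx.1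
        rcases eq_or_lt_of_le hx' with he | hl
        · have hyF : fn F y = ct F := by
            have h1 : F ∈ (fun x => {F | F ∈ M ∧ fn F x = ct F}) x := ⟨hF, he⟩
            rw [hxy] at h1
            exact h1.2
          filter_upwards with ε
          have : fn F ((1+ε) • x - ε • y) = (1+ε) * fn F x - ε * fn F y := by
            simp [map_sub, map_smul, smul_eq_mul]
          rw [this, he, hyF]; ring_nf; exact le_refl _
        · have heq : ∀ ε : ℝ, fn F ((1+ε) • x - ε • y)
              = fn F x + ε * (fn F x - fn F y) := by
            intro ε
            simp [map_sub, map_smul, smul_eq_mul]; ring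
          have htend : Filter.Tendsto (fun ε : ℝ => fn F x + ε * (fn F x - fn F y))
              (𝓝 0) (𝓝 (fn F x)) := by
            have : Filter.Tendsto (fun ε : ℝ => fn F x + ε * (fn F x - fn F y))
                (𝓝 0) (𝓝 (fn F x + 0 * (fn F x - fn F y))) := by
              apply Filter.Tendsto.add tendsto_const_nhds
              exact (continuous_id.mul continuous_const).tendsto 0
            simpa using this
          have hev1 := (htend.eventually_lt_const hl).mono (fun ε hε => hε.le)
          have h2 : ∀ᶠ ε : ℝ in 𝓝[>] (0:ℝ),
              fn F x + ε * (fn F x - fn F y) ≤ ct F := hev1.filter_mono nhdsWithin_le_nhds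
          filter_upwards [h2] with ε hε
          rw [heq ε]; exact hε
      have hev2 : ∀ᶠ ε : ℝ in 𝓝[>] (0:ℝ),
          ∀ F ∈ M, fn F ((1+ε) • x - ε • y) ≤ ct F := (hMfin.eventually_all).2 hev
      obtain ⟨ε, hεP, hε0⟩ := (hev2.and self_mem_nhdsWithin).exists
      have hε0' : (0:ℝ) < ε := hε0
      have h1ε : (0:ℝ) < 1 + ε := by linarith
      have hzK : (1+ε) • x - ε • y ∈ K := hKP _ hεP
      have hyK : y ∈ K := hy.1
      have hseg : x ∈ openSegment ℝ ((1+ε) • x - ε • y) y := by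
        refine ⟨1/(1+ε), ε/(1+ε), by positivity, by positivity, ?_, ?_⟩
        · field_simp
        · match_scalars <;> field_simp <;> ring
      obtain ⟨_, h2⟩ := (mem_extremePoints.1 hx).2 _ hzK _ hyK hseg
      exact hne h2.symm
    have himg2 : ((fun x => {F | F ∈ M ∧ fn F x = ct F}) '' (K.extremePoints ℝ)).Finite := by
      apply hMfin.finite_subsets.subset
      rintro _ ⟨x, _, rfl⟩
      exact fun F hF => hF.1
    exact himg2.of_finite_image himg
  -- conclude via Krein–Milman
  have hKM : closure (convexHull ℝ (K.extremePoints ℝ)) = K :=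
    closure_convexHull_extremePoints hKcomp hKconv
  have hhull : convexHull ℝ (K.extremePoints ℝ) = K := by
    calc convexHull ℝ (K.extremePoints ℝ)
        = closure (convexHull ℝ (K.extremePoints ℝ)) :=
          ((hEP.isCompact_convexHull ℝ).isClosed.closure_eq).symm
      _ = K := hKM
  refine ⟨hEP.toFinset, ?_⟩
  rw [hEP.coe_toFinset, hhull]
  apply subset_antisymm
  · exact interior_maximal hCK hopen
  · intro x hx
    obtain ⟨c₀, hc₀⟩ := hCne
    obtain ⟨z, hz, hseg⟩ := extend_open isOpen_interior hx c₀
    have hx' : x ∈ interior C :=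
      hconv.openSegment_interior_closure_subset_interior
        (by rw [hopen.interior_eq]; exact hc₀) (interior_subset hz) hseg
    rwa [hopen.interior_eq] at hx'
end

section
/- Let H_n ⊂ ℝ^{n+1} be the standard n-simplex and let W_n = {x ∈ ℝ^{n+1} : x_1 + ⋯ + x_{n+1} = 0}. Define Φ_n on the relative interior of H_n by Φ_n(x_1,…,x_{n+1}) = (ln(x_1/g), …, ln(x_{n+1}/g)) where g = (x_1⋯x_{n+1})^{1/(n+1)} is the geometric mean of the coordinates. Then Φ_n is a bijection from the relative interior of H_n onto W_n, and there exists a norm ‖·‖ on the n-dimensional vector space W_n, whose unit ball is a centrally symmetric convex polytope, such that for all x, y in the relative interior of H_n, d_{H_n}(x, y) = ‖Φ_n(x) − Φ_n(y)‖. -/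
open Classical

/-- `ν` is a norm on the set `W` (a linear subspace) of the real vector space `E`. -/
def IsNormOnSet {E : Type*} [AddCommGroup E] [Module ℝ E] (W : Set E) (ν : E → ℝ) : Prop :=
  (∀ x ∈ W, 0 ≤ ν x) ∧ (∀ x ∈ W, ν x = 0 → x = 0) ∧
    (∀ (c : ℝ), ∀ x ∈ W, ν (c • x) = |c| * ν x) ∧
    ∀ x ∈ W, ∀ y ∈ W, ν (x + y) ≤ ν x + ν y


open Finset in
lemma my_sup'_neg {ι : Type*} {s : Finset ι} (H : s.Nonempty) (v : ι → ℝ) :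
    s.sup' H (fun i => -(v i)) = -(s.inf' H v) := by
  apply le_antisymm
  · exact Finset.sup'_le H _ fun i hi => neg_le_neg (Finset.inf'_le _ hi)
  · obtain ⟨i, hi, h⟩ := Finset.exists_mem_eq_inf' H v
    rw [h]
    exact Finset.le_sup' (fun i => -(v i)) hi

lemma my_inf'_neg {ι : Type*} {s : Finset ι} (H : s.Nonempty) (v : ι → ℝ) :
    s.inf' H (fun i => -(v i)) = -(s.sup' H v) := by
  have := my_sup'_neg H (fun i => -(v i))
  simp only [neg_neg] at this
  linarith

lemma my_sup'_add_const {ι : Type*} {s : Finset ι} (H : s.Nonempty) (v : ι → ℝ) (c : ℝ) :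
    s.sup' H (fun i => v i + c) = s.sup' H v + c := by
  have h := Finset.comp_sup'_eq_sup'_comp (γ := ℝ) H (f := v) (fun x => x + c)
    (fun x y => (max_add_add_right x y c).symm)
  simpa [Function.comp] using h.symm

lemma my_inf'_add_const {ι : Type*} {s : Finset ι} (H : s.Nonempty) (v : ι → ℝ) (c : ℝ) :
    s.inf' H (fun i => v i + c) = s.inf' H v + c := by
  have h1 := my_sup'_neg H (fun i => v i + c)
  have h2 := my_sup'_add_const H (fun i => -(v i)) (-c)
  have h3 := my_sup'_neg H v
  have : (fun i => -(v i + c)) = fun i => -(v i) + -(c) := by funext i; ring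
  rw [this] at h1
  linarith

lemma my_sup'_mul_nonneg {ι : Type*} {s : Finset ι} (H : s.Nonempty) (v : ι → ℝ) {c : ℝ}
    (hc : 0 ≤ c) : s.sup' H (fun i => c * v i) = c * s.sup' H v := by
  have h := Finset.comp_sup'_eq_sup'_comp (γ := ℝ) H (f := v) (fun x => c * x)
    (fun x y => (monotone_mul_left_of_nonneg hc).map_max)
  simpa [Function.comp] using h.symm

lemma my_inf'_mul_nonneg {ι : Type*} {s : Finset ι} (H : s.Nonempty) (v : ι → ℝ) {c : ℝ}
    (hc : 0 ≤ c) : s.inf' H (fun i => c * v i) = c * s.inf' H v := by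
  have h1 := my_sup'_neg H (fun i => c * v i)
  have h2 := my_sup'_mul_nonneg H (fun i => -(v i)) hc
  have h3 := my_sup'_neg H v
  have : (fun i => c * -(v i)) = fun i => -(c * v i) := by funext i; ring
  rw [this] at h2
  rw [h3, mul_neg] at h2
  linarith

lemma my_sum_apply {n : ℕ} {ι : Type*} (s : Finset ι) (f : ι → EuclideanSpace ℝ (Fin (n+1)))
    (j : Fin (n+1)) : (∑ i ∈ s, f i) j = ∑ i ∈ s, f i j := by
  classical
  induction s using Finset.induction_on with
  | empty => simp
  | insert a t hx ih => rw [Finset.sum_insert hx, Finset.sum_insert hx, PiLp.add_apply, ih]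

lemma my_hull_eq {n : ℕ} :
    (convexHull ℝ (Set.range fun i : Fin (n+1) => EuclideanSpace.single i (1:ℝ))) =
    {x : EuclideanSpace ℝ (Fin (n+1)) | (∀ i, 0 ≤ x i) ∧ ∑ i, x i = 1} := by
  apply Set.Subset.antisymm
  · apply convexHull_min
    · rintro _ ⟨i, rfl⟩
      refine ⟨fun j => ?_, ?_⟩
      · simp only [EuclideanSpace.single_apply]
        split <;> norm_num
      · simp [EuclideanSpace.single_apply]
    · intro x hx y hy a b ha hb hab
      have hpt : ∀ i, (a • x + b • y) i = a * x i + b * y i := by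
        intro i
        rw [PiLp.add_apply, PiLp.smul_apply, PiLp.smul_apply, smul_eq_mul, smul_eq_mul]
      refine ⟨fun i => ?_, ?_⟩
      · rw [hpt i]
        exact add_nonneg (mul_nonneg ha (hx.1 i)) (mul_nonneg hb (hy.1 i))
      · simp_rw [hpt, Finset.sum_add_distrib, ← Finset.mul_sum, hx.2, hy.2]
        linarith
  · intro x hx
    have hmem := Finset.centerMass_mem_convexHull (t := Finset.univ) (w := fun i => x i)
      (z := fun i : Fin (n+1) => EuclideanSpace.single i (1:ℝ))
      (fun i _ => hx.1 i) (by rw [hx.2]; norm_num)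
      (fun i _ => Set.mem_range_self i)
    rwa [Finset.centerMass_eq_of_sum_1 _ _ hx.2, show (∑ i, x i • EuclideanSpace.single i (1:ℝ)) = x from ?_] at hmem
    ext j
    rw [my_sum_apply]
    simp only [PiLp.smul_apply, EuclideanSpace.single_apply, smul_eq_mul]
    simp

/-- The hyperplane `∑ x i = 1` as an affine subspace. -/
noncomputable def myHyp (n : ℕ) : AffineSubspace ℝ (EuclideanSpace ℝ (Fin (n+1))) where
  carrier := {x | ∑ i, x i = 1}
  smul_vsub_vadd_mem' := by
    intro c p1 p2 p3 h1 h2 h3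
    simp only [Set.mem_setOf_eq] at *
    have hpt : ∀ j, (c • (p1 -ᵥ p2) +ᵥ p3) j = c * (p1 j - p2 j) + p3 j := by
      intro j
      rw [vadd_eq_add, vsub_eq_sub, PiLp.add_apply, PiLp.smul_apply, PiLp.sub_apply, smul_eq_mul]
    simp_rw [hpt, Finset.sum_add_distrib, ← Finset.mul_sum, Finset.sum_sub_distrib, h1, h2, h3]
    ring

lemma my_span_eq {n : ℕ} :
    (affineSpan ℝ {x : EuclideanSpace ℝ (Fin (n+1)) | (∀ i, 0 ≤ x i) ∧ ∑ i, x i = 1} :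
      Set (EuclideanSpace ℝ (Fin (n+1)))) = {x | ∑ i, x i = 1} := by
  apply Set.Subset.antisymm
  · have h : affineSpan ℝ {x : EuclideanSpace ℝ (Fin (n+1)) | (∀ i, 0 ≤ x i) ∧ ∑ i, x i = 1}
        ≤ myHyp n := affineSpan_le.2 (fun x hx => hx.2)
    exact h
  · intro x hx
    simp only [Set.mem_setOf_eq] at hx
    have h1 : Finset.univ.affineCombination ℝ (fun i : Fin (n+1) => EuclideanSpace.single i (1:ℝ))
        (fun i => x i) ∈ affineSpan ℝ
          (Set.range fun i : Fin (n+1) => EuclideanSpace.single i (1:ℝ)) :=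
      affineCombination_mem_affineSpan hx _
    rw [Finset.univ.affineCombination_eq_linear_combination _ _ hx] at h1
    have hx2 : (∑ i, x i • EuclideanSpace.single i (1:ℝ)) = x := by
      ext j
      rw [my_sum_apply]
      simp only [PiLp.smul_apply, EuclideanSpace.single_apply, smul_eq_mul]
      simp
    rw [hx2] at h1
    refine affineSpan_mono ℝ ?_ h1
    rintro _ ⟨i, rfl⟩
    refine ⟨fun j => ?_, ?_⟩
    · simp only [EuclideanSpace.single_apply]
      split <;> norm_num
    · simp [EuclideanSpace.single_apply]



lemma my_relint {n : ℕ} :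
    intrinsicInterior ℝ {x : EuclideanSpace ℝ (Fin (n+1)) | (∀ i, 0 ≤ x i) ∧ ∑ i, x i = 1} =
    {x : EuclideanSpace ℝ (Fin (n+1)) | (∀ i, 0 < x i) ∧ ∑ i, x i = 1} := by
  set K := {x : EuclideanSpace ℝ (Fin (n+1)) | (∀ i, 0 ≤ x i) ∧ ∑ i, x i = 1} with hK
  have hO : IsOpen {y : EuclideanSpace ℝ (Fin (n+1)) | ∀ i, 0 < y i} := by
    have : {y : EuclideanSpace ℝ (Fin (n+1)) | ∀ i, 0 < y i} =
        ⋂ i, (EuclideanSpace.proj (𝕜 := ℝ) i) ⁻¹' Set.Ioi (0:ℝ) := by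
      ext y; simp [Set.mem_iInter]
    rw [this]
    exact isOpen_iInter_of_finite fun i => isOpen_Ioi.preimage (EuclideanSpace.proj i).continuous
  apply Set.Subset.antisymm
  · rintro _ ⟨y, hy, rfl⟩
    have hyK : (y : EuclideanSpace ℝ (Fin (n+1))) ∈ K := Set.mem_preimage.mp (interior_subset hy)
    refine ⟨fun i => ?_, hyK.2⟩
    by_contra hneg
    have hyi : (y : EuclideanSpace ℝ (Fin (n+1))) i = 0 := le_antisymm (not_lt.1 hneg) (hyK.1 i)
    -- find j with positive coordinate
    have hj : ∃ j, 0 < (y : EuclideanSpace ℝ (Fin (n+1))) j := by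
      by_contra hall
      push_neg at hall
      have hzero : ∀ j, (y : EuclideanSpace ℝ (Fin (n+1))) j = 0 :=
        fun j => le_antisymm (hall j) (hyK.1 j)
      have hs := hyK.2
      rw [Finset.sum_congr rfl fun j _ => hzero j] at hs
      norm_num at hs
    obtain ⟨j, hjpos⟩ := hj
    have hij : j ≠ i := fun h => by rw [h, hyi] at hjpos; exact lt_irrefl _ hjpos
    set x := (y : EuclideanSpace ℝ (Fin (n+1))) with hx
    set v : EuclideanSpace ℝ (Fin (n+1)) :=
      EuclideanSpace.single j (1:ℝ) - EuclideanSpace.single i 1 with hv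
    have hvm : ∀ m, v m = (if m = j then (1:ℝ) else 0) - (if m = i then 1 else 0) := by
      intro m
      rw [hv, PiLp.sub_apply, EuclideanSpace.single_apply, EuclideanSpace.single_apply]
    have hvsum : ∑ m, v m = 0 := by simp [hvm]
    have hmem : ∀ t : ℝ, x + t • v ∈ affineSpan ℝ K := by
      intro t
      have : x + t • v ∈ (affineSpan ℝ K : Set (EuclideanSpace ℝ (Fin (n+1)))) := by
        rw [my_span_eq]
        have hpt : ∀ m, (x + t • v) m = x m + t * v m := by
          intro m; rw [PiLp.add_apply, PiLp.smul_apply, smul_eq_mul]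
        simp only [Set.mem_setOf_eq]
        simp_rw [hpt, Finset.sum_add_distrib, ← Finset.mul_sum, hvsum, hyK.2]
        ring
      exact this
    set u : ℕ → affineSpan ℝ K := fun k => ⟨x + ((k:ℝ)+1)⁻¹ • v, hmem _⟩ with hu
    have htt : Filter.Tendsto (fun k : ℕ => ((k:ℝ)+1)⁻¹) Filter.atTop (nhds 0) := by
      simpa [one_div] using tendsto_one_div_add_atTop_nhds_zero_nat (𝕜 := ℝ)
    have htend : Filter.Tendsto (fun k => (u k : EuclideanSpace ℝ (Fin (n+1)))) Filter.atTop
        (nhds x) := by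
      have := (htt.smul_const v).const_add x
      simpa using this
    have htendu : Filter.Tendsto u Filter.atTop (nhds y) := by
      rw [tendsto_subtype_rng]
      exact htend
    have hev := htendu.eventually (isOpen_interior.eventually_mem hy)
    obtain ⟨k, hk⟩ := hev.exists
    have hkK : (u k : EuclideanSpace ℝ (Fin (n+1))) ∈ K := Set.mem_preimage.mp (interior_subset hk)
    have : (u k : EuclideanSpace ℝ (Fin (n+1))) i = -((k:ℝ)+1)⁻¹ := by
      show (x + ((k:ℝ)+1)⁻¹ • v) i = _
      rw [PiLp.add_apply, PiLp.smul_apply, smul_eq_mul, hvm i, if_neg hij.symm, if_pos rfl, hyi]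
      ring
    have h0 := hkK.1 i
    rw [this] at h0
    have : (0:ℝ) < ((k:ℝ)+1)⁻¹ := by positivity
    linarith
  · intro x hx
    have hxA : x ∈ affineSpan ℝ K := by
      have : x ∈ (affineSpan ℝ K : Set (EuclideanSpace ℝ (Fin (n+1)))) := by
        rw [my_span_eq]; exact hx.2
      exact this
    refine ⟨⟨x, hxA⟩, ?_, rfl⟩
    have hsub : (Subtype.val ⁻¹' {y : EuclideanSpace ℝ (Fin (n+1)) | ∀ i, 0 < y i} :
        Set (affineSpan ℝ K)) ⊆ Subtype.val ⁻¹' K := by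
      rintro ⟨y, hyA⟩ hy
      have hy1 : ∑ i, y i = 1 := by
        have : y ∈ (affineSpan ℝ K : Set (EuclideanSpace ℝ (Fin (n+1)))) := hyA
        rwa [my_span_eq] at this
      exact ⟨fun i => le_of_lt (hy i), hy1⟩
    exact interior_maximal hsub (hO.preimage continuous_subtype_val) hx.1

lemma my_phi_eq {n : ℕ} (x : EuclideanSpace ℝ (Fin (n+1))) (hx : ∀ i, 0 < x i) (i : Fin (n+1)) :
    Real.log (x i / (∏ j, x j) ^ (((n:ℝ)+1)⁻¹)) =
      Real.log (x i) - (∑ j, Real.log (x j)) / ((n:ℝ)+1) := by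
  have hprod : 0 < ∏ j, x j := Finset.prod_pos (fun j _ => hx j)
  rw [Real.log_div (ne_of_gt (hx i)) (by positivity), Real.log_rpow hprod,
    Real.log_prod (fun j _ => ne_of_gt (hx j))]
  ring

lemma my_bijOn {n : ℕ} (Φ : EuclideanSpace ℝ (Fin (n+1)) → EuclideanSpace ℝ (Fin (n+1)))
    (hΦ : ∀ (x : EuclideanSpace ℝ (Fin (n + 1))) (i : Fin (n + 1)),
      Φ x i = Real.log (x i / (∏ j, x j) ^ (((n : ℝ) + 1)⁻¹))) :
    Set.BijOn Φ {x : EuclideanSpace ℝ (Fin (n+1)) | (∀ i, 0 < x i) ∧ ∑ i, x i = 1}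
      {x : EuclideanSpace ℝ (Fin (n+1)) | ∑ i, x i = 0} := by
  have hnn : ((n:ℝ)+1) ≠ 0 := by positivity
  have hΦ' : ∀ (x : EuclideanSpace ℝ (Fin (n+1))), (∀ i, 0 < x i) → ∀ i,
      Φ x i = Real.log (x i) - (∑ j, Real.log (x j)) / ((n:ℝ)+1) := by
    intro x hx i; rw [hΦ, my_phi_eq x hx i]
  refine ⟨?_, ?_, ?_⟩
  · intro x hx
    simp only [Set.mem_setOf_eq]
    simp_rw [hΦ' x hx.1, Finset.sum_sub_distrib, Finset.sum_const, Finset.card_univ,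
      Fintype.card_fin, nsmul_eq_mul]
    push_cast
    field_simp
    ring
  · intro x hx y hy h
    set cx := (∑ j, Real.log (x j)) / ((n:ℝ)+1) with hcx
    set cy := (∑ j, Real.log (y j)) / ((n:ℝ)+1) with hcy
    have key : ∀ i, x i = y i * Real.exp (cx - cy) := by
      intro i
      have h1 : Real.log (x i) = Real.log (y i) + (cx - cy) := by
        have h2 : Φ x i = Φ y i := by rw [h]
        rw [hΦ' x hx.1 i, hΦ' y hy.1 i] at h2
        rw [← hcx, ← hcy] at h2
        linarith
      calc x i = Real.exp (Real.log (x i)) := (Real.exp_log (hx.1 i)).symm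
      _ = Real.exp (Real.log (y i)) * Real.exp (cx - cy) := by rw [h1, Real.exp_add]
      _ = y i * Real.exp (cx - cy) := by rw [Real.exp_log (hy.1 i)]
    have hsum : (1:ℝ) = Real.exp (cx - cy) := by
      have : ∑ i, x i = (∑ i, y i) * Real.exp (cx - cy) := by
        rw [Finset.sum_mul]
        exact Finset.sum_congr rfl fun i _ => key i
      rw [hx.2, hy.2, one_mul] at this
      exact this
    ext i
    rw [key i, ← hsum, mul_one]
  · intro y hy
    simp only [Set.mem_setOf_eq] at hy
    set Z := ∑ j, Real.exp (y j) with hZdef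
    have hZ : 0 < Z := Finset.sum_pos (fun j _ => Real.exp_pos _) Finset.univ_nonempty
    set x : EuclideanSpace ℝ (Fin (n+1)) := WithLp.toLp 2 (fun i => Real.exp (y i) / Z) with hxdef
    have hxpos : ∀ i, 0 < x i := fun i => div_pos (Real.exp_pos _) hZ
    have hxS : x ∈ {x : EuclideanSpace ℝ (Fin (n+1)) | (∀ i, 0 < x i) ∧ ∑ i, x i = 1} := by
      refine ⟨hxpos, ?_⟩
      show ∑ i, Real.exp (y i) / Z = 1
      rw [← Finset.sum_div, ← hZdef, div_self (ne_of_gt hZ)]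
    refine ⟨x, hxS, ?_⟩
    have hlog : ∀ i, Real.log (x i) = y i - Real.log Z := by
      intro i
      show Real.log (Real.exp (y i) / Z) = _
      rw [Real.log_div (Real.exp_ne_zero _) (ne_of_gt hZ), Real.log_exp]
    ext i
    rw [hΦ' x hxpos i]
    rw [hlog i]
    have : ∑ j, Real.log (x j) = -(((n:ℝ)+1) * Real.log Z) := by
      simp_rw [hlog, Finset.sum_sub_distrib, hy, Finset.sum_const, Finset.card_univ,
        Fintype.card_fin, nsmul_eq_mul]
      push_cast
      ring
    rw [this]
    field_simp
    ring

noncomputable def myNu {n : ℕ} (v : EuclideanSpace ℝ (Fin (n+1))) : ℝ :=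
  (Finset.univ.sup' Finset.univ_nonempty (fun i => v i)
   - Finset.univ.inf' Finset.univ_nonempty (fun i => v i)) / 2

lemma my_inf'_le_sup' {n : ℕ} (v : EuclideanSpace ℝ (Fin (n+1))) :
    Finset.univ.inf' Finset.univ_nonempty (fun i => v i) ≤
    Finset.univ.sup' Finset.univ_nonempty (fun i => v i) := by
  classical
  obtain ⟨i⟩ : Nonempty (Fin (n+1)) := inferInstance
  exact le_trans (Finset.inf'_le _ (Finset.mem_univ i)) (Finset.le_sup' _ (Finset.mem_univ i))

lemma my_nu_nonneg {n : ℕ} (v : EuclideanSpace ℝ (Fin (n+1))) : 0 ≤ myNu v := by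
  have := my_inf'_le_sup' v
  unfold myNu
  linarith

lemma my_nu_zero {n : ℕ} (v : EuclideanSpace ℝ (Fin (n+1))) (hv : ∑ i, v i = 0)
    (h : myNu v = 0) : v = 0 := by
  unfold myNu at h
  set M := Finset.univ.sup' Finset.univ_nonempty (fun i => v i) with hM
  set m := Finset.univ.inf' Finset.univ_nonempty (fun i => v i) with hm
  have hMm : M = m := by linarith
  have hconst : ∀ i, v i = m := fun i =>
    le_antisymm (hMm ▸ Finset.le_sup' (fun i => v i) (Finset.mem_univ i))
      (Finset.inf'_le _ (Finset.mem_univ i))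
  have hsum : ((n:ℝ)+1) * m = 0 := by
    rw [← hv, Finset.sum_congr rfl fun i _ => hconst i]
    simp [Finset.card_univ, mul_comm]
  have hm0 : m = 0 := by
    have : ((n:ℝ)+1) ≠ 0 := by positivity
    exact (mul_eq_zero.1 hsum).resolve_left this
  ext i
  rw [hconst i, hm0]
  rfl
lemma my_nu_smul {n : ℕ} (c : ℝ) (v : EuclideanSpace ℝ (Fin (n+1))) :
    myNu (c • v) = |c| * myNu v := by
  have hpt : (fun i => (c • v) i) = fun i => c * v i := by
    funext i; rw [PiLp.smul_apply, smul_eq_mul]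
  unfold myNu
  rw [hpt]
  rcases le_or_gt 0 c with hc | hc
  · rw [my_sup'_mul_nonneg _ _ hc, my_inf'_mul_nonneg _ _ hc, abs_of_nonneg hc]
    ring
  · have hneg : (fun i => c * v i) = fun i => -((-c) * v i) := by funext i; ring
    rw [hneg, my_sup'_neg, my_inf'_neg, my_sup'_mul_nonneg _ _ (by linarith : (0:ℝ) ≤ -c),
      my_inf'_mul_nonneg _ _ (by linarith : (0:ℝ) ≤ -c), abs_of_neg hc]
    ring

lemma my_nu_neg {n : ℕ} (v : EuclideanSpace ℝ (Fin (n+1))) : myNu (-v) = myNu v := by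
  have h := my_nu_smul (-1 : ℝ) v
  simpa using h

lemma my_nu_add {n : ℕ} (u v : EuclideanSpace ℝ (Fin (n+1))) :
    myNu (u + v) ≤ myNu u + myNu v := by
  have hpt : (fun i => (u + v) i) = fun i => u i + v i := by
    funext i; rw [PiLp.add_apply]
  unfold myNu
  rw [hpt]
  have h1 : Finset.univ.sup' Finset.univ_nonempty (fun i => u i + v i) ≤
      Finset.univ.sup' Finset.univ_nonempty (fun i => u i) +
      Finset.univ.sup' Finset.univ_nonempty (fun i => v i) :=
    Finset.sup'_le _ _ fun i hi => add_le_add (Finset.le_sup' _ hi) (Finset.le_sup' _ hi)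
  have h2 : Finset.univ.inf' Finset.univ_nonempty (fun i => u i) +
      Finset.univ.inf' Finset.univ_nonempty (fun i => v i) ≤
      Finset.univ.inf' Finset.univ_nonempty (fun i => u i + v i) :=
    Finset.le_inf' _ _ fun i hi => add_le_add (Finset.inf'_le _ hi) (Finset.inf'_le _ hi)
  linarith
def myOne {n : ℕ} : EuclideanSpace ℝ (Fin (n+1)) := WithLp.toLp 2 (fun _ => 1)

noncomputable def myProj {n : ℕ} (u : EuclideanSpace ℝ (Fin (n+1))) :
    EuclideanSpace ℝ (Fin (n+1)) :=
  u - ((∑ i, u i) / ((n:ℝ)+1)) • (myOne : EuclideanSpace ℝ (Fin (n+1)))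

lemma myProj_apply {n : ℕ} (u : EuclideanSpace ℝ (Fin (n+1))) (i : Fin (n+1)) :
    myProj u i = u i - (∑ j, u j) / ((n:ℝ)+1) := by
  unfold myProj
  rw [PiLp.sub_apply, PiLp.smul_apply, smul_eq_mul]
  show u i - _ * 1 = _
  ring

lemma myProj_sum {n : ℕ} (u : EuclideanSpace ℝ (Fin (n+1))) : ∑ i, myProj u i = 0 := by
  have hnn : ((n:ℝ)+1) ≠ 0 := by positivity
  simp_rw [myProj_apply, Finset.sum_sub_distrib, Finset.sum_const, Finset.card_univ,
    Fintype.card_fin, nsmul_eq_mul]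
  push_cast
  field_simp
  ring

lemma myProj_linear {n : ℕ} : IsLinearMap ℝ (myProj (n := n)) := by
  constructor
  · intro u v
    ext i
    have hs : ∑ j, (u + v) j = ∑ j, u j + ∑ j, v j := by
      simp_rw [PiLp.add_apply, Finset.sum_add_distrib]
    rw [PiLp.add_apply, myProj_apply, myProj_apply, myProj_apply, PiLp.add_apply, hs]
    ring
  · intro c u
    ext i
    have hs : ∑ j, (c • u) j = c * ∑ j, u j := by
      simp_rw [PiLp.smul_apply, smul_eq_mul, Finset.mul_sum]
    rw [PiLp.smul_apply, myProj_apply, myProj_apply, PiLp.smul_apply, hs, smul_eq_mul,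
      smul_eq_mul]
    ring

lemma my_cube_hull {n : ℕ} : ∀ (k : ℕ) (u : EuclideanSpace ℝ (Fin (n+1))),
    (Finset.univ.filter (fun i => u i ≠ 0)).card ≤ k →
    (∀ i, 0 ≤ u i ∧ u i ≤ 2) →
    u ∈ convexHull ℝ (Set.range fun S : Finset (Fin (n+1)) =>
      (WithLp.toLp 2 (fun i => if i ∈ S then (2:ℝ) else 0) : EuclideanSpace ℝ (Fin (n+1)))) := by
  classical
  intro k
  induction k with
  | zero =>
    intro u hcard hu
    have hT : (Finset.univ.filter (fun i => u i ≠ 0)) = ∅ := Finset.card_eq_zero.1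
      (Nat.le_zero.1 hcard)
    have hu0 : u = (WithLp.toLp 2 (fun i => if i ∈ (∅ : Finset (Fin (n+1))) then (2:ℝ) else 0) :
        EuclideanSpace ℝ (Fin (n+1))) := by
      ext i
      have : i ∉ Finset.univ.filter (fun i => u i ≠ 0) := by rw [hT]; exact Finset.notMem_empty i
      simp only [Finset.mem_filter, Finset.mem_univ, true_and, not_not] at this
      simpa using this
    rw [hu0]
    exact subset_convexHull ℝ _ ⟨∅, rfl⟩
  | succ k ih =>
    intro u hcard hu
    set T := Finset.univ.filter (fun i => u i ≠ 0) with hTdef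
    by_cases hT : T = ∅
    · have hu0 : u = (WithLp.toLp 2 (fun i => if i ∈ (∅ : Finset (Fin (n+1))) then (2:ℝ) else 0) :
          EuclideanSpace ℝ (Fin (n+1))) := by
        ext i
        have : i ∉ T := by rw [hT]; exact Finset.notMem_empty i
        simp only [hTdef, Finset.mem_filter, Finset.mem_univ, true_and, not_not] at this
        simpa using this
      rw [hu0]
      exact subset_convexHull ℝ _ ⟨∅, rfl⟩
    · have hTne : T.Nonempty := Finset.nonempty_of_ne_empty hT
      set m := T.inf' hTne u with hmdef
      obtain ⟨i₀, hi₀T, hi₀⟩ := Finset.exists_mem_eq_inf' hTne u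
      have hupos : ∀ i ∈ T, 0 < u i := by
        intro i hi
        rcases (hu i).1.lt_or_eq with h | h
        · exact h
        · exfalso
          have : u i ≠ 0 := (Finset.mem_filter.1 hi).2
          exact this h.symm
      have hm0 : 0 < m := by rw [hmdef, hi₀]; exact hupos i₀ hi₀T
      have hm2 : m ≤ 2 := by rw [hmdef, hi₀]; exact (hu i₀).2
      have hmle : ∀ i ∈ T, m ≤ u i := fun i hi => Finset.inf'_le _ hi
      have huz : ∀ i, i ∉ T → u i = 0 := by
        intro i hi
        simp only [hTdef, Finset.mem_filter, Finset.mem_univ, true_and, not_not] at hi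
        exact hi
      set w : EuclideanSpace ℝ (Fin (n+1)) := WithLp.toLp 2 (fun i => if i ∈ T then (2:ℝ) else 0) with hwdef
      have hwmem : w ∈ convexHull ℝ (Set.range fun S : Finset (Fin (n+1)) =>
          (WithLp.toLp 2 (fun i => if i ∈ S then (2:ℝ) else 0) : EuclideanSpace ℝ (Fin (n+1)))) :=
        subset_convexHull ℝ _ ⟨T, rfl⟩
      by_cases hm : m = 2
      · have : u = w := by
          ext i
          by_cases hiT : i ∈ T
          · rw [hwdef]
            simp only [if_pos hiT]
            exact le_antisymm ((hu i).2) (by rw [← hm]; exact hmle i hiT)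
          · rw [hwdef]
            simp only [if_neg hiT]
            exact huz i hiT
        rw [this]; exact hwmem
      · have hmlt : m < 2 := lt_of_le_of_ne hm2 hm
        have hden : (0:ℝ) < 1 - m/2 := by linarith
        set u' : EuclideanSpace ℝ (Fin (n+1)) :=
          WithLp.toLp 2 (fun i => if i ∈ T then (u i - m)/(1 - m/2) else 0) with hu'def
        have hu'b : ∀ i, 0 ≤ u' i ∧ u' i ≤ 2 := by
          intro i
          rw [hu'def]
          by_cases hiT : i ∈ T
          · simp only [if_pos hiT]
            constructor
            · apply div_nonneg _ (le_of_lt hden)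
              linarith [hmle i hiT]
            · rw [div_le_iff₀ hden]
              have := (hu i).2
              linarith
          · simp only [if_neg hiT]
            norm_num
        have hsub : Finset.univ.filter (fun i => u' i ≠ 0) ⊆ T.erase i₀ := by
          intro i hi
          simp only [Finset.mem_filter, Finset.mem_univ, true_and] at hi
          rw [Finset.mem_erase]
          by_cases hiT : i ∈ T
          · refine ⟨?_, hiT⟩
            rintro rfl
            apply hi
            rw [hu'def]
            simp only [if_pos hiT]
            rw [← hi₀]
            simp
            exact Or.inl (sub_self _)
          · exfalso
            apply hi
            rw [hu'def]
            simp only [if_neg hiT]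
        have hcard' : (Finset.univ.filter (fun i => u' i ≠ 0)).card ≤ k := by
          have h1 := Finset.card_le_card hsub
          have h2 : (T.erase i₀).card = T.card - 1 := Finset.card_erase_of_mem hi₀T
          have h3 : 1 ≤ T.card := Finset.card_pos.2 hTne
          omega
        have hu'mem := ih u' hcard' hu'b
        have hcomb : u = (m/2) • w + (1 - m/2) • u' := by
          ext i
          rw [PiLp.add_apply, PiLp.smul_apply, PiLp.smul_apply, smul_eq_mul, smul_eq_mul,
            hwdef, hu'def]
          by_cases hiT : i ∈ T
          · simp only [if_pos hiT]
            rw [mul_div_assoc']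
            rw [mul_div_cancel_left₀ _ (ne_of_gt hden)]
            ring
          · simp only [if_neg hiT]
            rw [huz i hiT]
            ring
        rw [hcomb]
        exact (convex_convexHull ℝ _) hwmem hu'mem (by linarith) (by linarith) (by ring)
lemma my_polytope {n : ℕ} : ∃ V : Finset (EuclideanSpace ℝ (Fin (n+1))),
    (V : Set (EuclideanSpace ℝ (Fin (n+1)))) ⊆ {x | ∑ i, x i = 0} ∧
    {x ∈ {x : EuclideanSpace ℝ (Fin (n+1)) | ∑ i, x i = 0} | myNu x ≤ 1} =
      convexHull ℝ (V : Set (EuclideanSpace ℝ (Fin (n+1)))) := by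
  classical
  have hnn : ((n:ℝ)+1) ≠ 0 := by positivity
  set ind : Finset (Fin (n+1)) → EuclideanSpace ℝ (Fin (n+1)) :=
    fun S => WithLp.toLp 2 (fun i => if i ∈ S then (2:ℝ) else 0) with hind
  refine ⟨Finset.image (fun S => myProj (ind S)) Finset.univ, ?_, ?_⟩
  · rintro x hx
    simp only [Finset.coe_image, Finset.coe_univ, Set.image_univ] at hx
    obtain ⟨S, rfl⟩ := hx
    exact myProj_sum _
  · have hVcoe : ((Finset.image (fun S => myProj (ind S)) Finset.univ : Finset _) :
        Set (EuclideanSpace ℝ (Fin (n+1)))) = myProj '' (Set.range ind) := by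
      rw [Finset.coe_image, Finset.coe_univ, Set.image_univ]
      exact Set.range_comp myProj ind
    rw [hVcoe, ← myProj_linear.image_convexHull]
    have hcube : convexHull ℝ (Set.range ind) =
        {u : EuclideanSpace ℝ (Fin (n+1)) | ∀ i, 0 ≤ u i ∧ u i ≤ 2} := by
      apply Set.Subset.antisymm
      · apply convexHull_min
        · rintro _ ⟨S, rfl⟩ i
          simp only [hind]
          split <;> norm_num
        · intro x hx y hy a b ha hb hab i
          have hpt : (a • x + b • y) i = a * x i + b * y i := by
            rw [PiLp.add_apply, PiLp.smul_apply, PiLp.smul_apply, smul_eq_mul, smul_eq_mul]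
          constructor
          · rw [hpt]; exact add_nonneg (mul_nonneg ha (hx i).1) (mul_nonneg hb (hy i).1)
          · rw [hpt]
            have h1 : a * x i ≤ a * 2 := mul_le_mul_of_nonneg_left (hx i).2 ha
            have h2 : b * y i ≤ b * 2 := mul_le_mul_of_nonneg_left (hy i).2 hb
            nlinarith
      · intro u hu
        exact my_cube_hull (n+1) u (le_trans (Finset.card_filter_le _ _) (by simp)) hu
    rw [hcube]
    apply Set.Subset.antisymm
    · rintro x ⟨hxW, hxnu⟩
      simp only [Set.mem_setOf_eq] at hxW
      set m := Finset.univ.inf' Finset.univ_nonempty (fun j => x j) with hmdef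
      set M := Finset.univ.sup' Finset.univ_nonempty (fun j => x j) with hMdef
      have hnu2 : M - m ≤ 2 := by
        have : (M - m)/2 ≤ 1 := hxnu
        linarith
      refine ⟨(WithLp.toLp 2 (fun i => x i - m) : EuclideanSpace ℝ (Fin (n+1))), fun i => ⟨?_, ?_⟩, ?_⟩
      · have := Finset.inf'_le (fun j => x j) (Finset.mem_univ i)
        rw [← hmdef] at this
        show (0:ℝ) ≤ x i - m
        linarith
      · have := Finset.le_sup' (fun j => x j) (Finset.mem_univ i)
        rw [← hMdef] at this
        show x i - m ≤ 2
        linarith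
      · ext i
        rw [myProj_apply]
        have hsum : ∑ j, ((WithLp.toLp 2 (fun j => x j - m) : EuclideanSpace ℝ (Fin (n+1))) j) =
            -(((n:ℝ)+1) * m) := by
          show ∑ j, (x j - m) = _
          rw [Finset.sum_sub_distrib, hxW, Finset.sum_const, Finset.card_univ,
            Fintype.card_fin, nsmul_eq_mul]
          push_cast
          ring
        rw [hsum]
        show x i - m - -(((n:ℝ)+1) * m) / ((n:ℝ)+1) = x i
        field_simp
        ring
    · rintro _ ⟨u, hu, rfl⟩
      refine ⟨myProj_sum u, ?_⟩
      have hfun : (fun i => myProj u i) = fun i => u i + (-((∑ j, u j) / ((n:ℝ)+1))) := by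
        funext i
        rw [myProj_apply]
        ring
      show myNu (myProj u) ≤ 1
      unfold myNu
      rw [hfun, my_sup'_add_const, my_inf'_add_const]
      have h1 : Finset.univ.sup' Finset.univ_nonempty (fun i => u i) ≤ 2 :=
        Finset.sup'_le _ _ fun i _ => (hu i).2
      have h2 : (0:ℝ) ≤ Finset.univ.inf' Finset.univ_nonempty (fun i => u i) :=
        Finset.le_inf' _ _ fun i _ => (hu i).1
      linarith
lemma my_ratio_mono {a b c d : ℝ} (ha : 0 < a) (hb : 0 < b) (hac : a < c) (hbd : b < d)
    (h : a / (a - c) ≤ b / (b - d)) : c / a ≤ d / b := by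
  set u := a - c with hu'
  set v := b - d with hv'
  have hu : u < 0 := by rw [hu']; linarith
  have hv : v < 0 := by rw [hv']; linarith
  have huv : (0:ℝ) < u * v := mul_pos_of_neg_of_neg hu hv
  have h3 := mul_le_mul_of_nonneg_right h (le_of_lt huv)
  have e1 : a/u*(u*v) = a*v := by
    calc a/u*(u*v) = a/u*u*v := by ring
    _ = a*v := by rw [div_mul_cancel₀ a (ne_of_lt hu)]
  have e2 : b/v*(u*v) = b*u := by
    calc b/v*(u*v) = b/v*v*u := by ring
    _ = b*u := by rw [div_mul_cancel₀ b (ne_of_lt hv)]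
  rw [e1, e2] at h3
  rw [div_le_div_iff₀ ha hb]
  rw [hu', hv'] at h3
  nlinarith [h3]

lemma my_ratio_mono' {a b c d : ℝ} (hc : 0 < c) (hd : 0 < d) (hca : c < a) (hdb : d < b)
    (h : b / (b - d) ≤ a / (a - c)) : a / c ≤ b / d := by
  set u := a - c with hu'
  set v := b - d with hv'
  have hu : 0 < u := by rw [hu']; linarith
  have hv : 0 < v := by rw [hv']; linarith
  have huv : (0:ℝ) < u * v := mul_pos hu hv
  have h3 := mul_le_mul_of_nonneg_right h (le_of_lt huv)
  have e1 : a/u*(u*v) = a*v := by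
    calc a/u*(u*v) = a/u*u*v := by ring
    _ = a*v := by rw [div_mul_cancel₀ a (ne_of_gt hu)]
  have e2 : b/v*(u*v) = b*u := by
    calc b/v*(u*v) = b/v*v*u := by ring
    _ = b*u := by rw [div_mul_cancel₀ b (ne_of_gt hv)]
  rw [e1, e2] at h3
  rw [div_le_div_iff₀ hc hd]
  rw [hu', hv'] at h3
  nlinarith [h3]
lemma my_dist {n : ℕ} (p q : EuclideanSpace ℝ (Fin (n+1)))
    (hp1 : ∀ i, 0 < p i) (hp2 : ∑ i, p i = 1)
    (hq1 : ∀ i, 0 < q i) (hq2 : ∑ i, q i = 1) (hpq : p ≠ q) :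
    (1:ℝ)/2 * Real.log
      (((1 - sInf {t : ℝ | p + t • (q - p) ∈
          {x : EuclideanSpace ℝ (Fin (n+1)) | (∀ i, 0 < x i) ∧ ∑ i, x i = 1}}) /
        (-sInf {t : ℝ | p + t • (q - p) ∈
          {x : EuclideanSpace ℝ (Fin (n+1)) | (∀ i, 0 < x i) ∧ ∑ i, x i = 1}})) *
       (sSup {t : ℝ | p + t • (q - p) ∈
          {x : EuclideanSpace ℝ (Fin (n+1)) | (∀ i, 0 < x i) ∧ ∑ i, x i = 1}} /
        (sSup {t : ℝ | p + t • (q - p) ∈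
          {x : EuclideanSpace ℝ (Fin (n+1)) | (∀ i, 0 < x i) ∧ ∑ i, x i = 1}} - 1))) =
    myNu (WithLp.toLp 2 (fun i => Real.log (q i) - Real.log (p i)) : EuclideanSpace ℝ (Fin (n+1))) := by
  classical
  set T := {t : ℝ | p + t • (q - p) ∈
      {x : EuclideanSpace ℝ (Fin (n+1)) | (∀ i, 0 < x i) ∧ ∑ i, x i = 1}} with hTdef
  set Ip := Finset.univ.filter (fun i => p i < q i) with hIp
  set Im := Finset.univ.filter (fun i => q i < p i) with hIm
  have hex : ∃ i, p i ≠ q i := by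
    by_contra h
    push_neg at h
    exact hpq (WithLp.ofLp_injective 2 (funext h))
  have hplus : Ip.Nonempty := by
    by_contra h
    rw [Finset.not_nonempty_iff_eq_empty] at h
    have hle : ∀ i, q i ≤ p i := by
      intro i
      by_contra hlt
      push_neg at hlt
      have hmem : i ∈ Ip := by rw [hIp]; simp [hlt]
      rw [h] at hmem
      exact absurd hmem (Finset.notMem_empty i)
    obtain ⟨i0, hi0⟩ := hex
    have hlt : ∑ i, q i < ∑ i, p i :=
      Finset.sum_lt_sum (fun i _ => hle i)
        ⟨i0, Finset.mem_univ _, lt_of_le_of_ne (hle i0) hi0.symm⟩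
    rw [hp2, hq2] at hlt
    exact lt_irrefl 1 hlt
  have hminus : Im.Nonempty := by
    by_contra h
    rw [Finset.not_nonempty_iff_eq_empty] at h
    have hle : ∀ i, p i ≤ q i := by
      intro i
      by_contra hlt
      push_neg at hlt
      have hmem : i ∈ Im := by rw [hIm]; simp [hlt]
      rw [h] at hmem
      exact absurd hmem (Finset.notMem_empty i)
    obtain ⟨i0, hi0⟩ := hex
    have hlt : ∑ i, p i < ∑ i, q i :=
      Finset.sum_lt_sum (fun i _ => hle i)
        ⟨i0, Finset.mem_univ _, lt_of_le_of_ne (hle i0) hi0⟩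
    rw [hp2, hq2] at hlt
    exact lt_irrefl 1 hlt
  set α := Ip.sup' hplus (fun i => p i / (p i - q i)) with hα
  set β := Im.inf' hminus (fun i => p i / (p i - q i)) with hβ
  have hα0 : α < 0 := by
    rw [hα]
    apply (Finset.sup'_lt_iff hplus).2
    intro i hi
    have h2 : p i < q i := (Finset.mem_filter.1 hi).2
    exact div_neg_of_pos_of_neg (hp1 i) (by linarith)
  have hβ1 : 1 < β := by
    rw [hβ]
    apply (Finset.lt_inf'_iff hminus).2
    intro i hi
    have h2 : q i < p i := (Finset.mem_filter.1 hi).2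
    rw [lt_div_iff₀ (by linarith : (0:ℝ) < p i - q i), one_mul]
    linarith [hq1 i]
  have hmempt : ∀ t : ℝ, t ∈ T ↔ ∀ i, 0 < p i + t * (q i - p i) := by
    intro t
    have hpt : ∀ i, (p + t • (q - p)) i = p i + t * (q i - p i) := fun i => by
      rw [PiLp.add_apply, PiLp.smul_apply, PiLp.sub_apply, smul_eq_mul]
    constructor
    · intro h i
      have := h.1 i
      rwa [hpt i] at this
    · intro h
      refine ⟨fun i => by rw [hpt i]; exact h i, ?_⟩
      have : ∑ i, (p + t • (q - p)) i = ∑ i, (p i + t * (q i - p i)) :=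
        Finset.sum_congr rfl fun i _ => hpt i
      rw [this, Finset.sum_add_distrib, ← Finset.mul_sum, Finset.sum_sub_distrib, hp2, hq2]
      norm_num
  have hTIoo : T = Set.Ioo α β := by
    ext t
    rw [Set.mem_Ioo, hmempt t]
    constructor
    · intro h
      constructor
      · rw [hα]
        apply (Finset.sup'_lt_iff hplus).2
        intro i hi
        have h2 : p i < q i := (Finset.mem_filter.1 hi).2
        rw [div_lt_iff_of_neg (by linarith : p i - q i < 0)]
        have h3 := h i
        have h4 : t * (p i - q i) = -(t * (q i - p i)) := by ring
        linarith
      · rw [hβ]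
        apply (Finset.lt_inf'_iff hminus).2
        intro i hi
        have h2 : q i < p i := (Finset.mem_filter.1 hi).2
        rw [lt_div_iff₀ (by linarith : (0:ℝ) < p i - q i)]
        have h3 := h i
        have h4 : t * (p i - q i) = -(t * (q i - p i)) := by ring
        linarith
    · rintro ⟨h1, h2⟩ i
      rcases lt_trichotomy (p i) (q i) with hlt | heq | hgt
      · have hiI : i ∈ Ip := by rw [hIp]; simp [hlt]
        have h3 : p i / (p i - q i) ≤ α := by rw [hα]; exact Finset.le_sup' (fun i => p i / (p i - q i)) hiI
        have h4 : p i / (p i - q i) < t := lt_of_le_of_lt h3 h1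
        rw [div_lt_iff_of_neg (by linarith : p i - q i < 0)] at h4
        have h5 : t * (p i - q i) = -(t * (q i - p i)) := by ring
        linarith
      · have h0 : q i - p i = 0 := by rw [heq, sub_self]
        rw [h0, mul_zero, add_zero]
        exact hp1 i
      · have hiI : i ∈ Im := by rw [hIm]; simp [hgt]
        have h3 : β ≤ p i / (p i - q i) := by rw [hβ]; exact Finset.inf'_le (fun i => p i / (p i - q i)) hiI
        have h4 : t < p i / (p i - q i) := lt_of_lt_of_le h2 h3
        rw [lt_div_iff₀ (by linarith : (0:ℝ) < p i - q i)] at h4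
        have h5 : t * (p i - q i) = -(t * (q i - p i)) := by ring
        linarith
  have hsInf : sInf T = α := by rw [hTIoo]; exact csInf_Ioo (by linarith)
  have hsSup : sSup T = β := by rw [hTIoo]; exact csSup_Ioo (by linarith)
  obtain ⟨i₀, hi₀I, hi₀⟩ := Finset.exists_mem_eq_sup' hplus (fun i => p i / (p i - q i))
  obtain ⟨i₁, hi₁I, hi₁⟩ := Finset.exists_mem_eq_inf' hminus (fun i => p i / (p i - q i))
  have hlt₀ : p i₀ < q i₀ := (Finset.mem_filter.1 hi₀I).2
  have hlt₁ : q i₁ < p i₁ := (Finset.mem_filter.1 hi₁I).2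
  have hd₀ : p i₀ - q i₀ < 0 := by linarith
  have hd₁ : (0:ℝ) < p i₁ - q i₁ := by linarith
  have hA : (1 - α)/(-α) = q i₀ / p i₀ := by
    rw [hα, hi₀]
    have hne1 : -(p i₀ / (p i₀ - q i₀)) ≠ 0 :=
      ne_of_gt (neg_pos.2 (div_neg_of_pos_of_neg (hp1 i₀) hd₀))
    rw [div_eq_div_iff hne1 (ne_of_gt (hp1 i₀))]
    field_simp [ne_of_lt hd₀]
    ring
  have hB : β/(β - 1) = p i₁ / q i₁ := by
    rw [hβ, hi₁]
    have hgt : (1:ℝ) < p i₁ / (p i₁ - q i₁) := by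
      rw [lt_div_iff₀ hd₁, one_mul]
      linarith [hq1 i₁]
    have hne1 : p i₁ / (p i₁ - q i₁) - 1 ≠ 0 := ne_of_gt (by linarith)
    rw [div_eq_div_iff hne1 (ne_of_gt (hq1 i₁))]
    field_simp [ne_of_gt hd₁]
    ring
  have hAmax : ∀ i, q i / p i ≤ q i₀ / p i₀ := by
    intro i
    rcases le_or_gt (q i) (p i) with hle | hlt
    · have ha1 : q i / p i ≤ 1 := (div_le_one (hp1 i)).2 hle
      have ha2 : (1:ℝ) ≤ q i₀ / p i₀ := (one_le_div (hp1 i₀)).2 (le_of_lt hlt₀)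
      linarith
    · have hiI : i ∈ Ip := by rw [hIp]; simp [hlt]
      have h3 : p i / (p i - q i) ≤ p i₀ / (p i₀ - q i₀) := by
        rw [← hi₀]
        exact Finset.le_sup' (fun i => p i / (p i - q i)) hiI
      exact my_ratio_mono (hp1 i) (hp1 i₀) hlt hlt₀ h3
  have hBmax : ∀ i, p i / q i ≤ p i₁ / q i₁ := by
    intro i
    rcases le_or_gt (p i) (q i) with hle | hlt
    · have ha1 : p i / q i ≤ 1 := (div_le_one (hq1 i)).2 hle
      have ha2 : (1:ℝ) ≤ p i₁ / q i₁ := (one_le_div (hq1 i₁)).2 (le_of_lt hlt₁)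
      linarith
    · have hiI : i ∈ Im := by rw [hIm]; simp [hlt]
      have h3 : p i₁ / (p i₁ - q i₁) ≤ p i / (p i - q i) := by
        rw [← hi₁]
        exact Finset.inf'_le (fun i => p i / (p i - q i)) hiI
      exact my_ratio_mono' (hq1 i) (hq1 i₁) hlt hlt₁ h3
  set v : EuclideanSpace ℝ (Fin (n+1)) := WithLp.toLp 2 (fun i => Real.log (q i) - Real.log (p i)) with hv
  have hvlog : ∀ i, v i = Real.log (q i / p i) := fun i =>
    (Real.log_div (ne_of_gt (hq1 i)) (ne_of_gt (hp1 i))).symm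
  have hM : Finset.univ.sup' Finset.univ_nonempty (fun i => v i) = Real.log (q i₀ / p i₀) := by
    apply le_antisymm
    · apply Finset.sup'_le
      intro i _
      rw [hvlog i]
      exact Real.log_le_log (div_pos (hq1 i) (hp1 i)) (hAmax i)
    · rw [← hvlog i₀]
      exact Finset.le_sup' (fun i => v i) (Finset.mem_univ i₀)
  have hinv : ∀ i, q i₁ / p i₁ ≤ q i / p i := by
    intro i
    have h := hBmax i
    rw [div_le_div_iff₀ (hq1 i) (hq1 i₁)] at h
    rw [div_le_div_iff₀ (hp1 i₁) (hp1 i)]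
    linarith
  have hm : Finset.univ.inf' Finset.univ_nonempty (fun i => v i) = Real.log (q i₁ / p i₁) := by
    apply le_antisymm
    · rw [← hvlog i₁]
      exact Finset.inf'_le (fun i => v i) (Finset.mem_univ i₁)
    · apply Finset.le_inf'
      intro i _
      rw [hvlog i]
      exact Real.log_le_log (div_pos (hq1 i₁) (hp1 i₁)) (hinv i)
  rw [hsInf, hsSup, hA, hB]
  unfold myNu
  rw [hM, hm]
  rw [Real.log_mul (ne_of_gt (div_pos (hq1 i₀) (hp1 i₀))) (ne_of_gt (div_pos (hp1 i₁) (hq1 i₁)))]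
  have hflip : Real.log (p i₁ / q i₁) = - Real.log (q i₁ / p i₁) := by
    rw [← Real.log_inv, inv_div]
  rw [hflip]
  ring

/-- The map `Φₙ(x) = (log(x₁/g), …, log(x_{n+1}/g))`, `g` the geometric mean
of the coordinates, is a bijection from the relative interior of the standard `n`-simplex
`Hₙ ⊆ ℝ^{n+1}` onto the hyperplane `Wₙ = {∑ xᵢ = 0}`, and there is a norm on `Wₙ`, whose unit
ball is a centrally symmetric convex polytope, turning `Φₙ` into an isometry from the Hilbert
geometry of `Hₙ` onto `(Wₙ, ‖·‖)`. -/
theorem simplex_hilbertGeometry_isometric_normedSpace {n : ℕ}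
    (Hn W : Set (EuclideanSpace ℝ (Fin (n + 1))))
    (hHn : Hn = convexHull ℝ
      (Set.range fun i : Fin (n + 1) => EuclideanSpace.single i (1 : ℝ)))
    (hW : W = {x : EuclideanSpace ℝ (Fin (n + 1)) | ∑ i, x i = 0})
    (Φ : EuclideanSpace ℝ (Fin (n + 1)) → EuclideanSpace ℝ (Fin (n + 1)))
    (hΦ : ∀ (x : EuclideanSpace ℝ (Fin (n + 1))) (i : Fin (n + 1)),
      Φ x i = Real.log (x i / (∏ j, x j) ^ (((n : ℝ) + 1)⁻¹))) :
    Set.BijOn Φ (intrinsicInterior ℝ Hn) W ∧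
      ∃ ν : EuclideanSpace ℝ (Fin (n + 1)) → ℝ, IsNormOnSet W ν ∧
        (∃ V : Finset (EuclideanSpace ℝ (Fin (n + 1))),
          (V : Set (EuclideanSpace ℝ (Fin (n + 1)))) ⊆ W ∧
            {x ∈ W | ν x ≤ 1} = convexHull ℝ (V : Set (EuclideanSpace ℝ (Fin (n + 1))))) ∧
        (∀ x ∈ W, ν (-x) = ν x) ∧
        ∀ x ∈ intrinsicInterior ℝ Hn, ∀ y ∈ intrinsicInterior ℝ Hn,
          hilbertDist (intrinsicInterior ℝ Hn) x y = ν (Φ x - Φ y) := by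
  have hrel : intrinsicInterior ℝ Hn =
      {x : EuclideanSpace ℝ (Fin (n+1)) | (∀ i, 0 < x i) ∧ ∑ i, x i = 1} := by
    rw [hHn, my_hull_eq]
    exact my_relint
  constructor
  · rw [hrel, hW]
    exact my_bijOn Φ hΦ
  · refine ⟨myNu, ?_, ?_, ?_, ?_⟩
    · refine ⟨fun x _ => my_nu_nonneg x, fun x hx h => my_nu_zero x ?_ h,
        fun c x _ => my_nu_smul c x, fun x _ y _ => my_nu_add x y⟩
      rw [hW] at hx
      exact hx
    · rw [hW]
      exact my_polytope
    · intro x _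
      exact my_nu_neg x
    · intro x hx y hy
      rw [hrel] at hx hy ⊢
      unfold hilbertDist
      by_cases hxy : x = y
      · rw [if_pos hxy, hxy, sub_self]
        have h0 : myNu (0 : EuclideanSpace ℝ (Fin (n+1))) = 0 := by
          unfold myNu
          have hz : (fun i => (0 : EuclideanSpace ℝ (Fin (n+1))) i) = fun _ => (0:ℝ) := by
            funext i; rfl
          rw [hz, Finset.sup'_const, Finset.inf'_const]
          norm_num
        rw [h0]
      · rw [if_neg hxy]
        have hd := my_dist x y hx.1 hx.2 hy.1 hy.2 hxy
        have key : myNu (Φ x - Φ y) =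
            myNu (WithLp.toLp 2 (fun i => Real.log (y i) - Real.log (x i)) : EuclideanSpace ℝ (Fin (n+1))) := by
          have hΦd : ∀ i, (Φ x - Φ y) i =
              (-(Real.log (y i) - Real.log (x i))) +
              ((∑ j, Real.log (y j))/((n:ℝ)+1) - (∑ j, Real.log (x j))/((n:ℝ)+1)) := by
            intro i
            rw [PiLp.sub_apply, hΦ, hΦ, my_phi_eq x hx.1 i, my_phi_eq y hy.1 i]
            ring
          unfold myNu
          have hfun : (fun i => (Φ x - Φ y) i) =
              fun i => (-(Real.log (y i) - Real.log (x i))) +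
              ((∑ j, Real.log (y j))/((n:ℝ)+1) - (∑ j, Real.log (x j))/((n:ℝ)+1)) := by
            funext i
            exact hΦd i
          rw [hfun, my_sup'_add_const, my_inf'_add_const, my_sup'_neg, my_inf'_neg]
          have hbeta : (fun i => (WithLp.toLp 2 (fun i => Real.log (y i) - Real.log (x i)) :
              EuclideanSpace ℝ (Fin (n+1))) i) =
              (fun i => Real.log (y i) - Real.log (x i)) := by
            funext i; rfl
          rw [hbeta]
          ring
        rw [key]
        exact hd
end

section
/- Let H_n ⊂ ℝ^{n+1} be the standard n-simplex, S_n the standard n-cell-simplex, and Φ_n the map defined on the relative interior of H_n by Φ_n(x_1,…,x_{n+1}) = (ln(x_1/g), …, ln(x_{n+1}/g)) with g = (x_1⋯x_{n+1})^{1/(n+1)}. Then the image under Φ_n of the intersection of S_n with the relative interior of H_n is exactly the closed positive cone with vertex at the origin spanned by the vectors ṽ_k = (n−k, …, n−k, −(k+1), …, −(k+1)) (with k+1 coordinates equal to n−k and n−k coordinates equal to −(k+1)), for k = 0, …, n−1; that is, Φ_n(S_n ∩ relint H_n) = { Σ_{k=0}^{n−1} a_k ṽ_k : a_k ≥ 0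 for all k } ⊂ W_n. -/
open Finset

namespace CellSimplexAux

lemma tele13 (Y : ℕ → ℝ) {i m : ℕ} (h : i ≤ m) :
    ∑ k ∈ Finset.Ico i m, (Y k - Y (k+1)) = Y i - Y m := by
  rw [Finset.sum_Ico_eq_sub _ h, Finset.sum_range_sub' Y, Finset.sum_range_sub' Y]; ring

lemma abel13 (Y : ℕ → ℝ) (m : ℕ) :
    ∑ k ∈ Finset.range m, ((k:ℝ)+1)*(Y k - Y (k+1)) =
      (∑ k ∈ Finset.range (m+1), Y k) - ((m:ℝ)+1)*Y m := by
  have h1 : ∀ k : ℕ, ((k:ℝ)+1)*(Y k - Y (k+1)) =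
      (((k:ℝ)+1)*Y k - ((k:ℝ)+1+1)*Y (k+1)) + Y (k+1) := by
    intro k; ring
  rw [Finset.sum_congr rfl fun k _ => h1 k, Finset.sum_add_distrib]
  have h2 : ∑ k ∈ Finset.range m, ((((k:ℕ):ℝ)+1)*Y k - (((k:ℕ):ℝ)+1+1)*Y (k+1)) =
      (((0:ℕ):ℝ)+1)*Y 0 - (((m:ℕ):ℝ)+1)*Y m := by
    have := Finset.sum_range_sub' (f := fun k : ℕ => ((k:ℝ)+1)*Y k) m
    simpa [add_comm] using this
  rw [h2, Finset.sum_range_succ' Y m]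
  push_cast; ring

lemma sum_ite_le {m : ℕ} (c : ℕ) (hc : c < m) (A B : ℝ) :
    ∑ i : Fin m, (if (i:ℕ) ≤ c then A else B) = ((c:ℝ)+1)*A + ((m:ℝ)-((c:ℝ)+1))*B := by
  have h := Fin.sum_univ_eq_sum_range (fun k => if k ≤ c then A else B) m
  rw [h, range_eq_Ico, ← Finset.sum_Ico_consecutive _ (Nat.zero_le (c+1)) hc]
  have h1 : ∑ k ∈ Ico 0 (c+1), (if k ≤ c then A else B) = ∑ k ∈ Ico 0 (c+1), A :=
    Finset.sum_congr rfl fun k hk => if_pos (Nat.lt_succ_iff.1 (mem_Ico.1 hk).2)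
  have h2 : ∑ k ∈ Ico (c+1) m, (if k ≤ c then A else B) = ∑ k ∈ Ico (c+1) m, B :=
    Finset.sum_congr rfl fun k hk => if_neg (by have := (mem_Ico.1 hk).1; omega)
  rw [show ((∑ i ∈ Ico 0 (c+1), if i ≤ c then A else B) +
      ∑ i ∈ Ico (c+1) m, if i ≤ c then A else B) =
      (∑ k ∈ Ico 0 (c+1), A) + ∑ k ∈ Ico (c+1) m, B from by rw [h1, h2],
    Finset.sum_const, Finset.sum_const, Nat.card_Ico, Nat.card_Ico]
  have : ((m - (c+1) : ℕ) : ℝ) = (m:ℝ) - ((c:ℝ)+1) := by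
    push_cast [Nat.cast_sub hc]
    ring
  simp [this, nsmul_eq_mul]

lemma sum_ite_indicator {m : ℕ} (i : ℕ) (him : i ≤ m) (h : ℕ → ℝ) :
    ∑ k ∈ range m, (if i ≤ k then h k else 0) = ∑ k ∈ Ico i m, h k := by
  rw [range_eq_Ico, ← Finset.sum_Ico_consecutive _ (Nat.zero_le i) him]
  have h1 : ∑ k ∈ Ico 0 i, (if i ≤ k then h k else 0) = 0 :=
    Finset.sum_eq_zero fun k hk => if_neg (not_le.2 (mem_Ico.1 hk).2)
  have h2 : ∑ k ∈ Ico i m, (if i ≤ k then h k else 0) = ∑ k ∈ Ico i m, h k :=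
    Finset.sum_congr rfl fun k hk => if_pos (mem_Ico.1 hk).1
  rw [h1, h2, zero_add]

variable {n : ℕ}
local notation "E" => EuclideanSpace ℝ (Fin (n+1))

noncomputable def ee (n : ℕ) (i : Fin (n+1)) : EuclideanSpace ℝ (Fin (n+1)) :=
  EuclideanSpace.single i (1:ℝ)

lemma ee_apply (i j : Fin (n+1)) : ee n i j = if j = i then (1:ℝ) else 0 := by
  simp [ee, EuclideanSpace.single_apply]

lemma sum_ee (i : Fin (n+1)) : ∑ j, ee n i j = 1 := by simp [ee_apply]

lemma sum_smul_ee (x : E) : ∑ i, x i • ee n i = x := by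
  ext j
  rw [WithLp.ofLp_sum, Finset.sum_apply]
  simp [ee_apply]

lemma Hn_eq : convexHull ℝ (Set.range (ee n)) =
    {x : E | (∀ i, 0 ≤ x i) ∧ ∑ i, x i = 1} := by
  apply le_antisymm
  · apply convexHull_min
    · rintro _ ⟨i, rfl⟩
      refine ⟨fun j => ?_, sum_ee i⟩
      rw [ee_apply]; positivity
    · rintro x ⟨hx0, hx1⟩ y ⟨hy0, hy1⟩ a b ha hb hab
      constructor
      · intro i
        have h : (a • x + b • y) i = a * x i + b * y i := rfl
        rw [h]
        exact add_nonneg (mul_nonneg ha (hx0 i)) (mul_nonneg hb (hy0 i))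
      · have h : ∀ i, (a • x + b • y) i = a * x i + b * y i := fun _ => rfl
        simp only [h, Finset.sum_add_distrib, ← Finset.mul_sum, hx1, hy1]
        linarith
  · rintro x ⟨hx0, hx1⟩
    rw [← sum_smul_ee x]
    exact (convex_convexHull ℝ _).sum_mem (fun i _ => hx0 i) hx1
      (fun i _ => subset_convexHull ℝ _ ⟨i, rfl⟩)

noncomputable def Qsub (n : ℕ) : AffineSubspace ℝ (EuclideanSpace ℝ (Fin (n+1))) where
  carrier := {x | ∑ i, x i = 1}
  smul_vsub_vadd_mem' := by
    intro c p1 p2 p3 h1 h2 h3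
    have h : ∀ i, (c • (p1 -ᵥ p2) +ᵥ p3) i = c * (p1 i - p2 i) + p3 i := fun _ => rfl
    simp only [Set.mem_setOf_eq] at *
    simp only [h, Finset.sum_add_distrib, ← Finset.mul_sum, Finset.sum_sub_distrib, h1, h2, h3]
    ring

lemma mem_span_iff (x : E) : x ∈ affineSpan ℝ (Set.range (ee n)) ↔ ∑ i, x i = 1 := by
  constructor
  · intro hx
    have hle : affineSpan ℝ (Set.range (ee n)) ≤ Qsub n := by
      rw [affineSpan_le]
      rintro _ ⟨i, rfl⟩
      exact sum_ee i
    exact hle hx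
  · intro hx
    have h := affineCombination_mem_affineSpan (k := ℝ) (w := fun i => x i)
      (p := ee n) (s := Finset.univ) hx
    rwa [Finset.univ.affineCombination_eq_linear_combination _ _ hx, sum_smul_ee x] at h

lemma coordAbs (x : E) (i : Fin (n+1)) : |x i| ≤ ‖x‖ := by
  rw [EuclideanSpace.norm_eq, ← Real.sqrt_sq_eq_abs]
  apply Real.sqrt_le_sqrt
  calc x i ^ 2 = ‖x i‖ ^ 2 := by rw [Real.norm_eq_abs, sq_abs]
  _ ≤ _ := Finset.single_le_sum (f := fun j => ‖x j‖^2) (fun j _ => by positivity)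
    (Finset.mem_univ i)

lemma intrinsic_eq : intrinsicInterior ℝ (convexHull ℝ (Set.range (ee n))) =
    {x : E | (∀ i, 0 < x i) ∧ ∑ i, x i = 1} := by
  have hspan : ∀ y : E, y ∈ affineSpan ℝ (convexHull ℝ (Set.range (ee n))) ↔ ∑ i, y i = 1 := by
    intro y; rw [affineSpan_convexHull]; exact mem_span_iff y
  apply le_antisymm
  · rintro x hx
    obtain ⟨z, hz, rfl⟩ := mem_intrinsicInterior.1 hx
    obtain ⟨hnn, hsum⟩ := Hn_eq.le (intrinsicInterior_subset hx)
    refine ⟨fun i => ?_, hsum⟩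
    rcases lt_or_eq_of_le (hnn i) with h | h
    · exact h
    exfalso
    have hex : ∃ j, (z : E) j ≠ 0 := by
      by_contra hc
      push_neg at hc
      simp [hc] at hsum
    obtain ⟨j, hj⟩ := hex
    have hij : j ≠ i := by rintro rfl; exact hj h.symm
    obtain ⟨ε, hε, hball⟩ := Metric.mem_nhds_iff.1 (mem_interior_iff_mem_nhds.1 hz)
    set d : E := ee n j - ee n i with hd
    have hdi : d i = -1 := by
      have : d i = ee n j i - ee n i i := rfl
      simp [this, ee_apply, hij, hij.symm]
    have hdnorm : 0 < ‖d‖ := by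
      rw [norm_pos_iff]
      intro hzero
      rw [hzero] at hdi
      norm_num at hdi
    set t : ℝ := ε / (2 * ‖d‖) with ht
    have htpos : 0 < t := by positivity
    set w : E := (z : E) + t • d with hw
    have hwsum : ∑ i', w i' = 1 := by
      have happ : ∀ i', w i' = (z:E) i' + t * d i' := fun _ => rfl
      have hdapp : ∀ i', d i' = ee n j i' - ee n i i' := fun _ => rfl
      simp only [happ, hdapp, Finset.sum_add_distrib, ← Finset.mul_sum, mul_sub,
        Finset.sum_sub_distrib, sum_ee, hsum]
      ring
    have hwA : w ∈ affineSpan ℝ (convexHull ℝ (Set.range (ee n))) := (hspan w).2 hwsum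
    have hdist : dist (⟨w, hwA⟩ : affineSpan ℝ (convexHull ℝ (Set.range (ee n)))) z < ε := by
      rw [Subtype.dist_eq, dist_eq_norm]
      have : w - (z : E) = t • d := by rw [hw]; abel
      rw [this, norm_smul, Real.norm_eq_abs, abs_of_pos htpos, ht]
      rw [div_mul_eq_mul_div, mul_comm]
      rw [div_lt_iff₀ (by positivity)]
      nlinarith [hdnorm, hε]
    have hwS := hball hdist
    have hwS' : w ∈ convexHull ℝ (Set.range (ee n)) := hwS
    have hwnn := (Hn_eq.le hwS').1 i
    have : w i = -t := by
      have : w i = (z : E) i + t * d i := rfl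
      rw [this, hdi, ← h]; ring
    rw [this] at hwnn
    linarith
  · rintro x ⟨hpos, hsum⟩
    have hxA : x ∈ affineSpan ℝ (convexHull ℝ (Set.range (ee n))) := (hspan x).2 hsum
    refine mem_intrinsicInterior.2 ⟨⟨x, hxA⟩, ?_, rfl⟩
    rw [mem_interior_iff_mem_nhds, Metric.mem_nhds_iff]
    obtain ⟨ε, hε, hmin⟩ : ∃ ε > 0, ∀ i, ε ≤ x i := by
      refine ⟨Finset.univ.inf' Finset.univ_nonempty x, ?_,
        fun i => Finset.inf'_le _ (Finset.mem_univ i)⟩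
      show (0:ℝ) < _
      rw [Finset.lt_inf'_iff]
      exact fun i _ => hpos i
    refine ⟨ε, hε, fun w hwd => ?_⟩
    rw [Set.mem_preimage]
    rw [Metric.mem_ball, Subtype.dist_eq, dist_eq_norm] at hwd
    apply Hn_eq.ge
    refine ⟨fun i => ?_, (hspan _).1 w.2⟩
    have hb : |(w : E) i - x i| ≤ ‖(w : E) - x‖ := by
      have happ : (w : E) i - x i = ((w : E) - x) i := rfl
      rw [happ]; exact coordAbs _ i
    have h1 := abs_le.1 (hb.trans hwd.le)
    have h2 := hmin i
    linarith [h1.1]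

/-- extension of a vector to a ℕ-indexed function -/
noncomputable def ext' (y : E) : ℕ → ℝ :=
  fun m => y ⟨min m n, Nat.lt_succ_of_le (min_le_right m n)⟩

lemma ext'_fin (y : E) (i : Fin (n+1)) : ext' y (i:ℕ) = y i := by
  unfold ext'
  apply congrArg
  exact Fin.ext (Nat.min_eq_left (Nat.lt_succ_iff.1 i.isLt))

lemma ext'_le (y : E) {m : ℕ} (hm : m ≤ n) :
    ext' y m = y ⟨m, Nat.lt_succ_of_le hm⟩ := by
  unfold ext'
  apply congrArg
  exact Fin.ext (Nat.min_eq_left hm)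

lemma sum_ext' (y : E) : ∑ k ∈ range (n+1), ext' y k = ∑ i, y i := by
  rw [← Fin.sum_univ_eq_sum_range (fun k => ext' y k) (n+1)]
  exact Finset.sum_congr rfl fun i _ => ext'_fin y i

lemma cone_repr (vtilde : Fin n → E)
    (hvtilde : ∀ (k : Fin n) (i : Fin (n + 1)),
      vtilde k i = if (i : ℕ) ≤ (k : ℕ) then (n : ℝ) - ((k : ℕ) : ℝ)
        else -(((k : ℕ) : ℝ) + 1))
    (y : E) (hy : ∑ i, y i = 0) :
    ∑ k, ((y k.castSucc - y k.succ)/((n:ℝ)+1)) • vtilde k = y := by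
  have hn1 : ((n:ℝ)+1) ≠ 0 := by positivity
  set Y := ext' y with hY
  have hcs : ∀ k : Fin n, y k.castSucc = Y (k:ℕ) := by
    intro k
    rw [hY, ext'_le y (le_of_lt k.isLt)]
    exact congrArg _ rfl
  have hsc : ∀ k : Fin n, y k.succ = Y ((k:ℕ)+1) := by
    intro k
    rw [hY, ext'_le y k.isLt]
    exact congrArg _ rfl
  ext i
  rw [WithLp.ofLp_sum, Finset.sum_apply]
  have hterm : ∀ k : Fin n, (((y k.castSucc - y k.succ)/((n:ℝ)+1)) • vtilde k) i =
      (fun m : ℕ => ((Y m - Y (m+1))/((n:ℝ)+1)) *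
        (if (i:ℕ) ≤ m then (n:ℝ) - (m:ℝ) else -((m:ℝ)+1))) (k:ℕ) := by
    intro k
    have : (((y k.castSucc - y k.succ)/((n:ℝ)+1)) • vtilde k) i =
        ((y k.castSucc - y k.succ)/((n:ℝ)+1)) * vtilde k i := rfl
    rw [this, hvtilde, hcs, hsc]
  rw [Finset.sum_congr rfl fun k _ => hterm k,
    Fin.sum_univ_eq_sum_range (fun m : ℕ => ((Y m - Y (m+1))/((n:ℝ)+1)) *
        (if (i:ℕ) ≤ m then (n:ℝ) - (m:ℝ) else -((m:ℝ)+1))) n]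
  have hsplit : ∀ m : ℕ, ((Y m - Y (m+1))/((n:ℝ)+1)) *
        (if (i:ℕ) ≤ m then (n:ℝ) - (m:ℝ) else -((m:ℝ)+1)) =
      (if (i:ℕ) ≤ m then (Y m - Y (m+1)) else 0) -
        ((m:ℝ)+1)*(Y m - Y (m+1))/((n:ℝ)+1) := by
    intro m
    by_cases h : (i:ℕ) ≤ m <;> simp only [h, if_true, if_false] <;> field_simp <;> ring
  rw [Finset.sum_congr rfl fun m _ => hsplit m, Finset.sum_sub_distrib]
  have hin : (i:ℕ) ≤ n := Nat.lt_succ_iff.1 i.isLt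
  rw [sum_ite_indicator (i:ℕ) hin, tele13 Y hin]
  have h2 : ∑ m ∈ range n, ((m:ℝ)+1)*(Y m - Y (m+1))/((n:ℝ)+1) =
      (∑ m ∈ range n, ((m:ℝ)+1)*(Y m - Y (m+1)))/((n:ℝ)+1) := by
    rw [Finset.sum_div]
  rw [h2, abel13 Y n, sum_ext', hy]
  have : Y (i:ℕ) = y i := ext'_fin y i
  rw [this]
  field_simp
  ring

lemma Sn_eq (vhat : Fin (n+1) → E)
    (hvhat : ∀ (k : Fin (n + 1)) (i : Fin (n + 1)),
      vhat k i = if (i : ℕ) ≤ (k : ℕ) then (((k : ℕ) : ℝ) + 1)⁻¹ else 0) :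
    convexHull ℝ (Set.range vhat) =
      {x : E | (∀ i j : Fin (n+1), i ≤ j → x j ≤ x i) ∧ (∀ i, 0 ≤ x i) ∧ ∑ i, x i = 1} := by
  apply le_antisymm
  · apply convexHull_min
    · rintro _ ⟨k, rfl⟩
      refine ⟨fun i j hij => ?_, fun i => ?_, ?_⟩
      · rw [hvhat, hvhat]
        have hij' : (i:ℕ) ≤ (j:ℕ) := hij
        by_cases hj : (j:ℕ) ≤ (k:ℕ)
        · rw [if_pos hj, if_pos (hij'.trans hj)]
        · rw [if_neg hj]
          by_cases hi : (i:ℕ) ≤ (k:ℕ)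
          · rw [if_pos hi]; positivity
          · rw [if_neg hi]
      · rw [hvhat]
        by_cases hi : (i:ℕ) ≤ (k:ℕ)
        · rw [if_pos hi]; positivity
        · rw [if_neg hi]
      · rw [Finset.sum_congr rfl fun i _ => hvhat k i, sum_ite_le (k:ℕ) k.isLt]
        have : ((k:ℕ):ℝ)+1 ≠ 0 := by positivity
        field_simp
        simp
    · rintro x ⟨hxm, hx0, hx1⟩ y ⟨hym, hy0, hy1⟩ a b ha hb hab
      have happ : ∀ i, (a • x + b • y) i = a * x i + b * y i := fun _ => rfl
      refine ⟨fun i j hij => ?_, fun i => ?_, ?_⟩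
      · rw [happ, happ]
        have := hxm i j hij; have := hym i j hij
        have h1 : a * x j ≤ a * x i := by nlinarith
        have h2 : b * y j ≤ b * y i := by nlinarith
        linarith
      · rw [happ]
        exact add_nonneg (mul_nonneg ha (hx0 i)) (mul_nonneg hb (hy0 i))
      · simp only [happ, Finset.sum_add_distrib, ← Finset.mul_sum, hx1, hy1]
        linarith
  · rintro x ⟨hxm, hx0, hx1⟩
    set X := ext' x with hX
    set C : ℕ → ℝ := fun k => if k = n then ((n:ℝ)+1) * X n else ((k:ℝ)+1)*(X k - X (k+1))
      with hC
    have hC0 : ∀ k : Fin (n+1), 0 ≤ C (k:ℕ) := by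
      intro k
      simp only [hC]
      by_cases hk : (k:ℕ) = n
      · rw [if_pos hk]
        have h1 := hx0 ⟨n, n.lt_succ_self⟩
        have hXn : X n = x ⟨n, n.lt_succ_self⟩ := ext'_le x (le_refl n)
        rw [hXn]
        positivity
      · rw [if_neg hk]
        have hkn : (k:ℕ) < n := lt_of_le_of_ne (Nat.lt_succ_iff.1 k.isLt) hk
        have hm : X (k:ℕ) - X ((k:ℕ)+1) ≥ 0 := by
          have e1 : X (k:ℕ) = x ⟨(k:ℕ), Nat.lt_succ_of_le (le_of_lt hkn)⟩ :=
            ext'_le x (le_of_lt hkn)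
          have e2 : X ((k:ℕ)+1) = x ⟨(k:ℕ)+1, Nat.lt_succ_of_le hkn⟩ := ext'_le x hkn
          rw [e1, e2]
          have := hxm ⟨(k:ℕ), Nat.lt_succ_of_le (le_of_lt hkn)⟩ ⟨(k:ℕ)+1, Nat.lt_succ_of_le hkn⟩
            (by rw [Fin.le_def]; exact Nat.le_succ _)
          linarith
        positivity
    have hcsum : ∑ k : Fin (n+1), C (k:ℕ) = 1 := by
      rw [Fin.sum_univ_eq_sum_range (fun k => C k) (n+1), Finset.sum_range_succ]
      have hlast : C n = ((n:ℝ)+1) * X n := if_pos rfl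
      have hrest : ∑ k ∈ range n, C k = ∑ k ∈ range n, ((k:ℝ)+1)*(X k - X (k+1)) :=
        Finset.sum_congr rfl fun k hk => if_neg (Nat.ne_of_lt (Finset.mem_range.1 hk))
      rw [hlast, hrest, abel13 X n, sum_ext', hx1]
      ring
    have hrep : ∑ k : Fin (n+1), C (k:ℕ) • vhat k = x := by
      ext i
      rw [WithLp.ofLp_sum, Finset.sum_apply]
      have hterm : ∀ k : Fin (n+1), (C (k:ℕ) • vhat k) i =
          (fun m : ℕ => C m * (if (i:ℕ) ≤ m then ((m:ℝ)+1)⁻¹ else 0)) (k:ℕ) := by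
        intro k
        have : (C (k:ℕ) • vhat k) i = C (k:ℕ) * vhat k i := rfl
        rw [this, hvhat]
      rw [Finset.sum_congr rfl fun k _ => hterm k,
        Fin.sum_univ_eq_sum_range
          (fun m : ℕ => C m * (if (i:ℕ) ≤ m then ((m:ℝ)+1)⁻¹ else 0)) (n+1),
        Finset.sum_range_succ]
      have hin : (i:ℕ) ≤ n := Nat.lt_succ_iff.1 i.isLt
      have hlast : C n * (if (i:ℕ) ≤ n then ((n:ℝ)+1)⁻¹ else 0) = X n := by
        rw [if_pos hin]
        simp only [hC, if_pos rfl]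
        have : ((n:ℝ)+1) ≠ 0 := by positivity
        field_simp
      have hrest : ∀ m ∈ range n, C m * (if (i:ℕ) ≤ m then ((m:ℝ)+1)⁻¹ else 0) =
          (if (i:ℕ) ≤ m then X m - X (m+1) else 0) := by
        intro m hm
        simp only [hC, if_neg (Nat.ne_of_lt (Finset.mem_range.1 hm))]
        by_cases h : (i:ℕ) ≤ m
        · rw [if_pos h, if_pos h]
          have : ((m:ℝ)+1) ≠ 0 := by positivity
          field_simp
        · rw [if_neg h, if_neg h, mul_zero]
      rw [Finset.sum_congr rfl hrest, sum_ite_indicator (i:ℕ) hin, tele13 X hin, hlast]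
      have hXi : X (i:ℕ) = x i := ext'_fin x i
      rw [← hXi]
      ring
    rw [← hrep]
    exact (convex_convexHull ℝ _).sum_mem (fun k _ => hC0 k) hcsum
      (fun k _ => subset_convexHull ℝ _ ⟨k, rfl⟩)

end CellSimplexAux

open CellSimplexAux

/-- The image under `Φₙ` of (the intersection with the relative interior of
the standard simplex `Hₙ` of) the standard `n`-cell-simplex `Sₙ` is the closed positive cone
spanned by the vectors `ṽₖ = (n-k, …, n-k, -(k+1), …, -(k+1))`, `k = 0, …, n-1`. -/
theorem image_standardCellSimplex_eq_cone {n : ℕ}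
    (Hn Sn : Set (EuclideanSpace ℝ (Fin (n + 1))))
    (hHn : Hn = convexHull ℝ
      (Set.range fun i : Fin (n + 1) => EuclideanSpace.single i (1 : ℝ)))
    (vhat : Fin (n + 1) → EuclideanSpace ℝ (Fin (n + 1)))
    (hvhat : ∀ (k : Fin (n + 1)) (i : Fin (n + 1)),
      vhat k i = if (i : ℕ) ≤ (k : ℕ) then (((k : ℕ) : ℝ) + 1)⁻¹ else 0)
    (hSn : Sn = convexHull ℝ (Set.range vhat))
    (vtilde : Fin n → EuclideanSpace ℝ (Fin (n + 1)))
    (hvtilde : ∀ (k : Fin n) (i : Fin (n + 1)),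
      vtilde k i = if (i : ℕ) ≤ (k : ℕ) then (n : ℝ) - ((k : ℕ) : ℝ)
        else -(((k : ℕ) : ℝ) + 1))
    (Φ : EuclideanSpace ℝ (Fin (n + 1)) → EuclideanSpace ℝ (Fin (n + 1)))
    (hΦ : ∀ (x : EuclideanSpace ℝ (Fin (n + 1))) (i : Fin (n + 1)),
      Φ x i = Real.log (x i / (∏ j, x j) ^ (((n : ℝ) + 1)⁻¹))) :
    Φ '' (Sn ∩ intrinsicInterior ℝ Hn) =
      {y : EuclideanSpace ℝ (Fin (n + 1)) |
        ∃ a : Fin n → ℝ, (∀ k, 0 ≤ a k) ∧ y = ∑ k, a k • vtilde k} := by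
  have hHn' : Hn = convexHull ℝ (Set.range (ee n)) := hHn
  subst hSn
  ext y
  simp only [Set.mem_image, Set.mem_setOf_eq, Set.mem_inter_iff]
  constructor
  · rintro ⟨x, ⟨hxS, hxI⟩, rfl⟩
    rw [hHn'] at hxI
    obtain ⟨hpos, hsum1⟩ := intrinsic_eq.le hxI
    have hmono : ∀ i j, i ≤ j → x j ≤ x i := ((Sn_eq vhat hvhat).le hxS).1
    have hprod : 0 < ∏ j, x j := Finset.prod_pos fun j _ => hpos j
    have hGpos : 0 < (∏ j, x j) ^ (((n:ℝ)+1)⁻¹) := Real.rpow_pos_of_pos hprod _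
    have hyi : ∀ i, Φ x i = Real.log (x i) - Real.log ((∏ j, x j) ^ (((n:ℝ)+1)⁻¹)) := by
      intro i; rw [hΦ, Real.log_div (ne_of_gt (hpos i)) (ne_of_gt hGpos)]
    have hlogG : Real.log ((∏ j, x j) ^ (((n:ℝ)+1)⁻¹)) =
        (((n:ℝ)+1)⁻¹) * Real.log (∏ j, x j) := Real.log_rpow hprod _
    have hysum : ∑ i, Φ x i = 0 := by
      rw [Finset.sum_congr rfl fun i _ => hyi i, Finset.sum_sub_distrib, Finset.sum_const,
        Finset.card_univ, Fintype.card_fin, hlogG,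
        ← Real.log_prod fun j _ => ne_of_gt (hpos j)]
      have hn1 : ((n:ℝ)+1) ≠ 0 := by positivity
      rw [nsmul_eq_mul]
      push_cast
      field_simp
      simp
    refine ⟨fun k => (Φ x k.castSucc - Φ x k.succ)/((n:ℝ)+1), fun k => ?_,
      (cone_repr vtilde hvtilde (Φ x) hysum).symm⟩
    have hle : x k.succ ≤ x k.castSucc := hmono _ _
      (by rw [Fin.le_def]; simp only [Fin.coe_castSucc, Fin.val_succ]; exact Nat.le_succ _)
    have hlog : Real.log (x k.succ) ≤ Real.log (x k.castSucc) :=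
      Real.log_le_log (hpos _) hle
    show 0 ≤ (Φ x k.castSucc - Φ x k.succ)/((n:ℝ)+1)
    rw [hyi, hyi]
    have hn1 : (0:ℝ) < (n:ℝ)+1 := by positivity
    apply div_nonneg _ (le_of_lt hn1)
    linarith
  · rintro ⟨a, ha0, rfl⟩
    set y : EuclideanSpace ℝ (Fin (n+1)) := ∑ k, a k • vtilde k with hy
    have hyapp : ∀ i, y i = ∑ k, a k * vtilde k i := by
      intro i
      rw [hy, WithLp.ofLp_sum, Finset.sum_apply]
      rfl
    have hysum : ∑ i, y i = 0 := by
      rw [Finset.sum_congr rfl fun i _ => hyapp i, Finset.sum_comm]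
      apply Finset.sum_eq_zero
      intro k _
      rw [← Finset.mul_sum, Finset.sum_congr rfl fun i _ => hvtilde k i,
        sum_ite_le (k:ℕ) (Nat.lt_succ_of_lt k.isLt)]
      push_cast
      ring
    have hymono : ∀ i j : Fin (n+1), i ≤ j → y j ≤ y i := by
      intro i j hij
      rw [hyapp, hyapp]
      apply Finset.sum_le_sum
      intro k _
      apply mul_le_mul_of_nonneg_left _ (ha0 k)
      rw [hvtilde, hvtilde]
      have hij' : (i:ℕ) ≤ (j:ℕ) := hij
      have hkn : ((k:ℕ):ℝ) ≤ (n:ℝ) := by exact_mod_cast le_of_lt k.isLt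
      by_cases hj : (j:ℕ) ≤ (k:ℕ)
      · rw [if_pos hj, if_pos (hij'.trans hj)]
      · rw [if_neg hj]
        by_cases hi : (i:ℕ) ≤ (k:ℕ)
        · rw [if_pos hi]
          have : (0:ℝ) ≤ ((k:ℕ):ℝ) := Nat.cast_nonneg _
          linarith
        · rw [if_neg hi]
    set Z : ℝ := ∑ j, Real.exp (y j) with hZ
    have hZpos : 0 < Z := Finset.sum_pos (fun j _ => Real.exp_pos _)
      ⟨0, Finset.mem_univ 0⟩
    set x : EuclideanSpace ℝ (Fin (n+1)) := WithLp.toLp 2 (fun i => Real.exp (y i) / Z) with hx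
    have hxapp : ∀ i, x i = Real.exp (y i) / Z := fun _ => rfl
    have hxpos : ∀ i, 0 < x i := fun i => by rw [hxapp]; positivity
    have hxsum : ∑ i, x i = 1 := by
      rw [Finset.sum_congr rfl fun i _ => hxapp i, ← Finset.sum_div, ← hZ,
        div_self (ne_of_gt hZpos)]
    have hxI : x ∈ intrinsicInterior ℝ Hn := by
      rw [hHn']
      exact intrinsic_eq.ge ⟨hxpos, hxsum⟩
    have hxS : x ∈ convexHull ℝ (Set.range vhat) := by
      apply (Sn_eq vhat hvhat).ge
      refine ⟨fun i j hij => ?_, fun i => le_of_lt (hxpos i), hxsum⟩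
      rw [hxapp, hxapp]
      have hee : Real.exp (y j) ≤ Real.exp (y i) := Real.exp_le_exp.2 (hymono i j hij)
      gcongr
    refine ⟨x, ⟨hxS, hxI⟩, ?_⟩
    have hprod : ∏ j, x j = (Z⁻¹)^(n+1) := by
      rw [Finset.prod_congr rfl fun j _ => hxapp j, Finset.prod_div_distrib,
        ← Real.exp_sum, hysum, Real.exp_zero, Finset.prod_const, Finset.card_univ,
        Fintype.card_fin, one_div, inv_pow]
    have hGZ : ((∏ j, x j : ℝ)) ^ (((n:ℝ)+1)⁻¹) = Z⁻¹ := by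
      rw [hprod, show ((n:ℝ)+1) = ((n+1 : ℕ) : ℝ) by push_cast; ring,
        Real.pow_rpow_inv_natCast (inv_nonneg.2 hZpos.le) (Nat.succ_ne_zero n)]
    ext i
    rw [hΦ, hGZ, div_eq_mul_inv, inv_inv, hxapp,
      div_mul_cancel₀ _ (ne_of_gt hZpos), Real.log_exp]
end
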